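/- arXiv:1201.5316 — 3 statements merged into one kernel-verified Lean document; each statement's English description precedes it below -/
import Mathlib

section
/- Let n ≥ 3 and let f ∈ Lie_n[x,y] have the property that, expanded as a polynomial, f has no monomial that both starts and ends in y, so that writing f = f_x·x + f_y·y one has f_y·y = x·P·y for some polynomial P ∈ ℚ⟨x,y⟩ homogeneous of degree n−2. Then s(P) ∈ Lie_{n−1}[x,y] and f = [x, s(P)]. -/
/- Common setup: the ring ℚ⟨x,y⟩ of polynomials in two non-commuting variables,
   modelled as the monoid algebra of the free monoid on two letters
   (letter 0 ↦ x, letter 1 ↦ y). -/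

abbrev Word := FreeMonoid (Fin 2)
abbrev R2 := MonoidAlgebra ℚ Word

noncomputable section
namespace DblSh

/-- The variable x. -/
def X : R2 := MonoidAlgebra.of ℚ Word (FreeMonoid.of 0)
/-- The variable y. -/
def Y : R2 := MonoidAlgebra.of ℚ Word (FreeMonoid.of 1)
/-- The monomial associated to a word. -/
def mono (w : Word) : R2 := MonoidAlgebra.single w 1
/-- (f|w), the coefficient of the monomial w in f. -/
def coeff (f : R2) (w : Word) : ℚ := f.coeff w
/-- The pairing (f|g) = Σ_w (g|w)·(f|w), i.e. (f|·) extended linearly. -/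
def pairing (f g : R2) : ℚ := Finsupp.sum g.coeff (fun w c => c * f.coeff w)
/-- Degree of a word. -/
def wlen (w : Word) : ℕ := (FreeMonoid.toList w).length
/-- Depth of a word: the number of letters y. -/
def countY (w : Word) : ℕ := (FreeMonoid.toList w).count 1

attribute [local instance] LieRing.ofAssociativeRing

/-- Lie[x,y]: the Lie subalgebra of ℚ⟨x,y⟩ generated by x and y (the free Lie algebra). -/
def LieP : LieSubalgebra ℚ R2 := LieSubalgebra.lieSpan ℚ R2 {X, Y}
/-- f is homogeneous of degree n. -/
def IsHomog (n : ℕ) (f : R2) : Prop := ∀ w ∈ f.coeff.support, wlen w = n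
/-- f ∈ Lie_n[x,y]. -/
def InLieN (n : ℕ) (f : R2) : Prop := f ∈ LieP ∧ IsHomog n f

/-- `anti` on words: reversal. -/
def antiW (w : Word) : Word := FreeMonoid.ofList (FreeMonoid.toList w).reverse
/-- The linear operator `anti` reversing each monomial. -/
def anti (f : R2) : R2 := MonoidAlgebra.ofCoeff (Finsupp.mapDomain antiW f.coeff)
/-- f (homogeneous of degree m) is antipalindromic: f = (−1)^m · anti f. -/
def Antipal (m : ℕ) (f : R2) : Prop := f = ((-1 : ℚ))^m • anti f

/-- `push` on a word containing at least one y: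
    push(x^{a₀}y⋯y x^{a_{r-1}} y x^{a_r}) = x^{a_r} y x^{a₀} y ⋯ y x^{a_{r-1}};
    words with no y are left fixed. -/
def pushW (w : Word) : Word :=
  let l := (FreeMonoid.toList w).reverse
  let t := l.takeWhile (fun c => c = 0)
  match l.dropWhile (fun c => c = 0) with
  | [] => w
  | _ :: rest => FreeMonoid.ofList (t.reverse ++ (1 :: rest.reverse))
/-- `push` extended linearly to polynomials. -/
def pushP (f : R2) : R2 := MonoidAlgebra.ofCoeff (Finsupp.mapDomain pushW f.coeff)
/-- The list Push(w) of the r+1 iterates of push on w (r = depth of w). -/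
def PushList (w : Word) : List Word := (List.range (countY w + 1)).map (fun k => pushW^[k] w)
/-- The word y^m. -/
def yPow (m : ℕ) : Word := FreeMonoid.ofList (List.replicate m 1)
/-- f (homogeneous of degree m) is push-constant for the constant A. -/
def PushConst (m : ℕ) (f : R2) (A : ℚ) : Prop :=
  coeff f (yPow m) = 0 ∧
  ∀ w : Word, wlen w = m → w ≠ yPow m → ((PushList w).map (fun v => coeff f v)).sum = A

/-- ∂_x on a word (Leibniz expansion). -/
def dxW (w : Word) : R2 :=
  ∑ i ∈ Finset.range (wlen w),
    if (FreeMonoid.toList w).getD i 1 = 0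
    then mono (FreeMonoid.ofList ((FreeMonoid.toList w).eraseIdx i)) else 0
/-- The derivation ∂_x of ℚ⟨x,y⟩, with ∂_x(x) = 1 and ∂_x(y) = 0. -/
def dx (f : R2) : R2 := Finsupp.sum f.coeff (fun w c => c • dxW w)
/-- s(h) = Σ_{i≥0} ((−1)^i/i!)·∂_x^i(h)·y·x^i. -/
def sMap (h : R2) : R2 := ∑ᶠ i : ℕ, ((-1 : ℚ)^i / (i.factorial : ℚ)) • (dx^[i] h * Y * X ^ i)
/-- s'(h) = Σ_{i≥0} ((−1)^i/i!)·x^i·y·∂_x^i(h). -/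
def s'Map (h : R2) : R2 := ∑ᶠ i : ℕ, ((-1 : ℚ)^i / (i.factorial : ℚ)) • (X ^ i * Y * dx^[i] h)

/-- The algebra endomorphism of ℚ⟨x,y⟩ with x ↦ a, y ↦ b. -/
def subst (a b : R2) : R2 →ₐ[ℚ] R2 :=
  MonoidAlgebra.lift ℚ R2 Word (FreeMonoid.lift (fun i : Fin 2 => if i = 0 then a else b))

/-- The value on a word of the derivation of ℚ⟨x,y⟩ with x ↦ a, y ↦ b (Leibniz expansion). -/
def derW (a b : R2) (w : Word) : R2 :=
  ∑ i ∈ Finset.range (wlen w),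
    mono (FreeMonoid.ofList ((FreeMonoid.toList w).take i)) *
      (if (FreeMonoid.toList w).getD i 1 = 0 then a else b) *
      mono (FreeMonoid.ofList ((FreeMonoid.toList w).drop (i+1)))
/-- The derivation of ℚ⟨x,y⟩ with x ↦ a, y ↦ b. -/
def derP (a b : R2) (f : R2) : R2 := Finsupp.sum f.coeff (fun w c => c • derW a b w)
/-- The derivation D_{F,G} with x ↦ [x,G], y ↦ [y,F]. -/
def DFG (F G : R2) : R2 → R2 := derP (X * G - G * X) (Y * F - F * Y)

/-- The subspace of ℚ⟨x,y⟩ spanned by all commutators ab − ba. -/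
def trIdeal : Submodule ℚ R2 := Submodule.span ℚ {c : R2 | ∃ a b : R2, c = a * b - b * a}
/-- TR, the trace space. -/
abbrev TRsp := R2 ⧸ trIdeal
/-- The trace map tr : ℚ⟨x,y⟩ → TR. -/
def trQ : R2 →ₗ[ℚ] TRsp := trIdeal.mkQ

/-- Generators of krv2: the special derivations D_{F,G}, F,G ∈ Lie_n[x,y] (n ≥ 1),
    satisfying the trace condition tr(F_y·y + G_x·x) = A·tr((x+y)^n − x^n − y^n). -/
def krvGens : Set (R2 → R2) :=
  {D | ∃ n : ℕ, 1 ≤ n ∧ ∃ F G : R2, InLieN n F ∧ InLieN n G ∧ D = DFG F G ∧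
    (X * G - G * X) + (Y * F - F * Y) = 0 ∧
    ∃ Fx Fy Gx Gy : R2, F = Fx * X + Fy * Y ∧ G = Gx * X + Gy * Y ∧
      ∃ A : ℚ, trQ (Fy * Y + Gx * X) = A • trQ ((X + Y)^n - X^n - Y^n)}
/-- The Kashiwara–Vergne Lie algebra krv2, as a space of operators. -/
def krv2 : Submodule ℚ (R2 → R2) := Submodule.span ℚ krvGens

/-- The space V_kv of Theorem 1.2. -/
def Vkv : Submodule ℚ R2 :=
  Submodule.span ℚ {F : R2 | ∃ n : ℕ, 3 ≤ n ∧ InLieN n F ∧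
    ∃ Fx Fy : R2, F = Fx * X + Fy * Y ∧ Antipal (n-1) Fy ∧ ∃ A : ℚ, PushConst (n-1) (Fy - Fx) A}

/-- y_i = x^{i-1}y. -/
def yi (i : ℕ) : Word := FreeMonoid.ofList (List.replicate (i - 1) 0 ++ [1])
/-- The word y_{i₁}⋯y_{i_k} associated to a composition (i₁,…,i_k). -/
def wordOfComp (l : List ℕ) : Word := (l.map yi).prod
/-- The stuffle product of two words ending in y, encoded as compositions. -/
def st : List ℕ → List ℕ → R2
  | [], v => mono (wordOfComp v)
  | u, [] => mono (wordOfComp u)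
  | i :: u, j :: v =>
      mono (yi i) * st u (j :: v) + mono (yi j) * st (i :: u) v + mono (yi (i + j)) * st u v
termination_by u v => u.length + v.length

/-- Membership in the double shuffle Lie algebra ds. -/
def inDS (f : R2) : Prop :=
  f ∈ LieP ∧ (∀ w ∈ f.coeff.support, 3 ≤ wlen w) ∧
  ∀ u v : List ℕ, u ≠ [] → v ≠ [] → (∀ i ∈ u, 1 ≤ i) → (∀ i ∈ v, 1 ≤ i) →
    ¬((∀ i ∈ u, i = 1) ∧ (∀ i ∈ v, i = 1)) → pairing f (st u v) = 0
/-- Membership in ds_n = ds ∩ Lie_n[x,y]. -/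
def inDSn (n : ℕ) (f : R2) : Prop := inDS f ∧ IsHomog n f

/-- The derivation D_f with x ↦ 0, y ↦ [y,f]. -/
def Dlow (f : R2) : R2 → R2 := derP 0 (Y * f - f * Y)
/-- The Poisson bracket {f,g} = [f,g] + D_f(g) − D_g(f). -/
def poisson (f g : R2) : R2 := (f * g - g * f) + Dlow f g - Dlow g f

/-- The projection f ↦ f^x, where f = x·f^x + y·f^y (f without constant term). -/
def compL (f : R2) : R2 :=
  MonoidAlgebra.ofCoeff (Finsupp.comapDomain (fun w : Word => FreeMonoid.of 0 * w) f.coeff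
    (Set.injOn_of_injective (mul_right_injective (FreeMonoid.of 0))))

instance instCoeFunR2 : CoeFun R2 (fun _ => Word → ℚ) := ⟨fun f => f.coeff⟩

/-! ### Auxiliary development for stmt4 -/

open MonoidAlgebra in
theorem aux_ext {f g : R2} (h : ∀ w, f w = g w) : f = g := MonoidAlgebra.ext (Finsupp.ext h)

/-- Linear extension of a word-indexed family. -/
def lin (φ : Word → R2) : R2 →ₗ[ℚ] R2 :=
  (Finsupp.lsum ℚ fun w => LinearMap.toSpanSingleton ℚ R2 (φ w)) ∘ₗ
    (MonoidAlgebra.coeffLinearEquiv ℚ).toLinearMap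

theorem lin_apply (φ : Word → R2) (f : R2) : lin φ f = f.coeff.sum fun w c => c • φ w := by
  simp [lin, Finsupp.lsum_apply]; rfl

theorem lin_single (φ : Word → R2) (w : Word) (c : ℚ) :
    lin φ (MonoidAlgebra.single w c) = c • φ w := by
  rw [lin_apply, MonoidAlgebra.coeff_single, Finsupp.sum_single_index (by simp)]

theorem lin_mul (φ : Word → R2) (a b : R2) :
    lin φ (a * b) = a.coeff.sum fun u r => b.coeff.sum fun v s => (r * s) • φ (u * v) := by
  rw [MonoidAlgebra.mul_def, map_finsuppSum]
  exact Finsupp.sum_congr fun u _ => by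
    rw [map_finsuppSum]; exact Finsupp.sum_congr fun v _ => lin_single ..

/-- The generator letters. -/
def gen : Fin 2 → R2 := fun a => MonoidAlgebra.single (FreeMonoid.of a) 1

theorem X_eq : X = MonoidAlgebra.single (FreeMonoid.of 0) 1 := by
  simp [X, MonoidAlgebra.of_apply]
theorem Y_eq : Y = MonoidAlgebra.single (FreeMonoid.of 1) 1 := by
  simp [Y, MonoidAlgebra.of_apply]
theorem gen_zero : gen 0 = X := X_eq.symm
theorem gen_one : gen 1 = Y := Y_eq.symm

instance : DecidableEq Word := fun a b =>
  decidable_of_iff (FreeMonoid.toList a = FreeMonoid.toList b)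
    ⟨fun h => FreeMonoid.toList.injective h, fun h => by rw [h]⟩

theorem gen_mem (a : Fin 2) : gen a ∈ LieP := by
  have : a = 0 ∨ a = 1 := by omega
  rcases this with rfl | rfl
  · rw [gen_zero]; exact LieSubalgebra.subset_lieSpan (by simp)
  · rw [gen_one]; exact LieSubalgebra.subset_lieSpan (by simp)

theorem mono_mul (u v : Word) : mono u * mono v = mono (u * v) := by
  simp [mono, MonoidAlgebra.single_mul_single]

/-- The all-x word of length m. -/
def xzc (m : ℕ) : Word := FreeMonoid.ofList (List.replicate m 0)

theorem Xpow_eq (i : ℕ) : X ^ i = MonoidAlgebra.single (xzc i) 1 := by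
  induction i with
  | zero => rfl
  | succ k ih =>
    rw [pow_succ, ih, X_eq, MonoidAlgebra.single_mul_single, mul_one]
    congr 1
    show FreeMonoid.ofList (List.replicate k 0 ++ [0]) = _
    rw [← List.replicate_succ']
    rfl

/-! ### Homogeneity toolkit -/

theorem wlen_mul (u v : Word) : wlen (u * v) = wlen u + wlen v := by
  simp [wlen, FreeMonoid.toList_mul]

theorem homog_zero (m : ℕ) : IsHomog m (0 : R2) := by intro w hw; simp at hw

theorem homog_single {m : ℕ} {w : Word} (h : wlen w = m) (c : ℚ) :
    IsHomog m (MonoidAlgebra.single w c) := by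
  intro v hv
  have := Finsupp.support_single_subset hv
  simp at this; subst this; exact h

theorem homog_add {m : ℕ} {a b : R2} (ha : IsHomog m a) (hb : IsHomog m b) :
    IsHomog m (a + b) := by
  intro w hw
  rcases Finset.mem_union.mp (Finsupp.support_add hw) with h | h
  exacts [ha w h, hb w h]

theorem homog_neg {m : ℕ} {a : R2} (ha : IsHomog m a) : IsHomog m (-a) := by
  intro w hw; exact ha w (by rwa [MonoidAlgebra.coeff_neg, Finsupp.support_neg] at hw)

theorem homog_sub {m : ℕ} {a b : R2} (ha : IsHomog m a) (hb : IsHomog m b) :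
    IsHomog m (a - b) := by
  rw [sub_eq_add_neg]; exact homog_add ha (homog_neg hb)

theorem homog_smul {m : ℕ} {a : R2} (c : ℚ) (ha : IsHomog m a) : IsHomog m (c • a) := by
  intro w hw; exact ha w (Finsupp.support_smul hw)

theorem homog_mul {p q : ℕ} {a b : R2} (ha : IsHomog p a) (hb : IsHomog q b) :
    IsHomog (p + q) (a * b) := by
  intro w hw
  have := MonoidAlgebra.support_coeff_mul_subset a b hw
  rcases Finset.mem_mul.mp this with ⟨u, hu, v, hv, rfl⟩
  rw [wlen_mul, ha u hu, hb v hv]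

theorem homog_lie {p q : ℕ} {a b : R2} (ha : IsHomog p a) (hb : IsHomog q b) :
    IsHomog (p + q) ⁅a, b⁆ := by
  rw [Ring.lie_def]
  refine homog_sub (homog_mul ha hb) ?_
  have := homog_mul hb ha
  rwa [Nat.add_comm] at this

theorem homog_sum {m : ℕ} {ι : Type*} (s : Finset ι) (F : ι → R2)
    (h : ∀ i ∈ s, IsHomog m (F i)) : IsHomog m (∑ i ∈ s, F i) := by
  classical
  induction s using Finset.induction with
  | empty => simpa using homog_zero m
  | insert _ _ hx ih =>
    rw [Finset.sum_insert hx]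
    exact homog_add (h _ (Finset.mem_insert_self _ _))
      (ih fun i hi => h i (Finset.mem_insert_of_mem hi))

theorem homog_finsupp_sum {m : ℕ} {f : R2} {F : Word → ℚ → R2}
    (h : ∀ w ∈ f.coeff.support, IsHomog m (F w (f w))) : IsHomog m (f.coeff.sum F) :=
  homog_sum _ _ h

theorem homog_apply_ne {m : ℕ} {f : R2} (h : IsHomog m f) {w : Word} (hw : wlen w ≠ m) :
    f w = 0 := by
  by_contra hne
  exact hw (h w (Finsupp.mem_support_iff.mpr hne))

theorem homog_X : IsHomog 1 X := by rw [X_eq]; exact homog_single rfl 1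
theorem homog_Y : IsHomog 1 Y := by rw [Y_eq]; exact homog_single rfl 1
theorem homog_XY : IsHomog 2 ⁅X, Y⁆ := homog_lie homog_X homog_Y

/-! ### The abelianization-style homomorphism killing y -/

/-- Algebra map sending x to the polynomial X and y to 0. -/
def px : R2 →ₐ[ℚ] Polynomial ℚ :=
  MonoidAlgebra.lift ℚ (Polynomial ℚ) Word
    (FreeMonoid.lift (fun i : Fin 2 => if i = 0 then Polynomial.X else 0))

theorem px_listprod (l : List (Fin 2)) :
    ((l.map fun i : Fin 2 => if i = 0 then Polynomial.X else (0 : Polynomial ℚ)).prod) =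
      if (1 : Fin 2) ∈ l then 0 else Polynomial.X ^ l.length := by
  induction l with
  | nil => simp
  | cons a l ih =>
    have ha : a = 0 ∨ a = 1 := by omega
    rcases ha with rfl | rfl
    · simp only [List.map_cons, List.prod_cons, ih, List.mem_cons, List.length_cons]
      by_cases h : (1 : Fin 2) ∈ l
      · simp [h]
      · have : ¬((1 : Fin 2) = 0 ∨ (1 : Fin 2) ∈ l) := by simp [h]
        simp [h, this, pow_succ]; ring
    · simp
theorem px_single (w : Word) (c : ℚ) :
    px (MonoidAlgebra.single w c) =
      if (1 : Fin 2) ∈ FreeMonoid.toList w then 0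
      else c • Polynomial.X ^ (wlen w) := by
  rw [px, MonoidAlgebra.lift_single, FreeMonoid.lift_apply, px_listprod]
  split <;> simp [wlen]

theorem px_coeff (f : R2) (m : ℕ) : (px f).coeff m = f (xzc m) := by
  conv_lhs => rw [← MonoidAlgebra.sum_coeff_single f]
  rw [map_finsuppSum, Finsupp.sum, Polynomial.finset_sum_coeff]
  have hterm : ∀ w ∈ f.coeff.support,
      (px (MonoidAlgebra.single w (f w))).coeff m = if w = xzc m then f w else 0 := by
    intro w _
    rw [px_single]
    by_cases h1 : (1 : Fin 2) ∈ FreeMonoid.toList w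
    · have hne : w ≠ xzc m := by
        intro h; rw [h] at h1
        rw [xzc] at h1
        have h2 : (1 : Fin 2) ∈ List.replicate m (0 : Fin 2) := by simpa using h1
        have h3 := List.mem_replicate.mp h2
        exact absurd h3.2 (by omega)
      simp [h1, hne]
    · have hw : w = xzc (wlen w) := by
        have : FreeMonoid.toList w = List.replicate (wlen w) 0 :=
          List.eq_replicate_iff.mpr ⟨rfl, fun b hb => by
            have : b ≠ 1 := fun hb1 => h1 (hb1 ▸ hb)
            omega⟩
        apply FreeMonoid.toList.injective
        simpa [xzc] using this
      simp only [h1, if_false, Polynomial.coeff_smul, Polynomial.coeff_X_pow, smul_eq_mul]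
      have hlen : wlen (xzc m) = m := by simp [wlen, xzc]
      by_cases hm : wlen w = m
      · have hxz : w = xzc m := hm ▸ hw
        simp [hm, hxz, hlen]
      · have hne : w ≠ xzc m := by
          intro h; apply hm; rw [h]; exact hlen
        simp only [hm, hne, if_false, Polynomial.coeff_smul, smul_eq_mul]
        rw [if_neg (fun h => hm h.symm), mul_zero]
  rw [Finset.sum_congr rfl hterm, Finset.sum_ite_eq' f.coeff.support (xzc m) (fun w => f w)]
  split
  · rfl
  · next h => exact (Finsupp.notMem_support_iff.mp h).symm

theorem px_X : px X = Polynomial.X := by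
  rw [X_eq, px_single]; simp [wlen]
theorem px_Y : px Y = 0 := by
  rw [Y_eq, px_single]; simp

/-- The key consequence of `px f = c • X`. -/
theorem pxlin_coeff {f : R2} (h : ∃ c : ℚ, px f = c • Polynomial.X) :
    ∀ m : ℕ, m ≠ 1 → f (xzc m) = 0 := by
  intro m hm
  obtain ⟨c, hc⟩ := h
  rw [← px_coeff, hc, Polynomial.coeff_smul, Polynomial.coeff_X]
  simp [Ne.symm hm]

theorem xzc_zero : xzc 0 = 1 := rfl
theorem xzc_one : xzc 1 = FreeMonoid.of 0 := rfl

theorem pxlin_const {f : R2} (h : ∃ c : ℚ, px f = c • Polynomial.X) : f 1 = 0 := by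
  have := pxlin_coeff h 0 (by omega); rwa [xzc_zero] at this

/-! ### The right-strip-y operator ρ -/

/-- ρ f is defined by (ρ f)(w) = f (w·y). -/
def Rho (f : R2) : R2 :=
  MonoidAlgebra.ofCoeff (Finsupp.comapDomain (fun w : Word => w * FreeMonoid.of 1) f.coeff
    (Set.injOn_of_injective (mul_left_injective (FreeMonoid.of 1))))

theorem Rho_apply (f : R2) (w : Word) : Rho f w = f (w * FreeMonoid.of 1) := rfl

theorem Rho_zero : Rho 0 = 0 := aux_ext fun w => rfl
theorem Rho_add (a b : R2) : Rho (a + b) = Rho a + Rho b :=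
  aux_ext fun w => rfl
theorem Rho_sub (a b : R2) : Rho (a - b) = Rho a - Rho b :=
  aux_ext fun w => rfl
theorem Rho_smul (c : ℚ) (a : R2) : Rho (c • a) = c • Rho a :=
  aux_ext fun w => rfl

theorem concat_ne {l l' : List (Fin 2)} {a b : Fin 2} (h : a ≠ b) :
    l ++ [a] ≠ l' ++ [b] := by
  intro hh
  have := congrArg List.getLast? hh
  rw [List.getLast?_concat, List.getLast?_concat] at this
  exact h (by simpa using this)

theorem mul_of_ne {z z' : Word} {a b : Fin 2} (h : a ≠ b) :
    z * FreeMonoid.of a ≠ z' * FreeMonoid.of b := by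
  intro hh
  exact concat_ne h (congrArg FreeMonoid.toList hh)

theorem Rho_single_y (z : Word) (c : ℚ) :
    Rho (MonoidAlgebra.single (z * FreeMonoid.of 1) c) = MonoidAlgebra.single z c := by
  apply aux_ext; intro w
  rw [Rho_apply, MonoidAlgebra.coeff_single_apply, MonoidAlgebra.coeff_single_apply]
  exact if_congr ⟨fun h => mul_right_cancel h, fun h => by rw [h]⟩ rfl rfl

theorem Rho_single_x (z : Word) (c : ℚ) :
    Rho (MonoidAlgebra.single (z * FreeMonoid.of 0) c) = 0 := by
  apply aux_ext; intro w
  rw [Rho_apply, MonoidAlgebra.coeff_single_apply]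
  simp [mul_of_ne (show (0:Fin 2) ≠ 1 by omega)]

theorem Rho_single_one (c : ℚ) : Rho (MonoidAlgebra.single 1 c) = 0 := by
  apply aux_ext; intro w
  rw [Rho_apply, MonoidAlgebra.coeff_single_apply]
  have : (1 : Word) ≠ w * FreeMonoid.of 1 := by
    intro h
    have h2 := congrArg wlen h
    rw [wlen_mul] at h2
    simp [wlen] at h2
  simp [this]

theorem single_scal (u : Word) (r s : ℚ) :
    MonoidAlgebra.single u (r * s) = s • MonoidAlgebra.single u r := by
  rw [MonoidAlgebra.smul_single, smul_eq_mul, mul_comm]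

/-- Every word is empty or ends in a letter. -/
theorem word_concat_cases (v : Word) :
    v = 1 ∨ (∃ z : Word, v = z * FreeMonoid.of 0) ∨ (∃ z : Word, v = z * FreeMonoid.of 1) := by
  rcases List.eq_nil_or_concat (FreeMonoid.toList v) with h | ⟨l', a, h⟩
  · left; exact FreeMonoid.toList.injective h
  · have hv : v = FreeMonoid.ofList l' * FreeMonoid.of a := FreeMonoid.toList.injective
      (by simpa [FreeMonoid.toList_mul, List.concat_eq_append] using h)
    have : a = 0 ∨ a = 1 := by omega
    rcases this with rfl | rfl
    · right; left; exact ⟨_, hv⟩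
    · right; right; exact ⟨_, hv⟩

/-- The fundamental product rule for ρ. -/
theorem Rho_mul (a b : R2) : Rho (a * b) = a * Rho b + (b 1) • Rho a := by
  induction a using MonoidAlgebra.induction_linear with
  | zero => simp [Rho_zero]
  | add f g hf hg => rw [add_mul, Rho_add, hf, hg, Rho_add, add_mul, smul_add]; abel
  | single u r =>
    induction b using MonoidAlgebra.induction_linear with
    | zero => simp [Rho_zero]
    | add f g hf hg =>
      rw [mul_add, Rho_add, hf, hg, Rho_add, mul_add]
      simp only [MonoidAlgebra.coeff_add, Finsupp.add_apply, add_smul]; abel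
    | single v s =>
      rw [MonoidAlgebra.single_mul_single]
      rcases word_concat_cases v with rfl | ⟨z, rfl⟩ | ⟨z, rfl⟩
      · rw [mul_one, Rho_single_one, single_scal, Rho_smul]
        simp [MonoidAlgebra.coeff_single_apply]
      · rw [← mul_assoc, Rho_single_x, Rho_single_x, mul_zero]
        have : (MonoidAlgebra.single (z * FreeMonoid.of 0) s : R2) 1 = 0 := by
          rw [MonoidAlgebra.coeff_single_apply]
          have : z * FreeMonoid.of 0 ≠ 1 := by
            intro h; have := congrArg wlen h; rw [wlen_mul] at this; simp [wlen] at this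
          simp [this]
        simp [this]
      · rw [← mul_assoc, Rho_single_y, Rho_single_y, MonoidAlgebra.single_mul_single]
        have : (MonoidAlgebra.single (z * FreeMonoid.of 1) s : R2) 1 = 0 := by
          rw [MonoidAlgebra.coeff_single_apply]
          have : z * FreeMonoid.of 1 ≠ 1 := by
            intro h; have := congrArg wlen h; rw [wlen_mul] at this; simp [wlen] at this
          simp [this]
        simp [this]

theorem Rho_X : Rho X = 0 := by
  rw [X_eq]
  have : FreeMonoid.of (0:Fin 2) = 1 * FreeMonoid.of 0 := (one_mul _).symm
  rw [this, Rho_single_x]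

theorem Rho_Y : Rho Y = 1 := by
  rw [Y_eq]
  have : FreeMonoid.of (1:Fin 2) = 1 * FreeMonoid.of 1 := (one_mul _).symm
  rw [this, Rho_single_y]
  rfl

theorem X_apply_one : X (1 : Word) = 0 := by
  rw [X_eq, MonoidAlgebra.coeff_single_apply]
  have h0 : FreeMonoid.of (0:Fin 2) ≠ 1 := by
    intro h; have h2 := congrArg wlen h; simp [wlen] at h2
  simp [h0]
theorem Y_apply_one : Y (1 : Word) = 0 := by
  rw [Y_eq, MonoidAlgebra.coeff_single_apply]
  have h0 : FreeMonoid.of (1:Fin 2) ≠ 1 := by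
    intro h; have h2 := congrArg wlen h; simp [wlen] at h2
  simp [h0]

/-! ### Iterated adjoint operators and right-normed bracketings -/

/-- ad as a linear endomorphism. -/
def adE (a : R2) : Module.End ℚ R2 := LinearMap.mulLeft ℚ a - LinearMap.mulRight ℚ a

theorem adE_apply (a g : R2) : adE a g = ⁅a, g⁆ := by
  simp [adE, Ring.lie_def, LinearMap.sub_apply]

/-- Θ(w) = ad(a₁) ∘ ⋯ ∘ ad(a_m). -/
def ThetaE (l : List (Fin 2)) : Module.End ℚ R2 := (l.map fun a => adE (gen a)).prod

theorem ThetaE_nil (g : R2) : ThetaE [] g = g := rfl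
theorem ThetaE_cons (a : Fin 2) (l : List (Fin 2)) (g : R2) :
    ThetaE (a :: l) g = ⁅gen a, ThetaE l g⁆ := by
  rw [ThetaE, List.map_cons, List.prod_cons, Module.End.mul_apply, ← adE_apply]; rfl
theorem ThetaE_append (l l' : List (Fin 2)) (g : R2) :
    ThetaE (l ++ l') g = ThetaE l (ThetaE l' g) := by
  rw [ThetaE, List.map_append, List.prod_append, Module.End.mul_apply]; rfl

theorem ThetaE_mem {g : R2} (hg : g ∈ LieP) (l : List (Fin 2)) : ThetaE l g ∈ LieP := by
  induction l with
  | nil => exact hg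
  | cons a l ih => rw [ThetaE_cons]; exact LieP.lie_mem (gen_mem a) ih

theorem homog_gen (a : Fin 2) : IsHomog 1 (gen a) := homog_single rfl 1

theorem ThetaE_homog {m : ℕ} {g : R2} (hg : IsHomog m g) (l : List (Fin 2)) :
    IsHomog (l.length + m) (ThetaE l g) := by
  induction l with
  | nil => simpa [ThetaE_nil] using hg
  | cons a l ih =>
    rw [ThetaE_cons]
    have := homog_lie (homog_gen a) ih
    rwa [show 1 + (l.length + m) = (a :: l).length + m by simp; omega] at this

/-- Right-normed bracketing of a word. -/
def psiW : List (Fin 2) → R2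
  | [] => 0
  | [a] => gen a
  | a :: b :: l => ⁅gen a, psiW (b :: l)⁆

theorem psiW_cons {l : List (Fin 2)} (h : l ≠ []) (a : Fin 2) :
    psiW (a :: l) = ⁅gen a, psiW l⁆ := by
  match l with
  | [] => exact absurd rfl h
  | b :: l' => rfl

theorem psiW_append (l : List (Fin 2)) {l' : List (Fin 2)} (h : l' ≠ []) :
    psiW (l ++ l') = ThetaE l (psiW l') := by
  induction l with
  | nil => rw [List.nil_append, ThetaE_nil]
  | cons a l ih =>
    rw [List.cons_append, psiW_cons (by simp [h]) a, ih, ThetaE_cons]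

theorem psiW_mem (l : List (Fin 2)) : psiW l ∈ LieP := by
  match l with
  | [] => exact LieP.zero_mem
  | [a] => exact gen_mem a
  | a :: b :: l' => exact LieP.lie_mem (gen_mem a) (psiW_mem (b :: l'))

theorem psiW_homog (l : List (Fin 2)) : IsHomog l.length (psiW l) := by
  match l with
  | [] => exact homog_zero 0
  | [a] => exact homog_gen a
  | a :: b :: l' =>
    have := homog_lie (homog_gen a) (psiW_homog (b :: l'))
    rwa [show 1 + (b :: l').length = (a :: b :: l').length by simp; omega] at this

/-! ### Linear extensions -/

/-- Θ extended to polynomial first argument. -/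
def ThetaP (f g : R2) : R2 := lin (fun w => ThetaE (FreeMonoid.toList w) g) f

/-- ψ extended linearly. -/
def PsiP : R2 →ₗ[ℚ] R2 := lin (fun w => psiW (FreeMonoid.toList w))

/-- The degree-grading derivation. -/
def Dmap : R2 →ₗ[ℚ] R2 := lin (fun w => (wlen w : ℚ) • mono w)

theorem ThetaP_single (w : Word) (c : ℚ) (g : R2) :
    ThetaP (MonoidAlgebra.single w c) g = c • ThetaE (FreeMonoid.toList w) g := lin_single ..

theorem ThetaP_add_f (a b g : R2) : ThetaP (a + b) g = ThetaP a g + ThetaP b g := by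
  unfold ThetaP; rw [map_add]
theorem ThetaP_sub_f (a b g : R2) : ThetaP (a - b) g = ThetaP a g - ThetaP b g := by
  unfold ThetaP; rw [map_sub]
theorem ThetaP_smul_f (c : ℚ) (a g : R2) : ThetaP (c • a) g = c • ThetaP a g := by
  unfold ThetaP; rw [map_smul]
theorem ThetaP_zero_f (g : R2) : ThetaP 0 g = 0 := by unfold ThetaP; rw [map_zero]

theorem ThetaP_zero_g (f : R2) : ThetaP f 0 = 0 := by
  unfold ThetaP; rw [lin_apply, Finsupp.sum]
  refine Finset.sum_eq_zero fun w _ => ?_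
  rw [map_zero, smul_zero]
theorem ThetaP_neg_g (f g : R2) : ThetaP f (-g) = -ThetaP f g := by
  unfold ThetaP; rw [lin_apply, lin_apply, ← Finsupp.sum_neg]
  exact Finsupp.sum_congr fun w _ => by rw [map_neg, smul_neg]

theorem ThetaP_X (g : R2) : ThetaP X g = ⁅X, g⁆ := by
  nth_rewrite 1 [X_eq]
  rw [ThetaP_single, one_smul]
  show ThetaE [0] g = _
  rw [ThetaE_cons, ThetaE_nil, gen_zero]
theorem ThetaP_Y (g : R2) : ThetaP Y g = ⁅Y, g⁆ := by
  nth_rewrite 1 [Y_eq]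
  rw [ThetaP_single, one_smul]
  show ThetaE [1] g = _
  rw [ThetaE_cons, ThetaE_nil, gen_one]

theorem ThetaP_mem {g : R2} (hg : g ∈ LieP) (f : R2) : ThetaP f g ∈ LieP := by
  unfold ThetaP; rw [lin_apply]
  refine Submodule.sum_mem LieP.toSubmodule fun w _ => ?_
  exact Submodule.smul_mem _ _ (ThetaE_mem hg _)

theorem ThetaP_homog {p q : ℕ} {f g : R2} (hf : IsHomog p f) (hg : IsHomog q g) :
    IsHomog (p + q) (ThetaP f g) := by
  unfold ThetaP; rw [lin_apply]
  refine homog_finsupp_sum fun w hw => homog_smul _ ?_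
  have := ThetaE_homog hg (FreeMonoid.toList w)
  rwa [show (FreeMonoid.toList w).length = p from hf w hw] at this

theorem PsiP_mem (f : R2) : PsiP f ∈ LieP := by
  unfold PsiP; rw [lin_apply]
  refine Submodule.sum_mem LieP.toSubmodule fun w _ => ?_
  exact Submodule.smul_mem _ _ (psiW_mem _)

theorem PsiP_homog {m : ℕ} {f : R2} (hf : IsHomog m f) : IsHomog m (PsiP f) := by
  unfold PsiP; rw [lin_apply]
  refine homog_finsupp_sum fun w hw => homog_smul _ ?_
  have := psiW_homog (FreeMonoid.toList w)
  rwa [show (FreeMonoid.toList w).length = m from hf w hw] at this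

theorem PsiP_X : PsiP X = X := by
  rw [X_eq, show PsiP (MonoidAlgebra.single (FreeMonoid.of (0:Fin 2)) 1)
    = (1:ℚ) • psiW (FreeMonoid.toList (FreeMonoid.of (0:Fin 2))) from lin_single ..]
  show (1:ℚ) • psiW [0] = _
  rw [one_smul]; exact gen_zero
theorem PsiP_Y : PsiP Y = Y := by
  rw [Y_eq, show PsiP (MonoidAlgebra.single (FreeMonoid.of (1:Fin 2)) 1)
    = (1:ℚ) • psiW (FreeMonoid.toList (FreeMonoid.of (1:Fin 2))) from lin_single ..]
  show (1:ℚ) • psiW [1] = _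
  rw [one_smul]; exact gen_one

theorem Dmap_single (w : Word) (c : ℚ) :
    Dmap (MonoidAlgebra.single w c) = (wlen w : ℚ) • MonoidAlgebra.single w c := by
  unfold Dmap; rw [lin_single, smul_comm]
  congr 1
  rw [mono, MonoidAlgebra.smul_single, smul_eq_mul, mul_one]

theorem Dmap_X : Dmap X = X := by rw [X_eq, Dmap_single]; norm_num [wlen]
theorem Dmap_Y : Dmap Y = Y := by rw [Y_eq, Dmap_single]; norm_num [wlen]

/-- Leibniz rule for the degree derivation. -/
theorem Dmap_mul (a b : R2) : Dmap (a * b) = Dmap a * b + a * Dmap b := by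
  induction a using MonoidAlgebra.induction_linear with
  | zero => simp
  | add f g hf hg =>
    simp only [add_mul, map_add, hf, hg]; abel
  | single u r =>
    induction b using MonoidAlgebra.induction_linear with
    | zero => simp
    | add f g hf hg =>
      simp only [mul_add, map_add, hf, hg]; abel
    | single v s =>
      simp only [MonoidAlgebra.single_mul_single, Dmap_single, smul_mul_assoc, mul_smul_comm,
        wlen_mul, Nat.cast_add, add_smul]

theorem Dmap_of_homog {m : ℕ} {f : R2} (hf : IsHomog m f) : Dmap f = (m : ℚ) • f := by
  conv_lhs => rw [← MonoidAlgebra.sum_coeff_single f, map_finsuppSum]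
  rw [show (Finsupp.sum f.coeff fun a b => Dmap (MonoidAlgebra.single a b))
      = Finsupp.sum f.coeff fun a b => (m:ℚ) • MonoidAlgebra.single a b from
    Finsupp.sum_congr fun w hw => by rw [Dmap_single, hf w hw]]
  rw [← Finsupp.smul_sum, MonoidAlgebra.sum_coeff_single]

/-! ### Multiplicativity rules -/

theorem toList_one_iff {v : Word} : FreeMonoid.toList v = [] ↔ v = 1 :=
  ⟨fun h => FreeMonoid.toList.injective h, fun h => by rw [h]; rfl⟩

theorem ThetaP_add_g (f g g' : R2) : ThetaP f (g + g') = ThetaP f g + ThetaP f g' := by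
  unfold ThetaP; rw [lin_apply, lin_apply, lin_apply, ← Finsupp.sum_add]
  exact Finsupp.sum_congr fun w _ => by rw [map_add, smul_add]

theorem ThetaP_smul_g (f : R2) (c : ℚ) (g : R2) : ThetaP f (c • g) = c • ThetaP f g := by
  unfold ThetaP; rw [lin_apply, lin_apply, Finsupp.smul_sum]
  exact Finsupp.sum_congr fun w _ => by rw [map_smul, smul_comm]

theorem mul_single_expand (a : R2) (v : Word) (s : ℚ) :
    a * MonoidAlgebra.single v s = a.coeff.sum fun u r => MonoidAlgebra.single (u * v) (r * s) := by
  rw [MonoidAlgebra.mul_def]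
  exact Finsupp.sum_congr fun u _ => Finsupp.sum_single_index (by simp)

theorem single_mul_expand (z : Word) (r : ℚ) (h : R2) :
    MonoidAlgebra.single z r * h = h.coeff.sum fun w c => MonoidAlgebra.single (z * w) (r * c) := by
  rw [MonoidAlgebra.mul_def]
  rw [MonoidAlgebra.coeff_single, Finsupp.sum_single_index]
  rw [Finsupp.sum]
  refine Finset.sum_eq_zero fun w _ => by simp

/-- Θ is multiplicative in its polynomial argument. -/
theorem ThetaP_mul (a b g : R2) : ThetaP (a * b) g = ThetaP a (ThetaP b g) := by
  induction a using MonoidAlgebra.induction_linear with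
  | zero => rw [zero_mul, ThetaP_zero_f, ThetaP_zero_f]
  | add f f' hf hf' => rw [add_mul, ThetaP_add_f, hf, hf', ThetaP_add_f]
  | single u r =>
    induction b using MonoidAlgebra.induction_linear with
    | zero => simp only [mul_zero, ThetaP_zero_f, ThetaP_zero_g]
    | add f f' hf hf' => rw [mul_add, ThetaP_add_f, hf, hf', ThetaP_add_f, ThetaP_add_g]
    | single v s =>
      rw [MonoidAlgebra.single_mul_single, ThetaP_single v s g, ThetaP_single, ThetaP_single,
        map_smul, smul_smul, FreeMonoid.toList_mul, ThetaE_append]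

theorem PsiP_single (w : Word) (c : ℚ) :
    PsiP (MonoidAlgebra.single w c) = c • psiW (FreeMonoid.toList w) := lin_single ..

/-- ψ product rule. -/
theorem PsiP_mul (a b : R2) : PsiP (a * b) = ThetaP a (PsiP b) + (b 1) • PsiP a := by
  induction b using MonoidAlgebra.induction_linear with
  | zero => simp [ThetaP_zero_g]
  | add f f' hf hf' =>
    rw [mul_add, map_add, hf, hf', map_add, ThetaP_add_g]
    simp only [MonoidAlgebra.coeff_add, Finsupp.add_apply, add_smul]
    abel
  | single v s =>
    rw [mul_single_expand, map_finsuppSum]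
    rcases eq_or_ne v 1 with rfl | hv
    · have hψ0 : PsiP (MonoidAlgebra.single (1:Word) s) = 0 := by
        unfold PsiP; rw [lin_single]
        show s • psiW [] = 0
        simp [psiW]
      rw [hψ0, ThetaP_zero_g, zero_add]
      have hb1 : (MonoidAlgebra.single (1:Word) s : R2) 1 = s := by simp
      rw [hb1]
      unfold PsiP
      rw [lin_apply, Finsupp.smul_sum]
      refine Finsupp.sum_congr fun u _ => ?_
      rw [lin_single]
      show (a u * s) • psiW (FreeMonoid.toList (u * 1)) = s • (a u • psiW (FreeMonoid.toList u))
      rw [mul_one, mul_comm, mul_smul]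
    · have hb1 : (MonoidAlgebra.single v s : R2) 1 = 0 := by
        rw [MonoidAlgebra.coeff_single_apply, if_neg hv]
      rw [hb1, zero_smul, add_zero]
      rw [PsiP_single, ThetaP_smul_g]
      unfold ThetaP PsiP
      rw [lin_apply, Finsupp.smul_sum]
      refine Finsupp.sum_congr fun u _ => ?_
      rw [lin_single]
      show (a u * s) • psiW (FreeMonoid.toList (u * v))
        = s • (a u • ThetaE (FreeMonoid.toList u) (psiW (FreeMonoid.toList v)))
      rw [FreeMonoid.toList_mul, psiW_append _ (fun hc => hv (toList_one_iff.mp hc)),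
        smul_smul, mul_comm s (a u)]

/-- Dmap of a homogeneous f is n • f (stated above); ρ, ψ, Θ interact with products. -/
theorem PsiP_X_mul (u : R2) (hu : u 1 = 0) : PsiP (X * u) = ⁅X, PsiP u⁆ := by
  rw [PsiP_mul, hu, zero_smul, add_zero, ThetaP_X]

theorem PsiP_mul_X (u : R2) : PsiP (u * X) = ThetaP u X := by
  rw [PsiP_mul, X_apply_one, zero_smul, add_zero, PsiP_X]

/-! ### The derivation ∂ₓ and the section map s -/

theorem dx_eq (f : R2) : dx f = lin dxW f := by rw [dx, lin_apply]
theorem dx_zero : dx 0 = 0 := by rw [dx_eq, map_zero]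
theorem dx_add (a b : R2) : dx (a + b) = dx a + dx b := by
  rw [dx_eq, dx_eq, dx_eq, map_add]
theorem dx_smul (c : ℚ) (a : R2) : dx (c • a) = c • dx a := by
  rw [dx_eq, dx_eq, map_smul]

theorem mono_cons (a : Fin 2) (u : List (Fin 2)) :
    mono (FreeMonoid.ofList (a :: u)) = gen a * mono (FreeMonoid.ofList u) := by
  rw [gen, mono, mono, MonoidAlgebra.single_mul_single, one_mul]
  rfl

theorem dxW_len0 {w : Word} (hw : wlen w = 0) : dxW w = 0 := by
  simp only [dxW, hw, Finset.range_zero, Finset.sum_empty]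

theorem dxW_cons (a : Fin 2) (l : List (Fin 2)) :
    dxW (FreeMonoid.ofList (a :: l)) =
      (if a = 0 then mono (FreeMonoid.ofList l) else 0) + gen a * dxW (FreeMonoid.ofList l) := by
  have hw : wlen (FreeMonoid.ofList (a :: l)) = wlen (FreeMonoid.ofList l) + 1 := by
    simp [wlen]
  simp only [dxW]
  rw [hw, Finset.sum_range_succ']
  have h0 : (if (FreeMonoid.toList (FreeMonoid.ofList (a :: l))).getD 0 1 = 0
      then mono (FreeMonoid.ofList ((FreeMonoid.toList (FreeMonoid.ofList (a :: l))).eraseIdx 0))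
      else 0) = if a = 0 then mono (FreeMonoid.ofList l) else 0 := rfl
  rw [h0, add_comm]
  congr 1
  rw [Finset.mul_sum]
  simp only [FreeMonoid.toList_ofList]
  refine Finset.sum_congr rfl fun i _ => ?_
  show (if (a :: l).getD (i+1) 1 = 0 then mono (FreeMonoid.ofList ((a :: l).eraseIdx (i+1)))
    else 0) = _
  rw [List.getD_cons_succ, List.eraseIdx_cons_succ]
  split
  · exact (mono_cons a _).trans (congrArg _ (if_pos ‹_›).symm)
  · exact (mul_zero _).symm.trans (congrArg _ (if_neg ‹_›).symm)

theorem single_eq_smul_mono (w : Word) (c : ℚ) :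
    MonoidAlgebra.single w c = c • mono w := by
  rw [mono, MonoidAlgebra.smul_single, smul_eq_mul, mul_one]

theorem sum_smul_mono (h : R2) : (h.coeff.sum fun w c => c • mono w) = h := by
  conv_rhs => rw [← MonoidAlgebra.sum_coeff_single h]
  exact Finsupp.sum_congr fun w _ => (single_eq_smul_mono w (h w)).symm

theorem dx_X_mul (h : R2) : dx (X * h) = h + X * dx h := by
  rw [X_eq, single_mul_expand, dx_eq, map_finsuppSum]
  have hterm : ∀ w ∈ h.coeff.support, lin dxW (MonoidAlgebra.single (FreeMonoid.of 0 * w) (1 * h w))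
      = h w • mono w + X * (h w • dxW w) := by
    intro w _
    rw [lin_single, one_mul]
    have hr : FreeMonoid.of (0 : Fin 2) * w = FreeMonoid.ofList (0 :: FreeMonoid.toList w) := rfl
    rw [hr, dxW_cons, if_pos rfl, gen_zero, smul_add, mul_smul_comm]
    rfl
  have hs : (h.coeff.sum fun w c => lin dxW (MonoidAlgebra.single (FreeMonoid.of 0 * w) (1 * c)))
      = h.coeff.sum fun w c => c • mono w + X * (c • dxW w) := Finsupp.sum_congr hterm
  rw [hs, Finsupp.sum_add, sum_smul_mono]
  congr 1
  rw [dx_eq, lin_apply, Finsupp.mul_sum, ← X_eq]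

theorem dx_Y_mul (h : R2) : dx (Y * h) = Y * dx h := by
  rw [Y_eq, single_mul_expand, dx_eq, map_finsuppSum]
  have hterm : ∀ w ∈ h.coeff.support, lin dxW (MonoidAlgebra.single (FreeMonoid.of 1 * w) (1 * h w))
      = Y * (h w • dxW w) := by
    intro w _
    rw [lin_single, one_mul]
    have hr : FreeMonoid.of (1 : Fin 2) * w = FreeMonoid.ofList (1 :: FreeMonoid.toList w) := rfl
    rw [hr, dxW_cons, if_neg (by omega), zero_add, gen_one, mul_smul_comm]
    rfl
  have hs : (h.coeff.sum fun w c => lin dxW (MonoidAlgebra.single (FreeMonoid.of 1 * w) (1 * c)))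
      = h.coeff.sum fun w c => Y * (c • dxW w) := Finsupp.sum_congr hterm
  rw [hs, dx_eq, lin_apply, Finsupp.mul_sum, ← Y_eq]

theorem dx_iter_zero (i : ℕ) : dx^[i] (0 : R2) = 0 := Function.iterate_fixed dx_zero i
theorem dx_iter_add (i : ℕ) (a b : R2) : dx^[i] (a + b) = dx^[i] a + dx^[i] b := by
  induction i generalizing a b with
  | zero => rfl
  | succ k ih => rw [Function.iterate_succ_apply, Function.iterate_succ_apply,
      Function.iterate_succ_apply, dx_add, ih]
theorem dx_iter_smul (i : ℕ) (c : ℚ) (a : R2) : dx^[i] (c • a) = c • dx^[i] a := by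
  induction i generalizing a with
  | zero => rfl
  | succ k ih => rw [Function.iterate_succ_apply, Function.iterate_succ_apply, dx_smul, ih]
theorem dx_iter_sub (i : ℕ) (a b : R2) : dx^[i] (a - b) = dx^[i] a - dx^[i] b := by
  rw [sub_eq_add_neg, dx_iter_add, sub_eq_add_neg, show -b = (-1 : ℚ) • b by module,
    dx_iter_smul, show -dx^[i] b = (-1 : ℚ) • dx^[i] b by module]

theorem dx_iter_Y_mul (i : ℕ) (h : R2) : dx^[i] (Y * h) = Y * dx^[i] h := by
  induction i generalizing h with
  | zero => rfl
  | succ k ih => rw [Function.iterate_succ_apply, Function.iterate_succ_apply, dx_Y_mul, ih]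

theorem dx_iter_X_mul (k : ℕ) (h : R2) :
    dx^[k+1] (X * h) = X * dx^[k+1] h + ((k+1 : ℕ) : ℚ) • dx^[k] h := by
  induction k with
  | zero =>
    rw [Function.iterate_one, dx_X_mul]
    norm_num
    abel
  | succ j ih =>
    rw [Function.iterate_succ_apply' dx (j+1) (X * h), ih, dx_add, dx_X_mul, dx_smul,
      ← Function.iterate_succ_apply' dx (j+1) h, ← Function.iterate_succ_apply' dx j h]
    have hc : ((j+1+1 : ℕ) : ℚ) = ((j+1 : ℕ) : ℚ) + 1 := by push_cast; ring
    rw [hc, add_smul, one_smul]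
    abel

/-! ### Degree bounds -/

/-- All words of h have length at most N. -/
def Bnd (N : ℕ) (h : R2) : Prop := ∀ w ∈ h.coeff.support, wlen w ≤ N

theorem bnd_self (h : R2) : Bnd (h.coeff.support.sup wlen) h := fun _ hw => Finset.le_sup hw

theorem bnd_of_homog {m : ℕ} {h : R2} (hh : IsHomog m h) : Bnd m h := fun w hw =>
  le_of_eq (hh w hw)

theorem dxW_supp {w : Word} : ∀ v ∈ (dxW w).coeff.support, wlen v + 1 = wlen w := by
  intro v hv
  simp only [dxW] at hv
  classical
  rw [MonoidAlgebra.coeff_sum] at hv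
  have h1 := Finsupp.support_finset_sum hv
  rw [Finset.mem_biUnion] at h1
  obtain ⟨i, hi, hv2⟩ := h1
  rw [Finset.mem_range] at hi
  by_cases hc : (FreeMonoid.toList w).getD i 1 = 0
  · rw [if_pos hc] at hv2
    have := Finsupp.support_single_subset hv2
    rw [Finset.mem_singleton] at this
    subst this
    have hlen : ((FreeMonoid.toList w).eraseIdx i).length = (FreeMonoid.toList w).length - 1 :=
      List.length_eraseIdx_of_lt (by exact hi)
    simp only [wlen, FreeMonoid.toList_ofList]
    rw [hlen]
    have : 0 < (FreeMonoid.toList w).length := Nat.pos_of_ne_zero (by intro h0; rw [wlen] at hi; omega)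
    omega
  · rw [if_neg hc] at hv2
    simp at hv2

theorem supp_dx {g : R2} {w : Word} (hw : w ∈ (dx g).coeff.support) :
    ∃ v ∈ g.coeff.support, wlen w + 1 = wlen v := by
  classical
  rw [dx, MonoidAlgebra.coeff_finsuppSum] at hw
  have h1 := Finsupp.support_sum hw
  rw [Finset.mem_biUnion] at h1
  obtain ⟨v, hv, hw2⟩ := h1
  exact ⟨v, hv, dxW_supp w (Finsupp.support_smul hw2)⟩

theorem bnd_dx {N : ℕ} {h : R2} (hb : Bnd (N+1) h) : Bnd N (dx h) := by
  intro w hw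
  obtain ⟨v, hv, hlen⟩ := supp_dx hw
  have := hb v hv
  omega

theorem bnd_dx_zero {h : R2} (hb : Bnd 0 h) : dx h = 0 := by
  rw [dx, Finsupp.sum]
  refine Finset.sum_eq_zero fun w hw => ?_
  rw [dxW_len0 (Nat.le_zero.mp (hb w hw)), smul_zero]

theorem dx_iter_vanish {N : ℕ} {h : R2} (hb : Bnd N h) : dx^[N+1] h = 0 := by
  induction N generalizing h with
  | zero => rw [Function.iterate_one]; exact bnd_dx_zero hb
  | succ k ih => rw [Function.iterate_succ_apply]; exact ih (bnd_dx hb)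

theorem dx_iter_vanish' {N : ℕ} {h : R2} (hb : Bnd N h) {i : ℕ} (hi : N < i) : dx^[i] h = 0 := by
  obtain ⟨k, rfl⟩ := Nat.exists_eq_add_of_le (show N + 1 ≤ i from hi)
  rw [add_comm, Function.iterate_add_apply, dx_iter_vanish hb, dx_iter_zero]

theorem bnd_add {N : ℕ} {a b : R2} (ha : Bnd N a) (hb : Bnd N b) : Bnd N (a + b) := by
  intro w hw
  rcases Finset.mem_union.mp (Finsupp.support_add hw) with h | h
  exacts [ha w h, hb w h]

theorem bnd_mono {N M : ℕ} (hNM : N ≤ M) {a : R2} (ha : Bnd N a) : Bnd M a :=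
  fun w hw => le_trans (ha w hw) hNM

theorem bnd_smul {N : ℕ} {a : R2} (c : ℚ) (ha : Bnd N a) : Bnd N (c • a) :=
  fun w hw => ha w (Finsupp.support_smul hw)

theorem bnd_X_mul {N : ℕ} {h : R2} (hb : Bnd N h) : Bnd (N+1) (X * h) := by
  classical
  intro w hw
  have h1 := MonoidAlgebra.support_coeff_mul_subset X h hw
  rcases Finset.mem_mul.mp h1 with ⟨u, hu, v, hv, rfl⟩
  rw [X_eq] at hu
  have := Finsupp.support_single_subset hu
  rw [Finset.mem_singleton] at this
  subst this
  rw [wlen_mul]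
  have := hb v hv
  have h2 : wlen (FreeMonoid.of (0 : Fin 2)) = 1 := rfl
  omega

theorem bnd_Y_mul {N : ℕ} {h : R2} (hb : Bnd N h) : Bnd (N+1) (Y * h) := by
  classical
  intro w hw
  have h1 := MonoidAlgebra.support_coeff_mul_subset Y h hw
  rcases Finset.mem_mul.mp h1 with ⟨u, hu, v, hv, rfl⟩
  rw [Y_eq] at hu
  have := Finsupp.support_single_subset hu
  rw [Finset.mem_singleton] at this
  subst this
  rw [wlen_mul]
  have := hb v hv
  have h2 : wlen (FreeMonoid.of (1 : Fin 2)) = 1 := rfl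
  omega

/-! ### Finite-sum expansion of s -/

/-- Coefficient in the s-expansion. -/
def scoef (i : ℕ) : ℚ := (-1)^i / (i.factorial : ℚ)

theorem scoef_zero : scoef 0 = 1 := by simp [scoef]

theorem scoef_succ_mul (j : ℕ) : scoef (j+1) * ((j+1 : ℕ) : ℚ) = - scoef j := by
  rw [scoef, scoef, Nat.factorial_succ]
  have h2 : (j.factorial : ℚ) ≠ 0 := Nat.cast_ne_zero.mpr (Nat.factorial_ne_zero j)
  have h1 : ((j+1 : ℕ) : ℚ) ≠ 0 := by positivity
  push_cast at *
  field_simp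
  ring

theorem sMap_eq_sum {N : ℕ} {h : R2} (hb : Bnd N h) :
    sMap h = ∑ i ∈ Finset.range (N+1), scoef i • (dx^[i] h * Y * X ^ i) := by
  rw [sMap]
  refine finsum_eq_sum_of_support_subset _ ?_
  intro i hi
  simp only [Function.mem_support] at hi
  simp only [Finset.coe_range, Set.mem_Iio]
  by_contra hmem
  push_neg at hmem
  rw [dx_iter_vanish' hb (by omega), zero_mul, zero_mul, smul_zero] at hi
  exact hi rfl

theorem sMap_zero : sMap 0 = 0 := by
  have hb : Bnd 0 (0 : R2) := fun w hw => by simp at hw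
  rw [sMap_eq_sum hb]
  simp [dx_iter_zero]

theorem sMap_add (a b : R2) : sMap (a + b) = sMap a + sMap b := by
  set N := max (a.coeff.support.sup wlen) (b.coeff.support.sup wlen) with hN
  have hba : Bnd N a := bnd_mono (le_max_left _ _) (bnd_self a)
  have hbb : Bnd N b := bnd_mono (le_max_right _ _) (bnd_self b)
  rw [sMap_eq_sum (bnd_add hba hbb), sMap_eq_sum hba, sMap_eq_sum hbb,
    ← Finset.sum_add_distrib]
  refine Finset.sum_congr rfl fun i _ => ?_
  rw [dx_iter_add, add_mul, add_mul, smul_add]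

theorem sMap_smul (c : ℚ) (a : R2) : sMap (c • a) = c • sMap a := by
  have hba : Bnd (a.coeff.support.sup wlen) a := bnd_self a
  rw [sMap_eq_sum (bnd_smul c hba), sMap_eq_sum hba, Finset.smul_sum]
  refine Finset.sum_congr rfl fun i _ => ?_
  rw [dx_iter_smul, smul_mul_assoc, smul_mul_assoc, smul_comm]

theorem sMap_sub (a b : R2) : sMap (a - b) = sMap a - sMap b := by
  rw [sub_eq_add_neg, sMap_add, show -b = (-1 : ℚ) • b by module, sMap_smul]
  module

theorem sMap_one : sMap 1 = Y := by
  have hb : Bnd 0 (1 : R2) := by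
    intro w hw
    have := Finsupp.support_single_subset (by exact hw)
    rw [Finset.mem_singleton] at this
    subst this
    simp [wlen]
  rw [sMap_eq_sum hb]
  simp [scoef_zero]

theorem sMap_Y_mul (h : R2) : sMap (Y * h) = Y * sMap h := by
  have hb : Bnd (h.coeff.support.sup wlen) h := bnd_self h
  rw [sMap_eq_sum (bnd_Y_mul hb), Finset.sum_range_succ, dx_iter_Y_mul,
    dx_iter_vanish hb, mul_zero, zero_mul, zero_mul, smul_zero, add_zero,
    sMap_eq_sum hb, Finset.mul_sum]
  refine Finset.sum_congr rfl fun i _ => ?_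
  rw [dx_iter_Y_mul]
  simp only [mul_smul_comm, mul_assoc]

theorem sMap_X_mul (h : R2) : sMap (X * h) = X * sMap h - sMap h * X := by
  have hb : Bnd (h.coeff.support.sup wlen) h := bnd_self h
  set N := h.coeff.support.sup wlen with hN
  have hsplit : ∀ i ∈ Finset.range (N+2), scoef i • (dx^[i] (X * h) * Y * X ^ i)
      = scoef i • (X * dx^[i] h * Y * X ^ i)
        + (scoef i * ((i : ℕ) : ℚ)) • (dx^[i.pred] h * Y * X ^ i) := by
    intro i _
    cases i with
    | zero => simp
    | succ k =>
      rw [dx_iter_X_mul k h, add_mul, add_mul, smul_add, smul_mul_assoc, smul_mul_assoc,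
        smul_smul]
      rfl
  rw [sMap_eq_sum (bnd_X_mul hb), Finset.sum_congr rfl hsplit, Finset.sum_add_distrib]
  have hA : (∑ i ∈ Finset.range (N+2), scoef i • (X * dx^[i] h * Y * X ^ i)) = X * sMap h := by
    rw [Finset.sum_range_succ, dx_iter_vanish hb, mul_zero, zero_mul, zero_mul, smul_zero,
      add_zero, sMap_eq_sum hb, Finset.mul_sum]
    refine Finset.sum_congr rfl fun i _ => ?_
    simp only [mul_smul_comm, mul_assoc]
  have hB : (∑ i ∈ Finset.range (N+2), (scoef i * ((i : ℕ) : ℚ)) • (dx^[i.pred] h * Y * X ^ i))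
      = -(sMap h * X) := by
    rw [Finset.sum_range_succ']
    simp only [Nat.cast_zero, mul_zero, zero_smul, add_zero, Nat.pred_succ]
    rw [sMap_eq_sum hb, Finset.sum_mul, ← Finset.sum_neg_distrib]
    refine Finset.sum_congr rfl fun j _ => ?_
    rw [scoef_succ_mul, pow_succ, ← mul_assoc, smul_mul_assoc, neg_smul]
  rw [hA, hB, sub_eq_add_neg]

/-! ### Homogeneity and support of s -/

theorem dx_iter_homog {m : ℕ} {h : R2} (hh : IsHomog m h) (i : ℕ) :
    ∀ w ∈ (dx^[i] h).coeff.support, wlen w + i = m := by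
  induction i with
  | zero => intro w hw; rw [Nat.add_zero]; exact hh w hw
  | succ k ih =>
    intro w hw
    rw [Function.iterate_succ_apply'] at hw
    obtain ⟨v, hv, hlen⟩ := supp_dx hw
    have := ih v hv
    omega

theorem homog_Xpow (i : ℕ) : IsHomog i (X ^ i) := by
  rw [Xpow_eq]
  exact homog_single (by simp [wlen, xzc]) 1

theorem sMap_homog {m : ℕ} {h : R2} (hh : IsHomog m h) : IsHomog (m + 1) (sMap h) := by
  rw [sMap_eq_sum (bnd_of_homog hh)]
  refine homog_sum _ _ fun i _ => homog_smul _ ?_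
  rcases le_or_gt i m with him | him
  · have h1 : IsHomog (m - i) (dx^[i] h) := fun w hw => by
      have := dx_iter_homog hh i w hw; omega
    have h2 := homog_mul (homog_mul h1 homog_Y) (homog_Xpow i)
    rwa [show m - i + 1 + i = m + 1 by omega] at h2
  · rw [dx_iter_vanish' (bnd_of_homog hh) him, zero_mul, zero_mul]
    exact homog_zero _

theorem sMap_contains1 (h : R2) : ∀ w ∈ (sMap h).coeff.support, (1 : Fin 2) ∈ FreeMonoid.toList w := by
  classical
  intro w hw
  rw [sMap_eq_sum (bnd_self h), MonoidAlgebra.coeff_sum] at hw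
  have h1 := Finsupp.support_finset_sum hw
  rw [Finset.mem_biUnion] at h1
  obtain ⟨i, _, hw2⟩ := h1
  have hw3 := Finsupp.support_smul hw2
  have h4 := MonoidAlgebra.support_coeff_mul_subset _ _ hw3
  rcases Finset.mem_mul.mp h4 with ⟨z, hz, v, _, rfl⟩
  have h5 := MonoidAlgebra.support_coeff_mul_subset _ _ hz
  rcases Finset.mem_mul.mp h5 with ⟨u, _, y, hy, rfl⟩
  rw [Y_eq] at hy
  have := Finsupp.support_single_subset hy
  rw [Finset.mem_singleton] at this
  subst this
  simp [FreeMonoid.toList_mul]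

theorem sMap_apply_allx (h : R2) (k : ℕ) : sMap h (xzc k) = 0 := by
  by_contra hne
  have hmem : xzc k ∈ (sMap h).coeff.support := Finsupp.mem_support_iff.mpr hne
  have h1 := sMap_contains1 h _ hmem
  rw [xzc] at h1
  have h2 : (1 : Fin 2) ∈ List.replicate k (0 : Fin 2) := by simpa using h1
  have h3 := List.mem_replicate.mp h2
  exact absurd h3.2 (by omega)

theorem sMap_apply_one (h : R2) : sMap h (1 : Word) = 0 := sMap_apply_allx h 0

/-! ### Θ applied to s -/

theorem ThetaE_zero_g (l : List (Fin 2)) : ThetaE l 0 = 0 := map_zero _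

theorem ThetaE_replicate_X {i : ℕ} (hi : 1 ≤ i) : ThetaE (List.replicate i 0) X = 0 := by
  induction i with
  | zero => omega
  | succ k ih =>
    rw [List.replicate_succ, ThetaE_cons, gen_zero]
    rcases Nat.eq_zero_or_pos k with rfl | hk
    · show ⁅X, ThetaE [] X⁆ = 0
      rw [ThetaE_nil, lie_self]
    · rw [ih hk, lie_zero]

theorem ThetaP_Xpow_X {i : ℕ} (hi : 1 ≤ i) : ThetaP (X ^ i) X = 0 := by
  rw [Xpow_eq, ThetaP_single,
    show FreeMonoid.toList (xzc i) = List.replicate i 0 from rfl,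
    ThetaE_replicate_X hi, smul_zero]

theorem ThetaP_sum_f {ι : Type*} (s : Finset ι) (F : ι → R2) (g : R2) :
    ThetaP (∑ i ∈ s, F i) g = ∑ i ∈ s, ThetaP (F i) g := map_sum (lin _) F s

theorem ThetaP_sMap_X (h : R2) : ThetaP (sMap h) X = - ThetaP h ⁅X, Y⁆ := by
  rw [sMap_eq_sum (bnd_self h), ThetaP_sum_f]
  rw [Finset.sum_eq_single_of_mem 0 (Finset.mem_range.mpr (by omega))]
  · rw [ThetaP_smul_f, scoef_zero, one_smul, pow_zero, mul_one]
    show ThetaP (h * Y) X = _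
    rw [ThetaP_mul, ThetaP_Y, ← lie_skew, ThetaP_neg_g]
  · intro i _ hi
    rw [ThetaP_smul_f, ThetaP_mul, ThetaP_Xpow_X (by omega), ThetaP_zero_g, smul_zero]

/-! ### The centralizer of x -/

theorem Xmul_apply (v : R2) (w : Word) : (X * v) (FreeMonoid.of 0 * w) = v w := by
  rw [X_eq]
  rw [MonoidAlgebra.coeff_single_mul_eq_mul_coeff (x := v) w (fun a _ => by
    constructor
    · exact fun h => mul_left_cancel h
    · exact fun h => by rw [h])]
  rw [one_mul]

theorem mulX_apply (v : R2) (u : Word) : (v * X) (u * FreeMonoid.of 0) = v u := by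
  rw [X_eq]
  rw [MonoidAlgebra.coeff_mul_single_eq_coeff_mul (x := v) u (fun a _ => by
    constructor
    · exact fun h => mul_right_cancel h
    · exact fun h => by rw [h])]
  rw [mul_one]

theorem mulX_apply_ne (v : R2) {z : Word} (hz : ∀ u : Word, z ≠ u * FreeMonoid.of 0) :
    (v * X) z = 0 := by
  classical
  by_contra hne
  have hmem := MonoidAlgebra.support_coeff_mul_subset v X (Finsupp.mem_support_iff.mpr hne)
  rcases Finset.mem_mul.mp hmem with ⟨u, _, y, hy, huy⟩
  rw [X_eq] at hy
  have := Finsupp.support_single_subset hy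
  rw [Finset.mem_singleton] at this
  subst this
  exact hz u huy.symm

/-- A homogeneous element commuting with X and with vanishing xⁿ-coefficient is zero. -/
theorem central_lemma {m : ℕ} {v : R2} (hc : X * v = v * X) (hh : IsHomog m v)
    (h0 : v (xzc m) = 0) : v = 0 := by
  have key : ∀ (k : ℕ) (u : List (Fin 2)),
      v (FreeMonoid.ofList (u ++ 1 :: List.replicate k 0)) = 0 := by
    intro k
    induction k with
    | zero =>
      intro u
      set w : Word := FreeMonoid.ofList (u ++ [1]) with hwdef
      show v w = 0
      have h1 : v w = (X * v) (FreeMonoid.of 0 * w) := (Xmul_apply v w).symm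
      rw [hc] at h1
      rw [h1]
      refine mulX_apply_ne v fun u' hu' => ?_
      have h2 : (FreeMonoid.toList (FreeMonoid.of (0:Fin 2) * w)).getLast?
          = (FreeMonoid.toList (u' * FreeMonoid.of (0:Fin 2))).getLast? := by rw [hu']
      have h3 : (FreeMonoid.toList (FreeMonoid.of (0:Fin 2) * w)).getLast? = some 1 := by
        rw [FreeMonoid.toList_mul, FreeMonoid.toList_of, hwdef, FreeMonoid.toList_ofList,
          show ([(0:Fin 2)] ++ (u ++ [1])) = ((0 :: u) ++ [1] : List (Fin 2)) by simp,
          List.getLast?_concat]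
      have h4 : (FreeMonoid.toList (u' * FreeMonoid.of (0:Fin 2))).getLast? = some 0 := by
        rw [FreeMonoid.toList_mul, FreeMonoid.toList_of, List.getLast?_concat]
      rw [h3, h4] at h2
      injection h2 with h5
      exact absurd h5 (by omega)
    | succ k ih =>
      intro u
      have hw : FreeMonoid.ofList (u ++ 1 :: List.replicate (k+1) 0)
          = FreeMonoid.ofList ((u ++ 1 :: List.replicate k 0)) * FreeMonoid.of 0 := by
        apply FreeMonoid.toList.injective
        show u ++ 1 :: List.replicate (k+1) 0 = (u ++ 1 :: List.replicate k 0) ++ [0]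
        rw [List.replicate_succ']
        simp
      rw [hw]
      have h1 : v _ = (X * v) (FreeMonoid.of 0 *
          (FreeMonoid.ofList (u ++ 1 :: List.replicate k 0) * FreeMonoid.of 0)) :=
        (Xmul_apply v _).symm
      rw [hc] at h1
      rw [h1, ← mul_assoc, mulX_apply]
      have : FreeMonoid.of (0:Fin 2) * FreeMonoid.ofList (u ++ 1 :: List.replicate k 0)
          = FreeMonoid.ofList ((0 :: u) ++ 1 :: List.replicate k 0) := rfl
      rw [this]
      exact ih (0 :: u)
  have split1 : ∀ l : List (Fin 2), (1 : Fin 2) ∈ l →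
      ∃ u k, l = u ++ 1 :: List.replicate k 0 := by
    intro l
    induction l using List.reverseRecOn with
    | nil => intro h; simp at h
    | append_singleton l' a ih =>
      intro hmem
      have ha : a = 0 ∨ a = 1 := by omega
      rcases ha with rfl | rfl
      · have h1 : (1 : Fin 2) ∈ l' := by
          rcases List.mem_append.mp hmem with h | h
          · exact h
          · simp at h
        obtain ⟨u, k, hk⟩ := ih h1
        exact ⟨u, k+1, by rw [hk, List.replicate_succ']; simp⟩
      · exact ⟨l', 0, by simp⟩
  apply aux_ext
  intro w
  by_cases hmem : w ∈ v.coeff.support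
  · by_cases h1 : (1 : Fin 2) ∈ FreeMonoid.toList w
    · obtain ⟨u, k, hk⟩ := split1 _ h1
      have hww : w = FreeMonoid.ofList (u ++ 1 :: List.replicate k 0) :=
        FreeMonoid.toList.injective hk
      rw [hww, key k u]
      rfl
    · have hlen := hh w hmem
      have hrep : w = xzc m := by
        apply FreeMonoid.toList.injective
        show FreeMonoid.toList w = List.replicate m 0
        rw [← hlen]
        exact List.eq_replicate_iff.mpr ⟨rfl, fun b hb => by
          have : b ≠ 1 := fun hb1 => h1 (hb1 ▸ hb)
          omega⟩
      rw [hrep, h0]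
      rfl
  · rw [Finsupp.notMem_support_iff.mp hmem]; rfl

/-! ### The master inductive predicate on Lie elements -/

theorem X_apply_of0 : X (FreeMonoid.of (0:Fin 2)) = 1 := by
  rw [X_eq]; simp
theorem Y_apply_of0 : Y (FreeMonoid.of (0:Fin 2)) = 0 := by
  rw [Y_eq, MonoidAlgebra.coeff_single_apply, if_neg]
  intro h
  have h2 := congrArg FreeMonoid.toList h
  simp [FreeMonoid.toList_of] at h2

theorem ThetaP_one (g : R2) : ThetaP (1 : R2) g = g := by
  show ThetaP (MonoidAlgebra.single 1 1) g = g
  rw [ThetaP_single, one_smul]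
  rfl

structure GoodP (f : R2) : Prop where
  mem : f ∈ LieP
  hpx : ∃ c : ℚ, px f = c • Polynomial.X
  hTh : ∀ g : R2, ThetaP f g = ⁅f, g⁆
  hPsi : PsiP f = Dmap f
  hJ : ThetaP (Rho f) ⁅X, Y⁆ = ⁅X, f⁆
  hs : ∀ h : R2, sMap (f * h) = f * sMap h - f (FreeMonoid.of 0) • (sMap h * X)
  hrec : sMap (Rho f) + f (FreeMonoid.of 0) • X = f

theorem GoodP.const0 {f : R2} (h : GoodP f) : f 1 = 0 := pxlin_const h.hpx
theorem GoodP.xcoeff {f : R2} (h : GoodP f) {m : ℕ} (hm : m ≠ 1) : f (xzc m) = 0 :=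
  pxlin_coeff h.hpx m hm

theorem X_mem : X ∈ LieP := by rw [← gen_zero]; exact gen_mem 0
theorem Y_mem : Y ∈ LieP := by rw [← gen_one]; exact gen_mem 1

theorem goodX : GoodP X where
  mem := X_mem
  hpx := ⟨1, by rw [px_X, one_smul]⟩
  hTh := ThetaP_X
  hPsi := by rw [PsiP_X, Dmap_X]
  hJ := by rw [Rho_X, ThetaP_zero_f, lie_self]
  hs := fun h => by rw [sMap_X_mul, X_apply_of0, one_smul]
  hrec := by rw [Rho_X, sMap_zero, X_apply_of0, one_smul, zero_add]

theorem goodY : GoodP Y where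
  mem := Y_mem
  hpx := ⟨0, by rw [px_Y, zero_smul]⟩
  hTh := ThetaP_Y
  hPsi := by rw [PsiP_Y, Dmap_Y]
  hJ := by rw [Rho_Y, ThetaP_one]
  hs := fun h => by rw [sMap_Y_mul, Y_apply_of0, zero_smul, sub_zero]
  hrec := by rw [Rho_Y, sMap_one, Y_apply_of0, zero_smul, add_zero]

theorem goodZero : GoodP 0 where
  mem := LieP.zero_mem
  hpx := ⟨0, by rw [map_zero, zero_smul]⟩
  hTh := fun g => by rw [ThetaP_zero_f, zero_lie]
  hPsi := by rw [map_zero, map_zero]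
  hJ := by rw [Rho_zero, ThetaP_zero_f, lie_zero]
  hs := fun h => by
    rw [zero_mul, sMap_zero, zero_mul, MonoidAlgebra.coeff_zero, Finsupp.zero_apply, zero_smul, sub_zero]
  hrec := by rw [Rho_zero, sMap_zero, MonoidAlgebra.coeff_zero, Finsupp.zero_apply, zero_smul, add_zero]

theorem goodSmul (r : ℚ) {f : R2} (h : GoodP f) : GoodP (r • f) where
  mem := LieP.smul_mem r h.mem
  hpx := by
    obtain ⟨c, hc⟩ := h.hpx
    exact ⟨r * c, by rw [map_smul, hc, smul_smul]⟩
  hTh := fun g => by rw [ThetaP_smul_f, h.hTh, smul_lie]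
  hPsi := by rw [map_smul, map_smul, h.hPsi]
  hJ := by rw [Rho_smul, ThetaP_smul_f, h.hJ, lie_smul]
  hs := fun h2 => by
    have happ : (r • f) (FreeMonoid.of 0) = r * f (FreeMonoid.of 0) := rfl
    rw [smul_mul_assoc, sMap_smul, h.hs h2, smul_sub, smul_smul, smul_mul_assoc, happ]
  hrec := by
    have happ : (r • f) (FreeMonoid.of 0) = r * f (FreeMonoid.of 0) := rfl
    rw [Rho_smul, sMap_smul, happ, eq_sub_of_add_eq h.hrec, smul_sub, smul_smul]
    abel

theorem goodAdd {a b : R2} (ha : GoodP a) (hb : GoodP b) : GoodP (a + b) where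
  mem := LieP.add_mem ha.mem hb.mem
  hpx := by
    obtain ⟨c, hc⟩ := ha.hpx
    obtain ⟨d, hd⟩ := hb.hpx
    exact ⟨c + d, by rw [map_add, hc, hd, add_smul]⟩
  hTh := fun g => by rw [ThetaP_add_f, ha.hTh, hb.hTh, add_lie]
  hPsi := by rw [map_add, map_add, ha.hPsi, hb.hPsi]
  hJ := by rw [Rho_add, ThetaP_add_f, ha.hJ, hb.hJ, lie_add]
  hs := fun h2 => by
    have happ : (a + b) (FreeMonoid.of 0) = a (FreeMonoid.of 0) + b (FreeMonoid.of 0) := rfl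
    rw [add_mul, sMap_add, ha.hs h2, hb.hs h2, happ, add_mul, add_smul]
    abel
  hrec := by
    have happ : (a + b) (FreeMonoid.of 0) = a (FreeMonoid.of 0) + b (FreeMonoid.of 0) := rfl
    rw [Rho_add, sMap_add, happ, eq_sub_of_add_eq ha.hrec, eq_sub_of_add_eq hb.hrec, add_smul]
    abel

theorem goodLie {a b : R2} (ha : GoodP a) (hb : GoodP b) : GoodP ⁅a, b⁆ := by
  have hpxl : px ⁅a, b⁆ = (0:ℚ) • Polynomial.X := by
    rw [Ring.lie_def, map_sub, map_mul, map_mul, mul_comm, sub_self, zero_smul]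
  have hof : (⁅a, b⁆ : R2) (FreeMonoid.of 0) = 0 := by
    rw [← xzc_one, ← px_coeff, hpxl]
    simp
  have hrho : Rho ⁅a, b⁆ = a * Rho b - b * Rho a := by
    rw [Ring.lie_def, Rho_sub, Rho_mul, Rho_mul, ha.const0, hb.const0, zero_smul, zero_smul,
      add_zero, add_zero]
  refine ⟨LieP.lie_mem ha.mem hb.mem, ⟨0, hpxl⟩, ?_, ?_, ?_, ?_, ?_⟩
  · -- hTh
    intro g
    have h1 : ThetaP ⁅a, b⁆ g = ⁅a, ⁅b, g⁆⁆ - ⁅b, ⁅a, g⁆⁆ := by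
      rw [Ring.lie_def, ThetaP_sub_f, ThetaP_mul, ThetaP_mul]
      simp only [ha.hTh, hb.hTh]
    rw [h1, lie_lie]
  · -- hPsi
    have h1 : PsiP ⁅a, b⁆ = ⁅a, Dmap b⁆ - ⁅b, Dmap a⁆ := by
      rw [Ring.lie_def, map_sub, PsiP_mul, PsiP_mul, ha.const0, hb.const0, zero_smul,
        zero_smul, add_zero, add_zero, ha.hPsi, hb.hPsi, ha.hTh, hb.hTh]
    have h2 : Dmap ⁅a, b⁆ = Dmap a * b + a * Dmap b - (Dmap b * a + b * Dmap a) := by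
      rw [Ring.lie_def, map_sub, Dmap_mul, Dmap_mul]
    rw [h1, h2, Ring.lie_def, Ring.lie_def]
    abel
  · -- hJ
    rw [hrho, ThetaP_sub_f, ThetaP_mul, ThetaP_mul, hb.hJ, ha.hJ, ha.hTh, hb.hTh,
      leibniz_lie X a b, ← lie_skew ⁅X, a⁆ b]
    abel
  · -- hs
    intro h2
    have hab : (⁅a, b⁆ : R2) * h2 = a * (b * h2) - b * (a * h2) := by
      rw [Ring.lie_def, sub_mul, mul_assoc, mul_assoc]
    rw [hab, sMap_sub, ha.hs (b * h2), hb.hs (a * h2), hb.hs h2, ha.hs h2, hof, zero_smul,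
      sub_zero, Ring.lie_def]
    simp only [mul_sub, sub_mul, smul_mul_assoc, mul_smul_comm, smul_sub, smul_smul, mul_assoc]
    module
  · -- hrec
    have hra : sMap (Rho a) = a - a (FreeMonoid.of 0) • X := eq_sub_of_add_eq ha.hrec
    have hrb : sMap (Rho b) = b - b (FreeMonoid.of 0) • X := eq_sub_of_add_eq hb.hrec
    rw [hrho, sMap_sub, ha.hs (Rho b), hb.hs (Rho a), hof, zero_smul, add_zero, hra, hrb,
      Ring.lie_def]
    simp only [mul_sub, sub_mul, smul_mul_assoc, mul_smul_comm, smul_sub, smul_smul, mul_assoc]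
    module

theorem good_lieP {f : R2} (hf : f ∈ LieP) : GoodP f := by
  have hmem : ∀ x ∈ ({X, Y} : Set R2), GoodP x := by
    intro x hx
    rcases Set.mem_insert_iff.mp hx with rfl | hx
    · exact goodX
    · rw [Set.mem_singleton_iff.mp hx]; exact goodY
  exact LieSubalgebra.lieSpan_induction ℚ (p := fun x _ => GoodP x) hmem goodZero
    (fun x y _ _ hx hy => goodAdd hx hy) (fun r _ _ hx => goodSmul r hx)
    (fun x y _ _ hx hy => goodLie hx hy) hf

/-- if f ∈ Lie_n[x,y] (n ≥ 3) has no monomial starting and ending in y,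
    so that f = f_x·x + f_y·y with f_y·y = x·P·y for P homogeneous of degree n−2, then
    s(P) ∈ Lie_{n−1}[x,y] and f = [x, s(P)]. -/
theorem stmt4 (n : ℕ) (hn : 3 ≤ n) (f : R2) (hf : InLieN n f)
    (hnoyy : ∀ w ∈ f.coeff.support,
      ¬((FreeMonoid.toList w).head? = some 1 ∧ (FreeMonoid.toList w).getLast? = some 1))
    (fx fy P : R2)
    (hdec : f = fx * X + fy * Y)
    (hP : fy * Y = X * P * Y)
    (hPhom : IsHomog (n - 2) P) :
    InLieN (n - 1) (sMap P) ∧ f = X * sMap P - sMap P * X := by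
  obtain ⟨hfL, hfh⟩ := hf
  have G := good_lieP hfL
  -- ρ f = X * P
  have h1 : Rho (fy * Y) = fy := by
    rw [Rho_mul, Rho_Y, mul_one, Y_apply_one, zero_smul, add_zero]
  have h2Y : Rho (X * P * Y) = X * P := by
    rw [Rho_mul, Rho_Y, mul_one, Y_apply_one, zero_smul, add_zero]
  have hfy : fy = X * P := by rw [← h1, hP, h2Y]
  have hrhof : Rho f = X * P := by
    rw [hdec, Rho_add, Rho_mul fx X, Rho_X, mul_zero, X_apply_one, zero_smul, add_zero,
      zero_add, h1, hfy]
  -- the coefficient of the single-letter word x vanishes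
  have hpi : f (FreeMonoid.of 0) = 0 := by
    by_contra hne
    have := hfh _ (Finsupp.mem_support_iff.mpr hne)
    rw [show wlen (FreeMonoid.of (0:Fin 2)) = 1 from rfl] at this
    omega
  -- conclusion 2 : f = [x, s(P)]
  have hrec := G.hrec
  rw [hrhof, hpi, zero_smul, add_zero] at hrec
  have h2 : f = X * sMap P - sMap P * X := by rw [← hrec, sMap_X_mul]
  refine ⟨⟨?_, ?_⟩, h2⟩
  swap
  · -- homogeneity of s(P)
    have := sMap_homog hPhom
    rwa [show n - 2 + 1 = n - 1 by omega] at this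
  -- Lie membership of u := sMap P
  have huhom : IsHomog (n-1) (sMap P) := by
    have := sMap_homog hPhom
    rwa [show n - 2 + 1 = n - 1 by omega] at this
  have hu1 : (sMap P) 1 = 0 := sMap_apply_one P
  -- Θ_P([x,y]) = f
  have hJ := G.hJ
  rw [hrhof, ThetaP_mul, ThetaP_X] at hJ
  have hXY_mem : (⁅X, Y⁆ : R2) ∈ LieP := LieP.lie_mem X_mem Y_mem
  have hd : ThetaP P ⁅X,Y⁆ - f = 0 := by
    refine central_lemma (m := n) ?_ ?_ ?_
    · have hz : ⁅X, ThetaP P ⁅X,Y⁆ - f⁆ = 0 := by rw [lie_sub, hJ, sub_self]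
      rw [Ring.lie_def, sub_eq_zero] at hz
      exact hz
    · have hth : IsHomog (n - 2 + 2) (ThetaP P ⁅X,Y⁆) := ThetaP_homog hPhom homog_XY
      rw [show n - 2 + 2 = n by omega] at hth
      exact homog_sub hth hfh
    · have c1 := (good_lieP (ThetaP_mem hXY_mem P)).xcoeff (show n ≠ 1 by omega)
      have c2 := G.xcoeff (show n ≠ 1 by omega)
      show (ThetaP P ⁅X,Y⁆ - f) (xzc n) = 0
      rw [MonoidAlgebra.coeff_sub, Finsupp.sub_apply, c1, c2, sub_zero]
  have hG : ThetaP P ⁅X,Y⁆ = f := sub_eq_zero.mp hd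
  -- Θ_{s(P)}(x) = −f
  have hTuX : ThetaP (sMap P) X = -f := by rw [ThetaP_sMap_X, hG]
  -- DSW for f
  have hPsif : PsiP f = (n:ℚ) • f := by rw [G.hPsi, Dmap_of_homog hfh]
  have hPsif2 : PsiP f = ⁅X, PsiP (sMap P)⁆ + f := by
    conv_lhs => rw [h2]
    rw [map_sub, PsiP_X_mul (sMap P) hu1, PsiP_mul_X, hTuX, sub_neg_eq_add]
  have hc : ((n-1 : ℕ):ℚ) = (n:ℚ) - 1 := by
    rw [Nat.cast_sub (by omega), Nat.cast_one]
  have hXPsiu : ⁅X, PsiP (sMap P)⁆ = ((n-1 : ℕ):ℚ) • f := by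
    have he : ⁅X, PsiP (sMap P)⁆ = (n:ℚ) • f - f := by
      rw [← hPsif, hPsif2]; abel
    rw [he, hc, sub_smul, one_smul]
  have hflie : f = ⁅X, sMap P⁆ := by rw [Ring.lie_def, ← h2]
  have hv : PsiP (sMap P) - ((n-1 : ℕ):ℚ) • sMap P = 0 := by
    refine central_lemma (m := n-1) ?_ ?_ ?_
    · have hz : ⁅X, PsiP (sMap P) - ((n-1 : ℕ):ℚ) • sMap P⁆ = 0 := by
        rw [lie_sub, lie_smul, ← hflie, hXPsiu, sub_self]
      rw [Ring.lie_def, sub_eq_zero] at hz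
      exact hz
    · exact homog_sub (PsiP_homog huhom) (homog_smul _ huhom)
    · have c1 := (good_lieP (PsiP_mem (sMap P))).xcoeff (show n - 1 ≠ 1 by omega)
      have c2 := sMap_apply_allx P (n-1)
      show (PsiP (sMap P) - ((n-1 : ℕ):ℚ) • sMap P) (xzc (n-1)) = 0
      rw [MonoidAlgebra.coeff_sub, Finsupp.sub_apply, MonoidAlgebra.coeff_smul, Finsupp.smul_apply, c1, c2, smul_zero, sub_zero]
  have hPsiu : PsiP (sMap P) = ((n-1 : ℕ):ℚ) • sMap P := sub_eq_zero.mp hv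
  have hne : ((n-1 : ℕ):ℚ) ≠ 0 := Nat.cast_ne_zero.mpr (by omega)
  have heq : sMap P = (((n-1 : ℕ):ℚ))⁻¹ • PsiP (sMap P) := by
    rw [hPsiu, smul_smul, inv_mul_cancel₀ hne, one_smul]
  rw [heq]
  exact LieP.smul_mem _ (PsiP_mem (sMap P))

end DblSh
end
end

section
/- Let F ∈ Lie_n[x,y] and write F = F_x·x + F_y·y. Then F_y is antipalindromic if and only if F is push-invariant. -/
noncomputable section
namespace DblSh

attribute [local instance 100] LieRing.ofAssociativeRing

namespace Aux7
open FreeMonoid List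

instance : CoeFun R2 (fun _ => Word → ℚ) := ⟨fun f => f.coeff⟩

/-- inverse of pushW -/
def popW (w : Word) : Word :=
  let l := FreeMonoid.toList w
  match l.dropWhile (fun c => c = 0) with
  | [] => w
  | _ :: rest => FreeMonoid.ofList (rest ++ 1 :: l.takeWhile (fun c => c = 0))

lemma takeWhile_rep (a : ℕ) (t : List (Fin 2)) :
    (List.replicate a (0:Fin 2) ++ 1 :: t).takeWhile (fun c => c = 0) = List.replicate a 0 := by
  induction a with
  | zero => simp
  | succ a ih => simp [List.replicate_succ, List.takeWhile_cons, ih]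

lemma dropWhile_rep (a : ℕ) (t : List (Fin 2)) :
    (List.replicate a (0:Fin 2) ++ 1 :: t).dropWhile (fun c => c = 0) = 1 :: t := by
  induction a with
  | zero => simp
  | succ a ih => simp [List.replicate_succ, List.dropWhile_cons, ih]

lemma takeWhile_rep0 (m : ℕ) :
    (List.replicate m (0:Fin 2)).takeWhile (fun c => c = 0) = List.replicate m 0 := by
  induction m with
  | zero => simp
  | succ m ih => simp [List.replicate_succ, List.takeWhile_cons, ih]

lemma dropWhile_rep0 (m : ℕ) :
    (List.replicate m (0:Fin 2)).dropWhile (fun c => c = 0) = [] := by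
  induction m with
  | zero => simp
  | succ m ih => simp [List.replicate_succ, List.dropWhile_cons, ih]

lemma decomp (l : List (Fin 2)) :
    (∃ m, l = List.replicate m 0) ∨ (∃ a t, l = List.replicate a (0:Fin 2) ++ 1 :: t) := by
  induction l with
  | nil => exact Or.inl ⟨0, rfl⟩
  | cons c t ih =>
    fin_cases c
    · rcases ih with ⟨m, rfl⟩ | ⟨a, t', rfl⟩
      · exact Or.inl ⟨m+1, by simp [List.replicate_succ]⟩
      · exact Or.inr ⟨a+1, t', by simp [List.replicate_succ]⟩
    · exact Or.inr ⟨0, t, rfl⟩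

lemma pushW_def' (w : Word) : pushW w =
    (match (FreeMonoid.toList w).reverse.dropWhile (fun c => c = 0) with
    | [] => w
    | _ :: rest => FreeMonoid.ofList
        (((FreeMonoid.toList w).reverse.takeWhile (fun c => c = 0)).reverse ++ (1 :: rest.reverse))) := rfl

lemma popW_def' (w : Word) : popW w =
    (match (FreeMonoid.toList w).dropWhile (fun c => c = 0) with
    | [] => w
    | _ :: rest => FreeMonoid.ofList
        (rest ++ 1 :: (FreeMonoid.toList w).takeWhile (fun c => c = 0))) := rfl

lemma pushW_rep0 (m : ℕ) : pushW (ofList (List.replicate m (0:Fin 2))) = ofList (List.replicate m 0) := by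
  rw [pushW_def']
  simp only [FreeMonoid.toList_ofList, List.reverse_replicate, dropWhile_rep0]

lemma popW_rep0 (m : ℕ) : popW (ofList (List.replicate m (0:Fin 2))) = ofList (List.replicate m 0) := by
  rw [popW_def']
  simp only [FreeMonoid.toList_ofList, dropWhile_rep0]

lemma pushW_form (u : List (Fin 2)) (a : ℕ) :
    pushW (ofList (u ++ 1 :: List.replicate a 0)) = ofList (List.replicate a 0 ++ 1 :: u) := by
  rw [pushW_def']
  simp only [FreeMonoid.toList_ofList]
  have hrev : (u ++ 1 :: List.replicate a 0).reverse = List.replicate a (0:Fin 2) ++ 1 :: u.reverse := by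
    simp [List.reverse_append, List.reverse_cons, List.reverse_replicate]
  rw [hrev, dropWhile_rep, takeWhile_rep]
  simp [List.reverse_replicate]

lemma popW_form (u : List (Fin 2)) (a : ℕ) :
    popW (ofList (List.replicate a 0 ++ 1 :: u)) = ofList (u ++ 1 :: List.replicate a 0) := by
  rw [popW_def']
  simp only [FreeMonoid.toList_ofList]
  rw [dropWhile_rep, takeWhile_rep]

lemma back_decomp (l : List (Fin 2)) :
    (∃ m, l = List.replicate m 0) ∨ (∃ u a, l = u ++ 1 :: List.replicate a (0:Fin 2)) := by
  rcases decomp l.reverse with ⟨m, h⟩ | ⟨a, t, h⟩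
  · left; exact ⟨m, by rw [← List.reverse_reverse l, h, List.reverse_replicate]⟩
  · right
    refine ⟨t.reverse, a, ?_⟩
    rw [← List.reverse_reverse l, h]
    simp [List.reverse_append, List.reverse_replicate]

lemma popW_pushW (w : Word) : popW (pushW w) = w := by
  rcases back_decomp (FreeMonoid.toList w) with ⟨m, h⟩ | ⟨u, a, h⟩
  · have hw : w = ofList (List.replicate m 0) := by rw [← FreeMonoid.ofList_toList w, h]
    rw [hw, pushW_rep0, popW_rep0]
  · have hw : w = ofList (u ++ 1 :: List.replicate a 0) := by rw [← FreeMonoid.ofList_toList w, h]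
    rw [hw, pushW_form, popW_form]

lemma pushW_popW (w : Word) : pushW (popW w) = w := by
  rcases decomp (FreeMonoid.toList w) with ⟨m, h⟩ | ⟨a, t, h⟩
  · have hw : w = ofList (List.replicate m 0) := by rw [← FreeMonoid.ofList_toList w, h]
    rw [hw, popW_rep0, pushW_rep0]
  · have hw : w = ofList (List.replicate a 0 ++ 1 :: t) := by rw [← FreeMonoid.ofList_toList w, h]
    rw [hw, popW_form, pushW_form]

lemma pushW_injective : Function.Injective pushW :=
  Function.LeftInverse.injective popW_pushW

lemma antiW_antiW (w : Word) : antiW (antiW w) = w := by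
  simp [antiW]

lemma antiW_mul (u v : Word) : antiW (u * v) = antiW v * antiW u := by
  simp [antiW, FreeMonoid.toList_mul, List.reverse_append]


-- insertIdx helpers
lemma insert_prefix (j a : ℕ) (s : List (Fin 2)) (h : j ≤ a) :
    List.insertIdx (List.replicate a (0:Fin 2) ++ s) j 0 = List.replicate (a+1) 0 ++ s := by
  induction j generalizing a with
  | zero => simp [List.replicate_succ]
  | succ j ih =>
    obtain ⟨a', rfl⟩ : ∃ a', a = a' + 1 := ⟨a - 1, by omega⟩
    rw [List.replicate_succ, List.cons_append, List.insertIdx_succ_cons, ih a' (by omega)]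
    simp [List.replicate_succ]

lemma insert_rep (j a : ℕ) (h : j ≤ a) :
    List.insertIdx (List.replicate a (0:Fin 2)) j 0 = List.replicate (a+1) 0 := by
  have := insert_prefix j a ([] : List (Fin 2)) h
  simpa using this

lemma insert_append_left (j : ℕ) (c : Fin 2) (s r : List (Fin 2)) (h : j ≤ s.length) :
    List.insertIdx (s ++ r) j c = List.insertIdx s j c ++ r := by
  induction s generalizing j with
  | nil =>
    simp only [List.length_nil, Nat.le_zero] at h
    subst h; simp
  | cons x t ih =>
    cases j with
    | zero => simp
    | succ j => simp [List.insertIdx_succ_cons, ih j (by simpa using h)]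

lemma insert_append_right (m : ℕ) (c : Fin 2) (s r : List (Fin 2)) :
    List.insertIdx (s ++ r) (s.length + m) c = s ++ List.insertIdx r m c := by
  induction s with
  | nil => simp
  | cons x t ih => simp [List.cons_append, Nat.succ_add, List.insertIdx_succ_cons, ih]

lemma ins_erase (l : List (Fin 2)) (i : ℕ) (h : i < l.length) :
    List.insertIdx (l.eraseIdx i) i (l.getD i 1) = l := by
  induction l generalizing i with
  | nil => simp at h
  | cons x t ih =>
    cases i with
    | zero => simp
    | succ i =>
      have h' : i < t.length := by simpa using h
      have hd : (x :: t).getD (i+1) 1 = t.getD i 1 := List.getD_cons_succ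
      rw [List.eraseIdx_cons_succ, List.insertIdx_succ_cons, hd, ih i h']

lemma ofList_eq_iff {l : List (Fin 2)} {v : Word} :
    FreeMonoid.ofList l = v ↔ l = FreeMonoid.toList v :=
  ⟨fun h => by rw [← h, FreeMonoid.toList_ofList], fun h => by rw [h, FreeMonoid.ofList_toList]⟩

lemma key_count (lw lv : List (Fin 2)) :
    (∑ i ∈ Finset.range lw.length,
      if lw.getD i 1 = 0 then (if lw.eraseIdx i = lv then (1:ℚ) else 0) else 0)
  = ∑ j ∈ Finset.range (lv.length+1), if List.insertIdx lv j 0 = lw then (1:ℚ) else 0 := by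
  simp only [← ite_and]
  rw [Finset.sum_boole, Finset.sum_boole]
  congr 1
  have hset : Finset.filter (fun i => lw.getD i 1 = 0 ∧ lw.eraseIdx i = lv) (Finset.range lw.length)
       = Finset.filter (fun j => List.insertIdx lv j 0 = lw) (Finset.range (lv.length+1)) := by
    ext i
    simp only [Finset.mem_filter, Finset.mem_range]
    constructor
    · rintro ⟨hi, h0, he⟩
      have hlen : lv.length = lw.length - 1 := by
        rw [← he, List.length_eraseIdx]; simp [hi]
      refine ⟨by omega, ?_⟩
      rw [← he, ← h0, ins_erase lw i hi]
    · rintro ⟨hi, hins⟩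
      have hile : i ≤ lv.length := by omega
      have hlen : lw.length = lv.length + 1 := by
        rw [← hins, List.length_insertIdx_of_le_length hile]
      have hiw : i < lw.length := by omega
      have h0 : lw.getD i 1 = 0 := by
        rw [List.getD_eq_getElem _ _ hiw]
        have : lw[i] = (List.insertIdx lv i 0)[i]'(by rw [hins]; exact hiw) := by
          congr 1; exact hins.symm
        rw [this, List.getElem_insertIdx_self]
      exact ⟨hiw, h0, by rw [← hins, List.eraseIdx_insertIdx_self]⟩
  rw [hset]

lemma mono_mul (u v : Word) : mono u * mono v = mono (u * v) := by
  simp [mono, MonoidAlgebra.single_mul_single]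

lemma wlen_mul (u v : Word) : wlen (u * v) = wlen u + wlen v := by
  simp [wlen, FreeMonoid.toList_mul]

lemma wlen_antiW (w : Word) : wlen (antiW w) = wlen w := by
  simp [wlen, antiW]

/-- The signed reversal operator. -/
def TT : R2 →ₗ[ℚ] R2 :=
  Finsupp.linearCombination ℚ (fun w : Word => ((-1:ℚ))^(wlen w) • mono (antiW w)) ∘ₗ
    (MonoidAlgebra.coeffLinearEquiv ℚ).toLinearMap

/-- The derivation ∂ₓ as a linear map. -/
def DXl : R2 →ₗ[ℚ] R2 := Finsupp.linearCombination ℚ dxW ∘ₗ (MonoidAlgebra.coeffLinearEquiv ℚ).toLinearMap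

lemma TT_single (w : Word) (c : ℚ) :
    TT (MonoidAlgebra.single w c) = c • (((-1:ℚ))^(wlen w) • mono (antiW w)) :=
  Finsupp.linearCombination_single ℚ c w

lemma DXl_single (w : Word) (c : ℚ) :
    DXl (MonoidAlgebra.single w c) = c • dxW w :=
  Finsupp.linearCombination_single ℚ c w

lemma single_eq_smul_mono (w : Word) (c : ℚ) :
    (MonoidAlgebra.single w c : R2) = c • mono w := by
  rw [mono, MonoidAlgebra.smul_single, smul_eq_mul, mul_one]

lemma TT_mul (f g : R2) : TT (f * g) = TT g * TT f := by
  induction f using MonoidAlgebra.induction_linear with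
  | zero => simp
  | add f₁ f₂ h₁ h₂ => simp only [add_mul, map_add, h₁, h₂, mul_add]
  | single w c =>
    induction g using MonoidAlgebra.induction_linear with
    | zero => simp
    | add g₁ g₂ h₁ h₂ => simp only [mul_add, map_add, h₁, h₂, add_mul]
    | single v d =>
      rw [show (MonoidAlgebra.single w c * MonoidAlgebra.single v d : R2)
            = MonoidAlgebra.single (w * v) (c * d) from MonoidAlgebra.single_mul_single _ _ _ _]
      rw [TT_single, TT_single, TT_single, antiW_mul, wlen_mul]
      rw [smul_mul_assoc, smul_mul_assoc, mul_smul_comm, mul_smul_comm, mono_mul, pow_add]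
      rw [smul_smul, smul_smul, smul_smul, smul_smul]
      congr 1
      ring

lemma dxW_mul (u v : Word) : dxW (u * v) = dxW u * mono v + mono u * dxW v := by
  have hw : FreeMonoid.toList (u * v) = FreeMonoid.toList u ++ FreeMonoid.toList v :=
    FreeMonoid.toList_mul u v
  have hlen : wlen (u * v) = (FreeMonoid.toList u).length + (FreeMonoid.toList v).length := by
    simp [wlen, hw]
  rw [dxW, hlen, Finset.sum_range_add, dxW, dxW]
  congr 1
  · rw [Finset.sum_mul]
    apply Finset.sum_congr (by simp [wlen]) ?_
    intro i hi
    have hi' : i < (FreeMonoid.toList u).length := by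
      simpa [wlen] using Finset.mem_range.mp hi
    rw [hw, List.getD_append _ _ _ _ hi', List.eraseIdx_append_of_lt_length hi']
    rw [ite_mul, zero_mul]
    congr 1
    rw [mono_mul]
    congr 1
  · rw [Finset.mul_sum]
    apply Finset.sum_congr (by simp [wlen]) ?_
    intro i hi
    have hle : (FreeMonoid.toList u).length ≤ (FreeMonoid.toList u).length + i := Nat.le_add_right _ _
    rw [hw, List.getD_append_right _ _ _ _ hle, List.eraseIdx_append_of_length_le hle]
    simp only [Nat.add_sub_cancel_left]
    rw [mul_ite, mul_zero]
    congr 1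
    rw [mono_mul]
    congr 1

lemma DXl_mul (f g : R2) : DXl (f * g) = DXl f * g + f * DXl g := by
  induction f using MonoidAlgebra.induction_linear with
  | zero => simp
  | add f₁ f₂ h₁ h₂ =>
    simp only [add_mul, map_add, h₁, h₂]
    abel
  | single w c =>
    induction g using MonoidAlgebra.induction_linear with
    | zero => simp
    | add g₁ g₂ h₁ h₂ =>
      simp only [mul_add, map_add, h₁, h₂]
      abel
    | single v d =>
      rw [show (MonoidAlgebra.single w c * MonoidAlgebra.single v d : R2)
            = MonoidAlgebra.single (w * v) (c * d) from MonoidAlgebra.single_mul_single _ _ _ _]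
      rw [DXl_single, DXl_single, DXl_single, dxW_mul]
      rw [single_eq_smul_mono w c, single_eq_smul_mono v d]
      rw [smul_mul_assoc, smul_mul_assoc, mul_smul_comm, mul_smul_comm]
      rw [smul_add, smul_smul, smul_smul]

lemma zero_apply' (v : Word) : (0 : R2) v = 0 := rfl

lemma add_apply' (f g : R2) (v : Word) : (f + g) v = f v + g v := rfl

lemma smul_apply' (c : ℚ) (f : R2) (v : Word) : (c • f) v = c * f v := rfl

lemma DXl_apply (f : R2) (v : Word) :
    DXl f v = ∑ j ∈ Finset.range ((FreeMonoid.toList v).length + 1),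
      f (FreeMonoid.ofList (List.insertIdx (FreeMonoid.toList v) j 0)) := by
  classical
  induction f using MonoidAlgebra.induction_linear with
  | zero => simp [zero_apply']
  | add f₁ f₂ h₁ h₂ =>
    rw [map_add, add_apply', h₁, h₂, ← Finset.sum_add_distrib]
    exact Finset.sum_congr rfl (fun j _ => (add_apply' _ _ _).symm)
  | single w c =>
    rw [DXl_single, smul_apply']
    have hR : ∀ j, (MonoidAlgebra.single w c : R2)
          (FreeMonoid.ofList (List.insertIdx (FreeMonoid.toList v) j 0))
        = c * (if List.insertIdx (FreeMonoid.toList v) j 0 = FreeMonoid.toList w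
            then (1:ℚ) else 0) := by
      intro j
      rw [MonoidAlgebra.coeff_single_apply]
      by_cases h : List.insertIdx (FreeMonoid.toList v) j 0 = FreeMonoid.toList w
      · rw [if_pos h, if_pos, mul_one]
        rw [eq_comm, ofList_eq_iff]; exact h
      · rw [if_neg h, if_neg, mul_zero]
        rw [eq_comm, ofList_eq_iff]; exact h
    simp only [hR]
    rw [← Finset.mul_sum]
    congr 1
    have hterm : ∀ i, ((if (FreeMonoid.toList w).getD i 1 = 0
          then mono (FreeMonoid.ofList ((FreeMonoid.toList w).eraseIdx i)) else 0 : R2)) v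
        = (if (FreeMonoid.toList w).getD i 1 = 0
          then (if (FreeMonoid.toList w).eraseIdx i = FreeMonoid.toList v then (1:ℚ) else 0)
          else 0) := by
      intro i
      by_cases h : (FreeMonoid.toList w).getD i 1 = 0
      · rw [if_pos h, if_pos h, mono, MonoidAlgebra.coeff_single_apply]
        by_cases h2 : (FreeMonoid.toList w).eraseIdx i = FreeMonoid.toList v
        · rw [if_pos h2, if_pos (ofList_eq_iff.mpr h2)]
        · rw [if_neg h2, if_neg (fun hc => h2 (ofList_eq_iff.mp hc))]
      · rw [if_neg h, if_neg h, zero_apply']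
    calc (dxW w) v
        = ∑ i ∈ Finset.range (wlen w),
            ((if (FreeMonoid.toList w).getD i 1 = 0
              then mono (FreeMonoid.ofList ((FreeMonoid.toList w).eraseIdx i)) else 0 : R2)) v := by
          rw [dxW, MonoidAlgebra.coeff_sum, Finsupp.finset_sum_apply]
      _ = ∑ i ∈ Finset.range ((FreeMonoid.toList w).length),
            (if (FreeMonoid.toList w).getD i 1 = 0
              then (if (FreeMonoid.toList w).eraseIdx i = FreeMonoid.toList v then (1:ℚ) else 0)
              else 0) := Finset.sum_congr (by simp [wlen]) (fun i _ => hterm i)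
      _ = ∑ j ∈ Finset.range ((FreeMonoid.toList v).length + 1),
            if List.insertIdx (FreeMonoid.toList v) j 0 = FreeMonoid.toList w then (1:ℚ) else 0 :=
          key_count _ _

lemma anti_apply (f : R2) (v : Word) : anti f v = f (antiW v) := by
  have h := Finsupp.mapDomain_apply (Function.Involutive.injective antiW_antiW) f.coeff (antiW v)
  rw [antiW_antiW] at h
  exact h

lemma pushP_apply (f : R2) (v : Word) : pushP f v = f (popW v) := by
  have h := Finsupp.mapDomain_apply pushW_injective f.coeff (popW v)
  rw [pushW_popW] at h
  exact h

lemma homog_apply_eq_zero {n : ℕ} {f : R2} (h : IsHomog n f) {w : Word}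
    (hw : wlen w ≠ n) : f w = 0 := by
  by_contra hc
  exact hw (h w (Finsupp.mem_support_iff.mpr hc))

lemma TT_apply (f : R2) :
    TT f = Finsupp.sum f.coeff fun w c => c • (((-1:ℚ))^(wlen w) • mono (antiW w)) :=
  Finsupp.linearCombination_apply ℚ f.coeff

lemma TT_homog {n : ℕ} {f : R2} (h : IsHomog n f) : TT f = ((-1:ℚ))^n • anti f := by
  rw [anti, Finsupp.mapDomain, MonoidAlgebra.ofCoeff_finsuppSum, Finsupp.smul_sum, TT_apply]
  apply Finsupp.sum_congr
  intro w hw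
  rw [h w hw, MonoidAlgebra.ofCoeff_single, single_eq_smul_mono, smul_smul, smul_smul, mul_comm]

def SLie : LieSubalgebra ℚ R2 where
  carrier := {f : R2 | TT f = -f ∧ DXl f ∈ Submodule.span ℚ ({(1:R2)} : Set R2)}
  add_mem' := by
    rintro f g ⟨hf1, hf2⟩ ⟨hg1, hg2⟩
    exact ⟨by rw [map_add, hf1, hg1, neg_add],
      by rw [map_add]; exact Submodule.add_mem _ hf2 hg2⟩
  zero_mem' := ⟨by rw [map_zero, neg_zero], by rw [map_zero]; exact Submodule.zero_mem _⟩
  smul_mem' := by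
    rintro c f ⟨hf1, hf2⟩
    exact ⟨by rw [map_smul, hf1, smul_neg],
      by rw [map_smul]; exact Submodule.smul_mem _ _ hf2⟩
  lie_mem' := by
    rintro f g ⟨hf1, hf2⟩ ⟨hg1, hg2⟩
    constructor
    · rw [Ring.lie_def, map_sub, TT_mul, TT_mul, hf1, hg1, neg_mul_neg, neg_mul_neg, neg_sub]
    · rw [Ring.lie_def, map_sub, DXl_mul, DXl_mul]
      obtain ⟨α, hα⟩ := Submodule.mem_span_singleton.mp hf2
      obtain ⟨β, hβ⟩ := Submodule.mem_span_singleton.mp hg2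
      rw [← hα, ← hβ]
      have hz : (α • (1:R2)) * g + f * (β • (1:R2)) - ((β • (1:R2)) * f + g * (α • (1:R2))) = 0 := by
        rw [smul_mul_assoc, one_mul, mul_smul_comm, mul_one, smul_mul_assoc, one_mul,
          mul_smul_comm, mul_one]
        abel
      rw [hz]
      exact Submodule.zero_mem _

lemma antiW_of (c : Fin 2) : antiW (FreeMonoid.of c) = FreeMonoid.of c := by
  simp [antiW]

lemma wlen_of (c : Fin 2) : wlen (FreeMonoid.of c) = 1 := by
  simp [wlen]

lemma X_mem_SLie : X ∈ SLie := by
  have hX : X = MonoidAlgebra.single (FreeMonoid.of (0:Fin 2)) (1:ℚ) := rfl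
  constructor
  · rw [hX, TT_single, antiW_of, wlen_of, pow_one]
    simp [mono]
  · rw [hX, DXl_single, one_smul]
    have hd : dxW (FreeMonoid.of (0:Fin 2)) = 1 := by
      simp [dxW, wlen_of, Finset.sum_range_one, mono, MonoidAlgebra.one_def]
    rw [hd]
    exact Submodule.mem_span_singleton_self _

lemma Y_mem_SLie : Y ∈ SLie := by
  have hY : Y = MonoidAlgebra.single (FreeMonoid.of (1:Fin 2)) (1:ℚ) := rfl
  constructor
  · rw [hY, TT_single, antiW_of, wlen_of, pow_one]
    simp [mono]
  · rw [hY, DXl_single, one_smul]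
    have hd : dxW (FreeMonoid.of (1:Fin 2)) = 0 := by
      simp [dxW, wlen_of, Finset.sum_range_one]
    rw [hd]
    exact Submodule.zero_mem _

lemma LieP_le_SLie : LieP ≤ SLie :=
  LieSubalgebra.lieSpan_le.mpr (by
    rintro z hz
    rcases hz with rfl | hz
    · exact X_mem_SLie
    · rw [Set.mem_singleton_iff] at hz
      subst hz
      exact Y_mem_SLie)

lemma nsmul_rat_zero {m : ℕ} {x : ℚ} (h : (m+1) • x = 0) : x = 0 := by
  have h2 : ((m:ℚ)+1) * x = 0 := by rw [← h, nsmul_eq_mul]; push_cast; ring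
  have h3 : ((m:ℚ)+1) ≠ 0 := by positivity
  exact (mul_eq_zero.mp h2).resolve_left h3

lemma vanish (g : R2)
    (hrel : ∀ lv : List (Fin 2), ∑ j ∈ Finset.range (lv.length + 1),
        g (FreeMonoid.ofList (List.insertIdx lv j 0)) = 0)
    (h1 : ∀ u : List (Fin 2), g (FreeMonoid.ofList (1 :: u)) = 0)
    (hnil : g (FreeMonoid.ofList []) = 0) : g = 0 := by
  have hrep : ∀ m, g (FreeMonoid.ofList (List.replicate m 0)) = 0 := by
    intro m
    cases m with
    | zero => simpa using hnil
    | succ m =>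
      have h := hrel (List.replicate m 0)
      have he : ∀ j ∈ Finset.range ((List.replicate m (0:Fin 2)).length + 1),
          g (FreeMonoid.ofList (List.insertIdx (List.replicate m 0) j 0))
          = g (FreeMonoid.ofList (List.replicate (m+1) 0)) := by
        intro j hj
        have hj' : j ≤ m := by
          have := Finset.mem_range.mp hj
          simp only [List.length_replicate] at this
          omega
        rw [insert_rep j m hj']
      rw [Finset.sum_congr rfl he, Finset.sum_const, Finset.card_range] at h
      simp only [List.length_replicate] at h
      exact nsmul_rat_zero h
  have hmain : ∀ a t, g (FreeMonoid.ofList (List.replicate a 0 ++ 1 :: t)) = 0 := by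
    intro a
    induction a with
    | zero => intro t; simpa using h1 t
    | succ a ih =>
      intro t
      have h := hrel (List.replicate a 0 ++ 1 :: t)
      have hlen : (List.replicate a (0:Fin 2) ++ 1 :: t).length + 1 = (a+1) + (t.length + 1) := by
        simp [List.length_append]
        omega
      rw [hlen, Finset.sum_range_add] at h
      have e1 : ∀ j ∈ Finset.range (a+1),
          g (FreeMonoid.ofList (List.insertIdx (List.replicate a 0 ++ 1 :: t) j 0))
          = g (FreeMonoid.ofList (List.replicate (a+1) 0 ++ 1 :: t)) := by
        intro j hj
        rw [insert_prefix j a _ (Nat.lt_succ_iff.mp (Finset.mem_range.mp hj))]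
      have e2 : ∀ m ∈ Finset.range (t.length + 1),
          g (FreeMonoid.ofList (List.insertIdx (List.replicate a 0 ++ 1 :: t) ((a+1) + m) 0))
          = 0 := by
        intro m hm
        have hins : List.insertIdx (List.replicate a 0 ++ 1 :: t) ((a+1) + m) 0
            = List.replicate a 0 ++ 1 :: List.insertIdx t m 0 := by
          have hl : List.replicate a (0:Fin 2) ++ 1 :: t = (List.replicate a 0 ++ [1]) ++ t := by
            simp
          rw [hl, show (a+1) + m = (List.replicate a (0:Fin 2) ++ [1]).length + m by simp,
            insert_append_right]
          simp
        rw [hins]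
        exact ih (List.insertIdx t m 0)
      rw [Finset.sum_congr rfl e1, Finset.sum_congr rfl e2, Finset.sum_const, Finset.card_range,
        Finset.sum_const_zero, add_zero] at h
      exact nsmul_rat_zero h
  ext w
  rw [zero_apply']
  rcases decomp (FreeMonoid.toList w) with ⟨m, hm⟩ | ⟨a, t, hm⟩
  · rw [show w = FreeMonoid.ofList (List.replicate m 0) by rw [← FreeMonoid.ofList_toList w, hm]]
    exact hrep m
  · rw [show w = FreeMonoid.ofList (List.replicate a 0 ++ 1 :: t) by
      rw [← FreeMonoid.ofList_toList w, hm]]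
    exact hmain a t

lemma pop_insert (lv : List (Fin 2)) (φ : Word → ℚ) :
    ∑ j ∈ Finset.range (lv.length + 1), φ (popW (FreeMonoid.ofList (List.insertIdx lv j 0)))
  = ∑ j ∈ Finset.range ((FreeMonoid.toList (popW (FreeMonoid.ofList lv))).length + 1),
      φ (FreeMonoid.ofList (List.insertIdx (FreeMonoid.toList (popW (FreeMonoid.ofList lv))) j 0)) := by
  rcases decomp lv with ⟨m, rfl⟩ | ⟨a, t, rfl⟩
  · rw [popW_rep0, FreeMonoid.toList_ofList]
    apply Finset.sum_congr rfl
    intro j hj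
    have hj' : j ≤ m := by
      have := Finset.mem_range.mp hj
      simp only [List.length_replicate] at this
      omega
    rw [insert_rep j m hj', popW_rep0]
  · rw [popW_form, FreeMonoid.toList_ofList]
    have hL : (List.replicate a (0:Fin 2) ++ 1 :: t).length + 1 = (a+1) + (t.length+1) := by
      simp [List.length_append]; omega
    have hR : (t ++ 1 :: List.replicate a (0:Fin 2)).length + 1 = (t.length+1) + (a+1) := by
      simp [List.length_append]; omega
    rw [hL, hR, Finset.sum_range_add _ (a+1) (t.length+1),
      Finset.sum_range_add _ (t.length+1) (a+1)]
    have e1 : ∀ j ∈ Finset.range (a+1),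
        φ (popW (FreeMonoid.ofList (List.insertIdx (List.replicate a 0 ++ 1 :: t) j 0)))
        = φ (FreeMonoid.ofList (t ++ 1 :: List.replicate (a+1) 0)) := by
      intro j hj
      rw [insert_prefix j a _ (Nat.lt_succ_iff.mp (Finset.mem_range.mp hj)), popW_form]
    have e2 : ∀ m ∈ Finset.range (t.length+1),
        φ (popW (FreeMonoid.ofList (List.insertIdx (List.replicate a 0 ++ 1 :: t) ((a+1) + m) 0)))
        = φ (FreeMonoid.ofList (List.insertIdx t m 0 ++ 1 :: List.replicate a 0)) := by
      intro m hm
      have hm' : m ≤ t.length := Nat.lt_succ_iff.mp (Finset.mem_range.mp hm)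
      have hins : List.insertIdx (List.replicate a 0 ++ 1 :: t) ((a+1) + m) 0
          = List.replicate a 0 ++ 1 :: List.insertIdx t m 0 := by
        rw [show List.replicate a (0:Fin 2) ++ 1 :: t = (List.replicate a 0 ++ [1]) ++ t by simp,
          show (a+1) + m = (List.replicate a (0:Fin 2) ++ [1]).length + m by simp,
          insert_append_right]
        simp
      rw [hins, popW_form]
    have e3 : ∀ j ∈ Finset.range (t.length+1),
        φ (FreeMonoid.ofList (List.insertIdx (t ++ 1 :: List.replicate a 0) j 0))
        = φ (FreeMonoid.ofList (List.insertIdx t j 0 ++ 1 :: List.replicate a 0)) := by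
      intro j hj
      rw [insert_append_left j 0 t _ (Nat.lt_succ_iff.mp (Finset.mem_range.mp hj))]
    have e4 : ∀ m ∈ Finset.range (a+1),
        φ (FreeMonoid.ofList (List.insertIdx (t ++ 1 :: List.replicate a 0) ((t.length+1) + m) 0))
        = φ (FreeMonoid.ofList (t ++ 1 :: List.replicate (a+1) 0)) := by
      intro m hm
      have hm' : m ≤ a := Nat.lt_succ_iff.mp (Finset.mem_range.mp hm)
      have hins : List.insertIdx (t ++ 1 :: List.replicate a 0) ((t.length+1) + m) 0
          = t ++ 1 :: List.replicate (a+1) 0 := by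
        rw [show t ++ 1 :: List.replicate a (0:Fin 2) = (t ++ [1]) ++ List.replicate a 0 by simp,
          show (t.length+1) + m = (t ++ [(1:Fin 2)]).length + m by simp,
          insert_append_right, insert_rep m a hm']
        simp
      rw [hins]
    rw [Finset.sum_congr rfl e1, Finset.sum_congr rfl e2, Finset.sum_congr rfl e3,
      Finset.sum_congr rfl e4]
    exact add_comm _ _

lemma sub_apply' (f g : R2) (v : Word) : (f - g) v = f v - g v := rfl

lemma neg_apply' (f : R2) (v : Word) : (-f) v = -(f v) := rfl

lemma wlen_ofList (l : List (Fin 2)) : wlen (FreeMonoid.ofList l) = l.length := by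
  simp [wlen]

lemma antiW_ofList (l : List (Fin 2)) :
    antiW (FreeMonoid.ofList l) = FreeMonoid.ofList l.reverse := by
  simp [antiW]

lemma popW_cons (u : List (Fin 2)) :
    popW (FreeMonoid.ofList (1 :: u)) = FreeMonoid.ofList (u ++ [1]) := by
  simpa using popW_form u 0

lemma popW_nil : popW (FreeMonoid.ofList ([] : List (Fin 2))) = FreeMonoid.ofList [] := by
  simpa using popW_rep0 0

lemma wlen_eq_zero {w : Word} (h : wlen w = 0) : w = FreeMonoid.ofList [] := by
  rw [← FreeMonoid.ofList_toList w]
  congr 1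
  exact List.length_eq_zero_iff.mp h

lemma DXl_apply_list (f : R2) (lv : List (Fin 2)) :
    DXl f (FreeMonoid.ofList lv)
      = ∑ j ∈ Finset.range (lv.length + 1), f (FreeMonoid.ofList (List.insertIdx lv j 0)) := by
  have h := DXl_apply f (FreeMonoid.ofList lv)
  simpa [FreeMonoid.toList_ofList] using h

lemma ofList_concat1 (u : List (Fin 2)) :
    FreeMonoid.ofList (u ++ [1]) = FreeMonoid.ofList u * FreeMonoid.of 1 := by
  rw [ofList_eq_iff, FreeMonoid.toList_mul, FreeMonoid.toList_ofList, FreeMonoid.toList_of]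

lemma right_coeff (F Fx Fy : R2) (hdec : F = Fx * X + Fy * Y) (u : List (Fin 2)) :
    F (FreeMonoid.ofList (u ++ [1])) = Fy (FreeMonoid.ofList u) := by
  classical
  rw [hdec, add_apply']
  have h1 : (Fx * X) (FreeMonoid.ofList (u ++ [1])) = 0 := by
    rw [← Finsupp.notMem_support_iff]
    intro hmem
    have hw := MonoidAlgebra.support_coeff_mul_subset Fx X hmem
    rw [Finset.mem_mul] at hw
    obtain ⟨p, hp, q, hq, hpq⟩ := hw
    have hXs : (X:R2).coeff.support = {FreeMonoid.of (0:Fin 2)} :=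
      Finsupp.support_single_ne_zero _ one_ne_zero
    rw [hXs, Finset.mem_singleton] at hq
    subst hq
    have hlast := congrArg (fun w : Word => (FreeMonoid.toList w).getLast?) hpq
    simp only [FreeMonoid.toList_mul, FreeMonoid.toList_of, FreeMonoid.toList_ofList] at hlast
    rw [List.getLast?_concat, List.getLast?_concat] at hlast
    exact absurd (Option.some.inj hlast) (by decide)
  have h2 : (Fy * Y) (FreeMonoid.ofList (u ++ [1])) = Fy (FreeMonoid.ofList u) := by
    have hH : ∀ a : Word,
        a * FreeMonoid.of 1 = FreeMonoid.ofList (u ++ [1]) ↔ a = FreeMonoid.ofList u := by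
      intro a
      rw [ofList_concat1]
      constructor
      · intro h
        have h' := congrArg FreeMonoid.toList h
        simp only [FreeMonoid.toList_mul, FreeMonoid.toList_of] at h'
        have h2 := congrArg List.dropLast h'
        rw [List.dropLast_concat, List.dropLast_concat] at h2
        rw [← FreeMonoid.ofList_toList a, h2, FreeMonoid.ofList_toList]
      · rintro rfl; rfl
    have h3 := MonoidAlgebra.coeff_mul_single_eq_coeff_mul (x := Fy) (r := (1:ℚ)) (m := FreeMonoid.of 1)
      (m₁ := FreeMonoid.ofList (u ++ [1])) (FreeMonoid.ofList u) (fun a _ => hH a)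
    rw [mul_one] at h3
    exact h3
  rw [h1, h2, zero_add]

lemma neg_one_sq_pow (m : ℕ) : ((-1:ℚ))^m * ((-1:ℚ))^m = 1 := by
  rw [← pow_add]
  exact Even.neg_one_pow ⟨m, rfl⟩

lemma ofList_nil : FreeMonoid.ofList ([] : List (Fin 2)) = 1 := by
  rw [show ([] : List (Fin 2)) = FreeMonoid.toList 1 from (FreeMonoid.toList_one).symm,
    FreeMonoid.ofList_toList]

end Aux7

open Aux7

/-- for F ∈ Lie_n[x,y] with F = F_x·x + F_y·y,
    F_y is antipalindromic iff F is push-invariant. -/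
theorem stmt7 (n : ℕ) (F : R2) (hF : InLieN n F)
    (Fx Fy : R2) (hdec : F = Fx * X + Fy * Y) :
    Antipal (n - 1) Fy ↔ pushP F = F := by
  classical
  obtain ⟨hLie, hHom⟩ := hF
  obtain ⟨hTT, hDX⟩ := LieP_le_SLie hLie
  have hFy : ∀ u : List (Fin 2), F (FreeMonoid.ofList (u ++ [1])) = Fy (FreeMonoid.ofList u) :=
    right_coeff F Fx Fy hdec
  rcases n with _ | n
  · -- n = 0
    have hF0 : F = 0 := by
      have hsing : F = MonoidAlgebra.single (1:Word) (F 1) := by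
        refine MonoidAlgebra.ext (Finsupp.ext ?_)
        intro w
        by_cases hw : w = 1
        · subst hw; rw [MonoidAlgebra.coeff_single_apply, if_pos rfl]
        · rw [MonoidAlgebra.coeff_single_apply, if_neg (fun h => hw h.symm)]
          apply homog_apply_eq_zero hHom
          intro hz
          exact hw ((wlen_eq_zero hz).trans ofList_nil)
      have h1 : wlen (1:Word) = 0 := by rw [← ofList_nil, wlen_ofList]; rfl
      have h2 : antiW (1:Word) = 1 := by rw [← ofList_nil, antiW_ofList]; exact ofList_nil
      have hTT1 : TT F = F := by
        conv_lhs => rw [hsing]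
        rw [TT_single, h1, h2, pow_zero, one_smul, ← single_eq_smul_mono, ← hsing]
      have h3 : F = -F := by rw [← hTT, hTT1]
      have h4 : (2:ℚ) • F = 0 := by
        rw [two_smul]
        nth_rewrite 1 [h3]
        exact neg_add_cancel F
      exact (smul_eq_zero.mp h4).resolve_left (by norm_num)
    have hFy0 : Fy = 0 := by
      refine MonoidAlgebra.ext (Finsupp.ext ?_)
      intro w
      rw [zero_apply']
      conv_lhs => rw [← FreeMonoid.ofList_toList w]
      rw [← hFy, hF0, zero_apply']
    apply iff_of_true
    · show Fy = ((-1:ℚ))^(0-1) • anti Fy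
      rw [hFy0]
      ext w
      simp only [smul_apply', anti_apply, zero_apply', mul_zero]
    · rw [hF0]
      ext v
      simp only [pushP_apply, zero_apply']
  rcases n with _ | k
  · -- n = 1
    apply iff_of_true
    · show Fy = ((-1:ℚ))^(1-1) • anti Fy
      rw [pow_zero, one_smul]
      refine MonoidAlgebra.ext (Finsupp.ext ?_)
      intro w
      rw [anti_apply]
      have haw : antiW w = FreeMonoid.ofList (FreeMonoid.toList w).reverse := by
        conv_lhs => rw [← FreeMonoid.ofList_toList w]
        rw [antiW_ofList]
      conv_lhs => rw [← FreeMonoid.ofList_toList w]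
      rw [haw, ← hFy, ← hFy]
      by_cases hnil : FreeMonoid.toList w = []
      · rw [hnil]
        simp
      · have hl : (FreeMonoid.toList w).length ≠ 0 := fun h => hnil (List.length_eq_zero_iff.mp h)
        have e1 : wlen (FreeMonoid.ofList (FreeMonoid.toList w ++ [1])) ≠ 1 := by
          rw [wlen_ofList, List.length_append]
          simp only [List.length_cons, List.length_nil]
          omega
        have e2 : wlen (FreeMonoid.ofList ((FreeMonoid.toList w).reverse ++ [1])) ≠ 1 := by
          rw [wlen_ofList, List.length_append, List.length_reverse]
          simp only [List.length_cons, List.length_nil]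
          omega
        rw [homog_apply_eq_zero hHom e1, homog_apply_eq_zero hHom e2]
    · refine MonoidAlgebra.ext (Finsupp.ext ?_)
      intro v
      rw [pushP_apply]
      rcases decomp (FreeMonoid.toList v) with ⟨m, hm⟩ | ⟨a, t, hm⟩
      · rw [show v = FreeMonoid.ofList (List.replicate m 0) from by
          rw [← FreeMonoid.ofList_toList v, hm], popW_rep0]
      · rw [show v = FreeMonoid.ofList (List.replicate a 0 ++ 1 :: t) from by
          rw [← FreeMonoid.ofList_toList v, hm], popW_form]
        by_cases hsz : a = 0 ∧ t = []
        · obtain ⟨rfl, rfl⟩ := hsz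
          rfl
        · have hor : a ≠ 0 ∨ t.length ≠ 0 := by
            by_cases ha : a = 0
            · right; intro h; exact hsz ⟨ha, List.length_eq_zero_iff.mp h⟩
            · left; exact ha
          have e1 : wlen (FreeMonoid.ofList (t ++ 1 :: List.replicate a 0)) ≠ 1 := by
            rw [wlen_ofList, List.length_append]
            simp only [List.length_cons, List.length_replicate]
            omega
          have e2 : wlen (FreeMonoid.ofList (List.replicate a 0 ++ 1 :: t)) ≠ 1 := by
            rw [wlen_ofList, List.length_append]
            simp only [List.length_cons, List.length_replicate]
            omega
          rw [homog_apply_eq_zero hHom e1, homog_apply_eq_zero hHom e2]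
  · -- n = k + 2
    have hanti : TT F = ((-1:ℚ))^(k+2) • anti F := TT_homog hHom
    have hrev : ∀ v : Word, F (antiW v) = ((-1:ℚ))^(k+1) * F v := by
      intro v
      have h := congrArg (fun f : R2 => f v) (hanti.symm.trans hTT)
      simp only [smul_apply', neg_apply', anti_apply] at h
      have h2 := congrArg (fun x : ℚ => ((-1:ℚ))^(k+2) * x) h
      rw [← mul_assoc, neg_one_sq_pow, one_mul] at h2
      rw [h2, pow_succ]
      ring
    have key_of_push : pushP F = F → ∀ u : List (Fin 2),
        F (FreeMonoid.ofList (u ++ [1])) = F (FreeMonoid.ofList (1 :: u)) := by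
      intro hp u
      have h := pushP_apply F (FreeMonoid.ofList (1 :: u))
      rw [hp, popW_cons] at h
      exact h.symm
    have push_of_key : (∀ u : List (Fin 2),
        F (FreeMonoid.ofList (u ++ [1])) = F (FreeMonoid.ofList (1 :: u))) → pushP F = F := by
      intro hkey
      have hDX0 : DXl F = 0 := by
        obtain ⟨α, hα⟩ := Submodule.mem_span_singleton.mp hDX
        have h0 : DXl F (FreeMonoid.ofList []) = α := by
          rw [← hα, smul_apply']
          have h1 : (1:R2) (FreeMonoid.ofList []) = 1 := by
            rw [MonoidAlgebra.one_def, ofList_nil, MonoidAlgebra.coeff_single_apply, if_pos rfl]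
          rw [h1, mul_one]
        have h2 : DXl F (FreeMonoid.ofList []) = 0 := by
          rw [DXl_apply_list]
          simp only [List.length_nil]
          rw [Finset.sum_range_one]
          apply homog_apply_eq_zero hHom
          rw [show List.insertIdx [] 0 (0:Fin 2) = [0] from rfl, wlen_ofList]
          simp
        have hα0 : α = 0 := h0.symm.trans h2
        rw [← hα, hα0, zero_smul]
      have hGrel : ∀ lv : List (Fin 2), ∑ j ∈ Finset.range (lv.length + 1),
          (pushP F - F) (FreeMonoid.ofList (List.insertIdx lv j 0)) = 0 := by
        intro lv
        have hsplit : ∀ j, (pushP F - F) (FreeMonoid.ofList (List.insertIdx lv j 0))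
            = F (popW (FreeMonoid.ofList (List.insertIdx lv j 0)))
              - F (FreeMonoid.ofList (List.insertIdx lv j 0)) := by
          intro j
          rw [sub_apply', pushP_apply]
        simp only [hsplit]
        rw [Finset.sum_sub_distrib, pop_insert lv (fun w => F w),
          ← DXl_apply F (popW (FreeMonoid.ofList lv)), ← DXl_apply_list F lv, hDX0,
          zero_apply', zero_apply', sub_zero]
      have hG1 : ∀ u : List (Fin 2), (pushP F - F) (FreeMonoid.ofList (1 :: u)) = 0 := by
        intro u
        rw [sub_apply', pushP_apply, popW_cons, hkey u, sub_self]
      have hGnil : (pushP F - F) (FreeMonoid.ofList []) = 0 := by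
        rw [sub_apply', pushP_apply, popW_nil, sub_self]
      have hG0 : pushP F - F = 0 := vanish _ hGrel hG1 hGnil
      exact sub_eq_zero.mp hG0
    constructor
    · intro hA
      apply push_of_key
      intro u
      have h2 : Fy = ((-1:ℚ))^(k+1) • anti Fy := hA
      calc F (FreeMonoid.ofList (u ++ [1])) = Fy (FreeMonoid.ofList u) := hFy u
        _ = ((-1:ℚ))^(k+1) * Fy (antiW (FreeMonoid.ofList u)) := by
            conv_lhs => rw [h2]
            rw [smul_apply', anti_apply]
        _ = ((-1:ℚ))^(k+1) * F (FreeMonoid.ofList (u.reverse ++ [1])) := by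
            rw [antiW_ofList, hFy]
        _ = ((-1:ℚ))^(k+1) * F (antiW (FreeMonoid.ofList (1 :: u))) := by
            rw [antiW_ofList, List.reverse_cons]
        _ = ((-1:ℚ))^(k+1) * (((-1:ℚ))^(k+1) * F (FreeMonoid.ofList (1 :: u))) := by
            rw [hrev]
        _ = F (FreeMonoid.ofList (1 :: u)) := by
            rw [← mul_assoc, neg_one_sq_pow, one_mul]
    · intro hp
      have hkey := key_of_push hp
      show Fy = ((-1:ℚ))^(k+1) • anti Fy
      refine MonoidAlgebra.ext (Finsupp.ext ?_)
      intro w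
      rw [smul_apply', anti_apply]
      have haw : antiW w = FreeMonoid.ofList (FreeMonoid.toList w).reverse := by
        conv_lhs => rw [← FreeMonoid.ofList_toList w]
        rw [antiW_ofList]
      conv_lhs => rw [← FreeMonoid.ofList_toList w]
      rw [haw, ← hFy, ← hFy, hkey (FreeMonoid.toList w)]
      have hrw : FreeMonoid.ofList ((FreeMonoid.toList w).reverse ++ [1])
          = antiW (FreeMonoid.ofList (1 :: FreeMonoid.toList w)) := by
        rw [antiW_ofList, List.reverse_cons]
      rw [hrw, hrev, ← mul_assoc, neg_one_sq_pow, one_mul]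

end DblSh
end
end

section
/- Let n ≥ 3 and let F, G ∈ Lie_n[x,y] satisfy [x,G] + [y,F] = 0 (i.e. the derivation D_{F,G} is special). Write F = F_x·x + F_y·y = x·F^x + y·F^y and G = G_x·x + G_y·y, and let A ∈ ℚ. Then tr(F_y·y + G_x·x) = A·tr((x+y)^n − x^n − y^n) holds in TR if and only if F^y − F^x is push-constant for the constant n·A. -/
noncomputable section
namespace DblSh

attribute [local instance] LieRing.ofAssociativeRing

instance : CoeFun R2 (fun _ => Word → ℚ) := ⟨fun f => f.coeff⟩

/-! ### Auxiliary material for stmt10 -/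

/-- Cyclic sum functional. -/
def psi (z : List (Fin 2)) (P : R2) : ℚ :=
  ∑ j ∈ Finset.range z.length, P (FreeMonoid.ofList (z.rotate j))

/-- push at the level of lists. -/
def pushL (l : List (Fin 2)) : List (Fin 2) :=
  FreeMonoid.toList (pushW (FreeMonoid.ofList l))

lemma ofL_mul (a b : List (Fin 2)) :
    FreeMonoid.ofList a * FreeMonoid.ofList b = FreeMonoid.ofList (a ++ b) := rfl

lemma ofL_inj : Function.Injective (FreeMonoid.ofList (α := Fin 2)) :=
  FreeMonoid.ofList.injective

lemma X_def : X = MonoidAlgebra.single (FreeMonoid.ofList [0]) 1 := rfl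
lemma Y_def : Y = MonoidAlgebra.single (FreeMonoid.ofList [1]) 1 := rfl

lemma coeff_mul_single_right (f : R2) (c : Fin 2) (l : List (Fin 2)) :
    (f * MonoidAlgebra.single (FreeMonoid.ofList [c]) (1:ℚ))
      (FreeMonoid.ofList (l ++ [c])) = f (FreeMonoid.ofList l) := by
  rw [MonoidAlgebra.coeff_mul_single_eq_coeff_mul (m₂ := FreeMonoid.ofList l), mul_one]
  intro a _
  constructor
  · intro h
    have h2 := congrArg FreeMonoid.toList h
    simp only [FreeMonoid.toList_mul, FreeMonoid.toList_ofList] at h2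
    exact congrArg FreeMonoid.ofList (List.append_cancel_right h2)
  · rintro rfl; rfl

lemma coeff_mul_single_right_ne (f : R2) (c : Fin 2) (z : List (Fin 2))
    (h : z.getLast? ≠ some c) :
    (f * MonoidAlgebra.single (FreeMonoid.ofList [c]) (1:ℚ)) (FreeMonoid.ofList z) = 0 := by
  classical
  rw [MonoidAlgebra.coeff_mul, Finsupp.sum]
  apply Finset.sum_eq_zero
  intro a₁ _
  rw [MonoidAlgebra.coeff_single, Finsupp.sum_single_index (by simp)]
  rw [if_neg]
  intro heq
  have h2 := congrArg FreeMonoid.toList heq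
  simp only [FreeMonoid.toList_mul, FreeMonoid.toList_ofList] at h2
  apply h
  rw [← h2, List.getLast?_concat]

lemma coeff_single_mul_left (f : R2) (c : Fin 2) (l : List (Fin 2)) :
    (MonoidAlgebra.single (FreeMonoid.ofList [c]) (1:ℚ) * f)
      (FreeMonoid.ofList (c :: l)) = f (FreeMonoid.ofList l) := by
  rw [MonoidAlgebra.coeff_single_mul_eq_mul_coeff (m₂ := FreeMonoid.ofList l), one_mul]
  intro a _
  constructor
  · intro h
    have h2 := congrArg FreeMonoid.toList h
    simp only [FreeMonoid.toList_mul, FreeMonoid.toList_ofList] at h2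
    exact FreeMonoid.toList.injective (by simpa using h2)
  · rintro rfl; rfl

lemma coeff_single_mul_left_ne (f : R2) (c : Fin 2) (z : List (Fin 2))
    (h : z.head? ≠ some c) :
    (MonoidAlgebra.single (FreeMonoid.ofList [c]) (1:ℚ) * f) (FreeMonoid.ofList z) = 0 := by
  classical
  rw [MonoidAlgebra.coeff_mul]
  rw [MonoidAlgebra.coeff_single, Finsupp.sum_single_index (by simp)]
  rw [Finsupp.sum]
  apply Finset.sum_eq_zero
  intro a₂ _
  rw [if_neg]
  intro heq
  have h2 := congrArg FreeMonoid.toList heq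
  simp only [FreeMonoid.toList_mul, FreeMonoid.toList_ofList] at h2
  apply h
  rw [← h2]
  rfl

/-- Bundled cyclic sum functional. -/
def psiL (z : List (Fin 2)) : R2 →ₗ[ℚ] ℚ :=
  ∑ j ∈ Finset.range z.length, (Finsupp.lapply (FreeMonoid.ofList (z.rotate j))).comp
    (MonoidAlgebra.coeffLinearEquiv ℚ : R2 ≃ₗ[ℚ] Word →₀ ℚ).toLinearMap

lemma psiL_apply (z : List (Fin 2)) (P : R2) : psiL z P = psi z P := by
  simp only [psiL, psi, LinearMap.coe_sum, Finset.sum_apply]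
  rfl

lemma psi_add (z : List (Fin 2)) (P Q : R2) : psi z (P + Q) = psi z P + psi z Q := by
  rw [← psiL_apply, ← psiL_apply, ← psiL_apply, map_add]

lemma psi_sub (z : List (Fin 2)) (P Q : R2) : psi z (P - Q) = psi z P - psi z Q := by
  rw [← psiL_apply, ← psiL_apply, ← psiL_apply, map_sub]

lemma psi_smul (z : List (Fin 2)) (c : ℚ) (P : R2) : psi z (c • P) = c * psi z P := by
  rw [← psiL_apply, ← psiL_apply, map_smul, smul_eq_mul]

lemma add_rot_mod (n a m : ℕ) (hn : 0 < n) : (a + m + (n - m % n)) % n = a % n := by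
  have hr : m % n < n := Nat.mod_lt m hn
  have h1 : a + m + (n - m % n) = (a + (n - m % n)) + m := by omega
  calc (a + m + (n - m % n)) % n = ((a + (n - m % n)) % n + m % n) % n := by
        rw [h1, Nat.add_mod]
    _ = (a + (n - m % n) + m % n) % n := Nat.mod_add_mod _ _ _
    _ = (a + n) % n := by rw [show a + (n - m % n) + m % n = a + n from by omega]
    _ = a % n := Nat.add_mod_right a n

lemma rotate_rotate_self {α : Type*} (l : List α) (hl : l ≠ []) (m : ℕ) :
    (l.rotate m).rotate (l.length - m % l.length) = l := by
  have hn : 0 < l.length := List.length_pos_iff.mpr hl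
  rw [List.rotate_rotate, ← List.rotate_mod]
  have h1 : (m + (l.length - m % l.length)) % l.length = 0 := by
    have := add_rot_mod l.length 0 m hn
    simpa using this
  rw [h1, List.rotate_zero]

lemma rotate_inj_of_len {α : Type*} {l₁ l₂ : List α} (m : ℕ)
    (hlen : l₁.length = l₂.length) (h : l₁.rotate m = l₂.rotate m) : l₁ = l₂ := by
  rcases eq_or_ne l₁ [] with rfl | h1
  · have h0 : l₂.length = 0 := by simpa using hlen.symm
    exact (List.length_eq_zero_iff.mp h0).symm
  · have h2 : l₂ ≠ [] := by
      intro hh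
      rw [hh] at hlen
      simp only [List.length_nil] at hlen
      exact h1 (List.length_eq_zero_iff.mp hlen)
    have h3 := congrArg (fun t => t.rotate (l₁.length - m % l₁.length)) h
    rw [rotate_rotate_self l₁ h1 m] at h3
    rw [hlen] at h3
    rw [rotate_rotate_self l₂ h2 m] at h3
    exact h3

/-- The fundamental reindexing: filtering a predicate of an extra rotation. -/
lemma filter_card_rotate (z : List (Fin 2)) (m : ℕ) (p : List (Fin 2) → Prop)
    [DecidablePred p] :
    ((Finset.range z.length).filter (fun j => p ((z.rotate j).rotate m))).card
      = ((Finset.range z.length).filter (fun j => p (z.rotate j))).card := by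
  rcases eq_or_ne z [] with rfl | hz
  · simp
  have hn : 0 < z.length := List.length_pos_iff.mpr hz
  apply Finset.card_bij' (fun j _ => (j + m) % z.length)
    (fun j _ => (j + (z.length - m % z.length)) % z.length)
  · intro a ha
    simp only [Finset.mem_filter, Finset.mem_range] at ha ⊢
    refine ⟨Nat.mod_lt _ hn, ?_⟩
    rw [List.rotate_mod, ← List.rotate_rotate]
    exact ha.2
  · intro a ha
    simp only [Finset.mem_filter, Finset.mem_range] at ha ⊢
    refine ⟨Nat.mod_lt _ hn, ?_⟩
    rw [List.rotate_mod, List.rotate_rotate, ← List.rotate_mod,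
      show a + (z.length - m % z.length) + m = a + m + (z.length - m % z.length) from by omega,
      add_rot_mod z.length a m hn, Nat.mod_eq_of_lt ha.1]
    exact ha.2
  · intro a ha
    simp only [Finset.mem_filter, Finset.mem_range] at ha
    rw [Nat.mod_add_mod, add_rot_mod z.length a m hn, Nat.mod_eq_of_lt ha.1]
  · intro a ha
    simp only [Finset.mem_filter, Finset.mem_range] at ha
    have h1 : a + (z.length - m % z.length) + m = a + m + (z.length - m % z.length) := by omega
    rw [Nat.mod_add_mod, h1, add_rot_mod z.length a m hn, Nat.mod_eq_of_lt ha.1]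

lemma psi_single (z : List (Fin 2)) (w : Word) (e : ℚ) :
    psi z (MonoidAlgebra.single w e)
      = e * ((Finset.range z.length).filter
          (fun j => z.rotate j = FreeMonoid.toList w)).card := by
  classical
  unfold psi
  have h1 : ∀ j, (MonoidAlgebra.single w e : R2) (FreeMonoid.ofList (z.rotate j))
      = if z.rotate j = FreeMonoid.toList w then e else 0 := by
    intro j
    rw [MonoidAlgebra.coeff_single, Finsupp.single_apply]
    by_cases hc : z.rotate j = FreeMonoid.toList w
    · rw [if_pos hc, if_pos]
      rw [hc]
      exact (FreeMonoid.ofList_toList w).symm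
    · rw [if_neg hc, if_neg]
      intro hw
      exact hc (by rw [hw, FreeMonoid.toList_ofList])
  calc ∑ j ∈ Finset.range z.length,
        (MonoidAlgebra.single w e : R2) (FreeMonoid.ofList (z.rotate j))
      = ∑ j ∈ Finset.range z.length,
          (if z.rotate j = FreeMonoid.toList w then e else 0) :=
        Finset.sum_congr rfl (fun j _ => h1 j)
    _ = ∑ _j ∈ (Finset.range z.length).filter
          (fun j => z.rotate j = FreeMonoid.toList w), e := by
        rw [Finset.sum_filter]
    _ = _ := by rw [Finset.sum_const, nsmul_eq_mul, mul_comm]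

lemma rotate_append_len {α : Type*} (u v : List α) :
    (u ++ v).rotate u.length = v ++ u := by
  rw [List.rotate_eq_drop_append_take (by simp), List.drop_left, List.take_left]

lemma psi_single_mul_single (z : List (Fin 2)) (u v : Word) (c d : ℚ) :
    psi z (MonoidAlgebra.single u c * MonoidAlgebra.single v d)
      = psi z (MonoidAlgebra.single v d * MonoidAlgebra.single u c) := by
  classical
  rw [MonoidAlgebra.single_mul_single, MonoidAlgebra.single_mul_single,
    psi_single, psi_single, mul_comm c d]
  congr 1
  have h2 : FreeMonoid.toList (u * v) = FreeMonoid.toList u ++ FreeMonoid.toList v :=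
    FreeMonoid.toList_mul u v
  have h3 : FreeMonoid.toList (v * u) = FreeMonoid.toList v ++ FreeMonoid.toList u :=
    FreeMonoid.toList_mul v u
  rw [h2, h3]
  set lu := FreeMonoid.toList u
  set lv := FreeMonoid.toList v
  have hfe : (Finset.range z.length).filter (fun j => z.rotate j = lu ++ lv)
      = (Finset.range z.length).filter
          (fun j => (z.rotate j).rotate lu.length = lv ++ lu) := by
    apply Finset.filter_congr
    intro j _
    constructor
    · intro h; rw [h, rotate_append_len]
    · intro h
      apply rotate_inj_of_len lu.length
      · have hh := congrArg List.length h
        simp only [List.length_rotate, List.length_append] at hh ⊢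
        omega
      · rw [h, rotate_append_len]
  rw [hfe, filter_card_rotate z lu.length (fun l => l = lv ++ lu)]

lemma phi_mul_comm (φ : R2 →ₗ[ℚ] ℚ)
    (hs : ∀ (u v : Word) (c d : ℚ),
      φ (MonoidAlgebra.single u c * MonoidAlgebra.single v d)
        = φ (MonoidAlgebra.single v d * MonoidAlgebra.single u c)) :
    ∀ a b : R2, φ (a * b) = φ (b * a) := by
  intro a b
  induction a using MonoidAlgebra.induction with
  | zero => simp
  | single_add u c f _ _ ih =>
    have hkey : ∀ g : R2, φ (MonoidAlgebra.single u c * g)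
        = φ (g * MonoidAlgebra.single u c) := by
      intro g
      induction g using MonoidAlgebra.induction with
      | zero => simp
      | single_add v d g' _ _ ih' =>
        rw [mul_add, add_mul, map_add, map_add, ih', hs]
    rw [add_mul, mul_add, map_add, map_add, ih, hkey]

lemma psi_mul_comm (z : List (Fin 2)) (a b : R2) : psi z (a * b) = psi z (b * a) := by
  rw [← psiL_apply, ← psiL_apply]
  exact phi_mul_comm (psiL z) (fun u v c d => by
    rw [psiL_apply, psiL_apply]; exact psi_single_mul_single z u v c d) a b

lemma word_mul_eq_one {u v : Word} (h : u * v = 1) : v * u = 1 := by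
  have h2 := congrArg FreeMonoid.toList h
  simp only [FreeMonoid.toList_mul] at h2
  have h3 := List.append_eq_nil_iff.mp h2
  apply FreeMonoid.toList.injective
  simp only [FreeMonoid.toList_mul]
  rw [h3.1, h3.2]
  rfl

lemma coeff_one_mul_comm (a b : R2) : (a * b) 1 = (b * a) 1 := by
  classical
  have key := phi_mul_comm ((Finsupp.lapply (1 : Word)).comp
    (MonoidAlgebra.coeffLinearEquiv ℚ : R2 ≃ₗ[ℚ] Word →₀ ℚ).toLinearMap) ?_ a b
  · exact key
  · intro u v c d
    rw [MonoidAlgebra.single_mul_single, MonoidAlgebra.single_mul_single]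
    show (MonoidAlgebra.single (u * v) (c * d) : R2) 1 = (MonoidAlgebra.single (v * u) (d * c) : R2) 1
    rw [MonoidAlgebra.coeff_single, MonoidAlgebra.coeff_single, Finsupp.single_apply,
      Finsupp.single_apply]
    by_cases h1 : u * v = 1
    · rw [if_pos h1, if_pos (word_mul_eq_one h1), mul_comm]
    · rw [if_neg, if_neg]
      · intro hh; exact h1 (word_mul_eq_one hh)
      · intro hh; exact h1 hh

lemma psi_trIdeal (z : List (Fin 2)) (P : R2) (h : P ∈ trIdeal) : psi z P = 0 := by
  refine Submodule.span_induction ?_ ?_ ?_ ?_ h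
  · rintro c ⟨a, b, rfl⟩
    rw [psi_sub, psi_mul_comm, sub_self]
  · simp [psi]
  · intro x y _ _ hx hy; rw [psi_add, hx, hy, add_zero]
  · intro c x _ hx; rw [psi_smul, hx, mul_zero]

lemma coeff_one_trIdeal (P : R2) (h : P ∈ trIdeal) : P 1 = 0 := by
  refine Submodule.span_induction ?_ ?_ ?_ ?_ h
  · rintro c ⟨a, b, rfl⟩
    rw [MonoidAlgebra.coeff_sub, Finsupp.sub_apply, coeff_one_mul_comm, sub_self]
  · rfl
  · intro x y _ _ hx hy; rw [MonoidAlgebra.coeff_add, Finsupp.add_apply, hx, hy, add_zero]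
  · intro c x _ hx; rw [MonoidAlgebra.coeff_smul, Finsupp.smul_apply, hx, smul_zero]

lemma sum_shift (n : ℕ) (u : ℕ → ℚ) (h : u n = u 0) :
    ∑ j ∈ Finset.range n, u (j + 1) = ∑ j ∈ Finset.range n, u j := by
  have h3 := Finset.sum_range_succ' u n
  have h4 := Finset.sum_range_succ u n
  rw [h4, h] at h3
  exact add_right_cancel h3.symm

lemma psi_rotate_one (z : List (Fin 2)) (P : R2) : psi (z.rotate 1) P = psi z P := by
  unfold psi
  rw [List.length_rotate]
  calc ∑ j ∈ Finset.range z.length, P (FreeMonoid.ofList ((z.rotate 1).rotate j))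
      = ∑ j ∈ Finset.range z.length,
          (fun i => P (FreeMonoid.ofList (z.rotate i))) (j + 1) := by
        refine Finset.sum_congr rfl fun j _ => ?_
        rw [List.rotate_rotate, Nat.add_comm]
    _ = _ := sum_shift z.length (fun i => P (FreeMonoid.ofList (z.rotate i))) (by
        show P (FreeMonoid.ofList (z.rotate z.length)) = P (FreeMonoid.ofList (z.rotate 0))
        rw [List.rotate_length, List.rotate_zero])

lemma psi_rotate (z : List (Fin 2)) (m : ℕ) (P : R2) : psi (z.rotate m) P = psi z P := by
  induction m with
  | zero => rw [List.rotate_zero]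
  | succ k ih =>
    have h : z.rotate (k + 1) = (z.rotate k).rotate 1 := by
      rw [List.rotate_rotate]
    rw [h, psi_rotate_one, ih]

/-! ### Canonical rotation and the separation lemma -/

def enc (l : List (Fin 2)) : ℕ := Encodable.encode l

lemma enc_inj : Function.Injective enc := fun _ _ h => Encodable.encode_injective h

def rotSet (l : List (Fin 2)) : Finset ℕ :=
  (Finset.range (l.length + 1)).image (fun j => enc (l.rotate j))

lemma rotSet_nonempty (l : List (Fin 2)) : (rotSet l).Nonempty :=
  Finset.Nonempty.image ⟨0, Finset.mem_range.mpr (Nat.succ_pos _)⟩ _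

def encMin (l : List (Fin 2)) : ℕ := (rotSet l).min' (rotSet_nonempty l)

lemma exists_rot_encMin (l : List (Fin 2)) : ∃ j, enc (l.rotate j) = encMin l := by
  have h := (rotSet l).min'_mem (rotSet_nonempty l)
  obtain ⟨j, _, hj⟩ := Finset.mem_image.mp h
  exact ⟨j, hj⟩

def rcan (l : List (Fin 2)) : List (Fin 2) := l.rotate (Nat.find (exists_rot_encMin l))

lemma enc_rcan (l : List (Fin 2)) : enc (rcan l) = encMin l := Nat.find_spec (exists_rot_encMin l)

lemma rcan_is_rotate (l : List (Fin 2)) : ∃ j, rcan l = l.rotate j :=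
  ⟨Nat.find (exists_rot_encMin l), rfl⟩

lemma length_rcan (l : List (Fin 2)) : (rcan l).length = l.length := by
  obtain ⟨j, hj⟩ := rcan_is_rotate l
  rw [hj, List.length_rotate]

lemma rotSet_rotate (l : List (Fin 2)) (m : ℕ) : rotSet (l.rotate m) = rotSet l := by
  rcases eq_or_ne l [] with rfl | hl
  · rw [List.rotate_nil]
  have hn : 0 < l.length := List.length_pos_iff.mpr hl
  unfold rotSet
  rw [List.length_rotate]
  apply Finset.ext
  intro e
  simp only [Finset.mem_image, Finset.mem_range]
  constructor
  · rintro ⟨j, _, rfl⟩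
    refine ⟨(m + j) % l.length, by have := Nat.mod_lt (m + j) hn; omega, ?_⟩
    rw [List.rotate_mod, ← List.rotate_rotate]
  · rintro ⟨j, _, rfl⟩
    refine ⟨(j + (l.length - m % l.length)) % l.length,
      by have := Nat.mod_lt (j + (l.length - m % l.length)) hn; omega, ?_⟩
    have hrw : (l.rotate m).rotate ((j + (l.length - m % l.length)) % l.length)
        = l.rotate j := by
      rw [List.rotate_rotate, ← List.rotate_mod, Nat.add_mod_mod,
        show m + (j + (l.length - m % l.length)) = j + m + (l.length - m % l.length) from
          by omega,
        add_rot_mod l.length j m hn, List.rotate_mod]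
    rw [hrw]

lemma rcan_rotate (l : List (Fin 2)) (m : ℕ) : rcan (l.rotate m) = rcan l := by
  apply enc_inj
  rw [enc_rcan, enc_rcan]
  unfold encMin
  congr 1
  exact rotSet_rotate l m

lemma rcan_rcan (l : List (Fin 2)) : rcan (rcan l) = rcan l := by
  obtain ⟨j, hj⟩ := rcan_is_rotate l
  rw [hj, rcan_rotate]
  exact hj

/-- The canonical-rotation map on words. -/
def rcanW (w : Word) : Word := FreeMonoid.ofList (rcan (FreeMonoid.toList w))

lemma mono_rotate_mem (l : List (Fin 2)) (c : ℚ) (j : ℕ) :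
    (MonoidAlgebra.single (FreeMonoid.ofList l) c : R2)
      - MonoidAlgebra.single (FreeMonoid.ofList (l.rotate j)) c ∈ trIdeal := by
  rcases eq_or_ne l [] with rfl | hl
  · rw [List.rotate_nil, sub_self]
    exact Submodule.zero_mem _
  have hlt : j % l.length < l.length := Nat.mod_lt _ (List.length_pos_iff.mpr hl)
  have hrot : l.rotate (j % l.length) = l.drop (j % l.length) ++ l.take (j % l.length) :=
    List.rotate_eq_drop_append_take (le_of_lt hlt)
  apply Submodule.subset_span
  refine ⟨MonoidAlgebra.single (FreeMonoid.ofList (l.take (j % l.length))) c,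
          MonoidAlgebra.single (FreeMonoid.ofList (l.drop (j % l.length))) 1, ?_⟩
  rw [MonoidAlgebra.single_mul_single, MonoidAlgebra.single_mul_single, mul_one, one_mul,
    ofL_mul, ofL_mul, List.take_append_drop, ← List.rotate_mod l j, hrot]

/-- mapDomain by the canonical-rotation map, as an operation on R2. -/
def rcanMap (P : R2) : R2 := MonoidAlgebra.ofCoeff (Finsupp.mapDomain rcanW P.coeff)

lemma rcanMap_single_add (w : Word) (c : ℚ) (f : R2) :
    rcanMap (MonoidAlgebra.single w c + f)
      = MonoidAlgebra.single (rcanW w) c + rcanMap f := by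
  unfold rcanMap
  rw [MonoidAlgebra.coeff_add, Finsupp.mapDomain_add, MonoidAlgebra.coeff_single,
    Finsupp.mapDomain_single, MonoidAlgebra.ofCoeff_add, MonoidAlgebra.ofCoeff_single]

lemma single_sub_rcan_mem (w : Word) (c : ℚ) :
    (MonoidAlgebra.single w c : R2) - MonoidAlgebra.single (rcanW w) c ∈ trIdeal := by
  obtain ⟨j, hj⟩ := rcan_is_rotate (FreeMonoid.toList w)
  have h1 : w = FreeMonoid.ofList (FreeMonoid.toList w) := (FreeMonoid.ofList_toList w).symm
  have h2 : rcanW w = FreeMonoid.ofList ((FreeMonoid.toList w).rotate j) := by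
    unfold rcanW
    rw [hj]
  have h3 := mono_rotate_mem (FreeMonoid.toList w) c j
  rw [← h1, ← h2] at h3
  exact h3

lemma mapDomain_rcan_sub_mem (P : R2) : P - rcanMap P ∈ trIdeal := by
  induction P using MonoidAlgebra.induction with
  | zero =>
    have h1 : rcanMap 0 = 0 := by
      unfold rcanMap
      rw [MonoidAlgebra.coeff_zero, Finsupp.mapDomain_zero, MonoidAlgebra.ofCoeff_zero]
    rw [h1, sub_self]
    exact Submodule.zero_mem _
  | single_add w c f _ _ ih =>
    have key : (MonoidAlgebra.single w c + (id f : R2))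
        - rcanMap (MonoidAlgebra.single w c + (id f : R2)) ∈ trIdeal := by
      rw [rcanMap_single_add]
      have hre : (MonoidAlgebra.single w c + (id f : R2))
            - (MonoidAlgebra.single (rcanW w) c + rcanMap (id f : R2))
          = ((MonoidAlgebra.single w c : R2) - MonoidAlgebra.single (rcanW w) c)
              + ((id f : R2) - rcanMap (id f : R2)) := by
        abel
      rw [hre]
      exact Submodule.add_mem _ (single_sub_rcan_mem w c) ih
    exact key

lemma psi_eq_card_smul (P : R2) (z : List (Fin 2)) (hnil : z ≠ []) :
    psi z P = (((Finset.range z.length).filter (fun j => z.rotate j = z)).card : ℚ)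
      * ∑ b ∈ (Finset.range z.length).image (fun j => z.rotate j),
          P (FreeMonoid.ofList b) := by
  classical
  have hfib : ∀ j0, ((Finset.range z.length).filter (fun j => z.rotate j = z.rotate j0)).card
      = ((Finset.range z.length).filter (fun j => z.rotate j = z)).card := by
    intro j0
    have hset : (Finset.range z.length).filter (fun j => z.rotate j = z.rotate j0)
        = (Finset.range z.length).filter
            (fun j => (z.rotate j).rotate (z.length - j0 % z.length) = z) := by
      apply Finset.filter_congr
      intro j _
      constructor
      · intro h; rw [h]; exact rotate_rotate_self z hnil j0
      · intro h
        apply rotate_inj_of_len (z.length - j0 % z.length)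
          (by rw [List.length_rotate, List.length_rotate])
        rw [h, rotate_rotate_self z hnil j0]
    rw [hset, filter_card_rotate z _ (fun l => l = z)]
  unfold psi
  rw [Finset.sum_comp (fun b => P (FreeMonoid.ofList b)) (fun j => z.rotate j)]
  rw [Finset.mul_sum]
  apply Finset.sum_congr rfl
  intro b hb
  obtain ⟨j0, _, rfl⟩ := Finset.mem_image.mp hb
  rw [hfib j0, nsmul_eq_mul]

lemma sep (P : R2) (h0 : P 1 = 0) (h : ∀ z : List (Fin 2), psi z P = 0) : P ∈ trIdeal := by
  classical
  have hmain : rcanMap P = 0 := by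
    ext z
    have happ : (rcanMap P) z
        = ∑ w ∈ P.coeff.support, (if rcanW w = z then P w else 0) := by
      unfold rcanMap
      rw [MonoidAlgebra.coeff_ofCoeff, Finsupp.mapDomain, Finsupp.sum_apply, Finsupp.sum]
      exact Finset.sum_congr rfl (fun w _ => Finsupp.single_apply)
    rw [happ, MonoidAlgebra.coeff_zero, Finsupp.coe_zero, Pi.zero_apply]
    by_cases hz : rcan (FreeMonoid.toList z) = FreeMonoid.toList z
    · rcases eq_or_ne (FreeMonoid.toList z) [] with hz0 | hz0
      · -- z is the empty word
        have hz1 : z = 1 := by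
          apply FreeMonoid.toList.injective; rw [hz0]; rfl
        have hcong : ∀ w ∈ P.coeff.support, (if rcanW w = z then P w else 0)
            = (if w = z then P w else 0) := by
          intro w _
          congr 1
          simp only [eq_iff_iff]
          constructor
          · intro hw
            have hlen := congrArg List.length (congrArg FreeMonoid.toList hw)
            simp only [rcanW, FreeMonoid.toList_ofList, length_rcan, hz0] at hlen
            have : FreeMonoid.toList w = [] := List.length_eq_zero_iff.mp (by simpa using hlen)
            apply FreeMonoid.toList.injective
            rw [this, hz0]
          · intro hw
            rw [hw, hz1]
            show FreeMonoid.ofList (rcan []) = 1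
            have : rcan ([] : List (Fin 2)) = [] := by
              obtain ⟨j, hj⟩ := rcan_is_rotate ([] : List (Fin 2))
              rw [hj, List.rotate_nil]
            rw [this]; rfl
        rw [Finset.sum_congr rfl hcong, Finset.sum_ite_eq' P.coeff.support z (fun w => P w)]
        rw [hz1]
        by_cases hmem : (1 : Word) ∈ P.coeff.support
        · rw [if_pos hmem, h0]
        · rw [if_neg hmem]
      · -- z nonempty, canonical
        have hpsi := h (FreeMonoid.toList z)
        rw [psi_eq_card_smul P _ hz0] at hpsi
        have hcard : (0:ℚ) < (((Finset.range (FreeMonoid.toList z).length).filter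
            (fun j => (FreeMonoid.toList z).rotate j = FreeMonoid.toList z)).card : ℚ) := by
          have : 0 ∈ (Finset.range (FreeMonoid.toList z).length).filter
              (fun j => (FreeMonoid.toList z).rotate j = FreeMonoid.toList z) := by
            refine Finset.mem_filter.mpr ⟨Finset.mem_range.mpr ?_, List.rotate_zero _⟩
            exact List.length_pos_iff.mpr hz0
          have := Finset.card_pos.mpr ⟨0, this⟩
          exact_mod_cast this
        have hsum : ∑ b ∈ (Finset.range (FreeMonoid.toList z).length).image
            (fun j => (FreeMonoid.toList z).rotate j), P (FreeMonoid.ofList b) = 0 := by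
          rcases mul_eq_zero.mp hpsi with hc | hs
          · exact absurd hc (ne_of_gt hcard)
          · exact hs
        -- now identify the two sums
        set lz := FreeMonoid.toList z with hlz
        set img := (Finset.range lz.length).image (fun j => lz.rotate j) with himg
        have hiff : ∀ w : Word, rcanW w = z ↔ FreeMonoid.toList w ∈ img := by
          intro w
          constructor
          · intro hw
            have h1 : rcan (FreeMonoid.toList w) = lz := by
              have := congrArg FreeMonoid.toList hw
              simpa [rcanW] using this
            obtain ⟨j, hj⟩ := rcan_is_rotate (FreeMonoid.toList w)
            have hwnil : FreeMonoid.toList w ≠ [] := by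
              intro hww
              rw [hww] at hj h1
              rw [List.rotate_nil] at hj
              exact hz0 (by rw [← h1, hj])
            have h2 : FreeMonoid.toList w = lz.rotate ((FreeMonoid.toList w).length
                - j % (FreeMonoid.toList w).length) := by
              rw [← h1, hj, rotate_rotate_self _ hwnil]
            rw [h2]
            apply Finset.mem_image.mpr
            have hlen : (FreeMonoid.toList w).length = lz.length := by
              rw [← h1]; exact (length_rcan _).symm
            refine ⟨(((FreeMonoid.toList w).length - j % (FreeMonoid.toList w).length)
                % lz.length), Finset.mem_range.mpr (Nat.mod_lt _ (List.length_pos_iff.mpr hz0)), ?_⟩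
            rw [List.rotate_mod]
          · intro hw
            obtain ⟨j, _, hj⟩ := Finset.mem_image.mp hw
            have : rcan (FreeMonoid.toList w) = lz := by
              rw [← hj, rcan_rotate, hz]
            show FreeMonoid.ofList (rcan (FreeMonoid.toList w)) = z
            rw [this, hlz, FreeMonoid.ofList_toList]
        have hstep1 : ∑ w ∈ P.coeff.support, (if rcanW w = z then P w else 0)
            = ∑ w ∈ P.coeff.support.filter (fun w => FreeMonoid.toList w ∈ img), P w := by
          rw [Finset.sum_filter]
          apply Finset.sum_congr rfl
          intro w _
          congr 1
          simp only [eq_iff_iff]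
          exact hiff w
        have hstep2 : ∑ b ∈ img, P (FreeMonoid.ofList b)
            = ∑ b ∈ img.filter (fun b => FreeMonoid.ofList b ∈ P.coeff.support),
                P (FreeMonoid.ofList b) := by
          symm
          apply Finset.sum_subset (Finset.filter_subset _ _)
          intro b _ hb
          rw [Finset.mem_filter] at hb
          push_neg at hb
          by_cases hbi : b ∈ img
          · exact Finsupp.notMem_support_iff.mp (hb hbi)
          · exact absurd ‹b ∈ img› hbi
        have hstep3 : ∑ w ∈ P.coeff.support.filter (fun w => FreeMonoid.toList w ∈ img), P w
            = ∑ b ∈ img.filter (fun b => FreeMonoid.ofList b ∈ P.coeff.support),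
                P (FreeMonoid.ofList b) := by
          apply Finset.sum_bij (fun w _ => FreeMonoid.toList w)
          · intro w hw
            rw [Finset.mem_filter] at hw ⊢
            refine ⟨hw.2, ?_⟩
            rw [FreeMonoid.ofList_toList]
            exact hw.1
          · intro w1 h1 w2 h2 he
            exact FreeMonoid.toList.injective he
          · intro b hb
            rw [Finset.mem_filter] at hb
            refine ⟨FreeMonoid.ofList b, ?_, ?_⟩
            · rw [Finset.mem_filter]
              exact ⟨hb.2, by rw [FreeMonoid.toList_ofList]; exact hb.1⟩
            · rw [FreeMonoid.toList_ofList]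
          · intro w hw
            rw [FreeMonoid.ofList_toList]
        rw [hstep1, hstep3, ← hstep2, hsum]
    · -- z not canonical: empty sum
      apply Finset.sum_eq_zero
      intro w _
      rw [if_neg]
      intro hw
      apply hz
      have h1 : rcan (FreeMonoid.toList w) = FreeMonoid.toList z := by
        have := congrArg FreeMonoid.toList hw
        simpa [rcanW] using this
      rw [← h1, rcan_rcan, h1]
  have := mapDomain_rcan_sub_mem P
  rw [hmain, sub_zero] at this
  exact this

/-! ### ψ vanishes on Lie elements -/

lemma psi_lie (P : R2) (hP : P ∈ LieP) (z : List (Fin 2)) (hz : 2 ≤ z.length) :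
    psi z P = 0 := by
  let S : LieSubalgebra ℚ R2 :=
    { carrier := {Q : R2 | ∀ l : List (Fin 2), 2 ≤ l.length → psi l Q = 0}
      add_mem' := by
        intro a b ha hb l hl
        rw [psi_add, ha l hl, hb l hl, add_zero]
      zero_mem' := by
        intro l hl
        simp [psi]
      smul_mem' := by
        intro c q hq l hl
        rw [psi_smul, hq l hl, mul_zero]
      lie_mem' := by
        intro a b _ _ l _
        rw [Ring.lie_def, psi_sub, psi_mul_comm, sub_self] }
  have hletter : ∀ (c : Fin 2) (l : List (Fin 2)), 2 ≤ l.length →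
      psi l (MonoidAlgebra.single (FreeMonoid.ofList [c]) (1:ℚ)) = 0 := by
    intro c l hl
    rw [psi_single]
    have hempty : Finset.filter
        (fun j => l.rotate j = FreeMonoid.toList (FreeMonoid.ofList [c]))
        (Finset.range l.length) = ∅ := by
      rw [Finset.filter_eq_empty_iff]
      intro j _
      intro hc
      have hlen := congrArg List.length hc
      rw [List.length_rotate, FreeMonoid.toList_ofList] at hlen
      simp only [List.length_cons, List.length_nil] at hlen
      omega
    rw [hempty, Finset.card_empty, Nat.cast_zero, mul_zero]
  have hXS : X ∈ S := by
    intro l hl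
    rw [X_def]
    exact hletter 0 l hl
  have hYS : Y ∈ S := by
    intro l hl
    rw [Y_def]
    exact hletter 1 l hl
  have hle : LieP ≤ S := by
    rw [LieP, LieSubalgebra.lieSpan_le]
    intro q hq
    rcases hq with rfl | hq
    · exact hXS
    · rcases hq with rfl
      exact hYS
  exact hle hP z hz

/-! ### push combinatorics -/

lemma fin2_eq_zero : ∀ x : Fin 2, x ≠ 1 → x = 0 := by decide

lemma takeWhile_dropWhile_split {p : Fin 2 → Bool} (xs ys : List (Fin 2)) (a : Fin 2)
    (hxs : ∀ x ∈ xs, p x = true) (ha : p a = false) :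
    (xs ++ a :: ys).takeWhile p = xs ∧ (xs ++ a :: ys).dropWhile p = a :: ys := by
  induction xs with
  | nil =>
    constructor
    · rw [List.nil_append, List.takeWhile_cons_of_neg (by rw [ha]; exact Bool.false_ne_true)]
    · rw [List.nil_append, List.dropWhile_cons_of_neg (by rw [ha]; exact Bool.false_ne_true)]
  | cons x t ih =>
    have hx : p x = true := hxs x List.mem_cons_self
    have ih' := ih (fun y hy => hxs y (List.mem_cons_of_mem x hy))
    constructor
    · rw [List.cons_append, List.takeWhile_cons_of_pos hx, ih'.1]
    · rw [List.cons_append, List.dropWhile_cons_of_pos hx, ih'.2]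

lemma pushW_split (b c : List (Fin 2)) (hc : ∀ x ∈ c, x = 0) :
    pushW (FreeMonoid.ofList (b ++ 1 :: c)) = FreeMonoid.ofList (c ++ 1 :: b) := by
  have hrev : (FreeMonoid.toList (FreeMonoid.ofList (b ++ 1 :: c))).reverse
      = c.reverse ++ 1 :: b.reverse := by
    rw [FreeMonoid.toList_ofList, List.reverse_append, List.reverse_cons, List.append_assoc,
      List.singleton_append]
  have hsplit := takeWhile_dropWhile_split (p := fun x => decide (x = 0))
    c.reverse b.reverse 1
    (fun x hx => by
      have := hc x (List.mem_reverse.mp hx)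
      rw [this]; decide)
    (by decide)
  simp only [pushW, hrev, hsplit.1, hsplit.2, List.reverse_reverse]

lemma pushL_split (b c : List (Fin 2)) (hc : c.count 1 = 0) :
    pushL (b ++ 1 :: c) = c ++ 1 :: b := by
  unfold pushL
  rw [pushW_split b c (fun x hx => fin2_eq_zero x (fun h1 => by
    rw [h1] at hx
    exact (List.count_eq_zero.mp hc) hx)), FreeMonoid.toList_ofList]

lemma pushW_iterate (k : ℕ) (v : List (Fin 2)) :
    pushW^[k] (FreeMonoid.ofList v) = FreeMonoid.ofList (pushL^[k] v) := by
  induction k generalizing v with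
  | zero => rfl
  | succ k ih =>
    rw [Function.iterate_succ_apply, Function.iterate_succ_apply]
    rw [show pushW (FreeMonoid.ofList v) = FreeMonoid.ofList (pushL v) from
      (FreeMonoid.ofList_toList _).symm, ih]

lemma last_split {α : Type*} (l : List α) (a : α) (h : a ∈ l) :
    ∃ s t, l = s ++ a :: t ∧ a ∉ t := by
  classical
  induction l with
  | nil => cases h
  | cons b tl ih =>
    by_cases hmem : a ∈ tl
    · obtain ⟨s, t, rfl, hnt⟩ := ih hmem
      exact ⟨b :: s, t, rfl, hnt⟩
    · have hab : a = b := by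
        rcases List.mem_cons.mp h with h' | h'
        · exact h'
        · exact absurd h' hmem
      exact ⟨[], tl, by rw [hab, List.nil_append], hmem⟩

lemma pushL_iter_split : ∀ (k : ℕ) (c₁ c₂ : List (Fin 2)), c₂.count 1 = k →
    pushL^[k+1] (c₁ ++ 1 :: c₂) = c₂ ++ 1 :: c₁ := by
  intro k
  induction k with
  | zero =>
    intro c₁ c₂ h
    rw [Function.iterate_one]
    exact pushL_split c₁ c₂ h
  | succ k ih =>
    intro c₁ c₂ h
    have h1 : (1 : Fin 2) ∈ c₂ := by
      rw [← List.count_pos_iff]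
      omega
    obtain ⟨d, e, hde, he⟩ := last_split c₂ 1 h1
    have hce : e.count 1 = 0 := List.count_eq_zero.mpr he
    have hcd : d.count 1 = k := by
      rw [hde, List.count_append, List.count_cons] at h
      simp only [hce, beq_self_eq_true, if_true] at h
      omega
    rw [Function.iterate_succ_apply, hde,
      show c₁ ++ 1 :: (d ++ 1 :: e) = (c₁ ++ 1 :: d) ++ 1 :: e from by simp,
      pushL_split _ _ hce,
      show e ++ 1 :: (c₁ ++ 1 :: d) = (e ++ 1 :: c₁) ++ 1 :: d from by simp,
      ih (e ++ 1 :: c₁) d hcd,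
      show d ++ 1 :: (e ++ 1 :: c₁) = (d ++ 1 :: e) ++ 1 :: c₁ from by simp]

lemma count_drop_sum (l : List (Fin 2)) (g : ℕ → ℚ) :
    ∑ i ∈ (Finset.range l.length).filter (fun i => l.getD i 0 = 1),
        g ((l.drop (i+1)).count 1)
      = ∑ k ∈ Finset.range (l.count 1), g k := by
  induction l with
  | nil => simp
  | cons a t ih =>
    rw [Finset.sum_filter, List.length_cons, Finset.sum_range_succ'] at *
    have hterm : ∀ i : ℕ,
        (if (a :: t).getD (i+1) 0 = 1 then g (((a :: t).drop (i+1+1)).count 1) else 0)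
        = (if t.getD i 0 = 1 then g ((t.drop (i+1)).count 1) else 0) := fun i => rfl
    rw [Finset.sum_congr rfl (fun i _ => hterm i), ih]
    by_cases ha : a = (1 : Fin 2)
    · have hc : (a :: t).count 1 = t.count 1 + 1 := by
        rw [List.count_cons, ha]; simp
      rw [hc, Finset.sum_range_succ]
      have h0 : (if (a :: t).getD 0 0 = 1 then g (((a :: t).drop 1).count 1) else 0)
          = g (t.count 1) := by
        rw [List.getD_cons_zero, if_pos ha, List.drop_one, List.tail_cons]
      rw [h0]
    · have hc : (a :: t).count 1 = t.count 1 := by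
        rw [List.count_cons]
        simp only [beq_iff_eq, ha, if_false, add_zero]
      have h0 : (if (a :: t).getD 0 0 = 1 then g (((a :: t).drop 1).count 1) else 0) = 0 := by
        rw [List.getD_cons_zero, if_neg ha]
      rw [hc, h0, add_zero]

lemma rotate_concat_form (v : List (Fin 2)) (a : Fin 2) (i : ℕ) (hi : i < v.length) :
    (v ++ [a]).rotate (i+1) = (v.drop (i+1) ++ [a]) ++ (v.take i ++ [v[i]]) := by
  have h1 : i + 1 ≤ (v ++ [a]).length := by simp; omega
  rw [List.rotate_eq_drop_append_take h1]
  have h2 : (v ++ [a]).drop (i+1) = v.drop (i+1) ++ [a] := by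
    rw [List.drop_append]
    congr 1
    rw [show i + 1 - v.length = 0 from by omega, List.drop_zero]
  have h3 : (v ++ [a]).take (i+1) = v.take i ++ [v[i]] := by
    rw [List.take_append,
      show i + 1 - v.length = 0 from by omega, List.take_zero, List.append_nil,
      List.take_succ, List.getElem?_eq_getElem hi]
    rfl
  rw [h2, h3]

lemma push_rotate_sum (v : List (Fin 2)) (g : Word → ℚ) :
    ∑ j ∈ Finset.range (v.length + 1),
        (if ((v ++ [1]).rotate j).getLast? = some 1
         then g (FreeMonoid.ofList ((v ++ [1]).rotate j)) else 0)
      = ∑ k ∈ Finset.range (v.count 1 + 1),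
          g (FreeMonoid.ofList (pushL^[k] v ++ [1])) := by
  rw [Finset.sum_range_succ' _ v.length, Finset.sum_range_succ' _ (v.count 1)]
  congr 1
  · -- main part : i ranges over positions of v
    have hterm : ∀ i ∈ Finset.range v.length,
        (if ((v ++ [1]).rotate (i+1)).getLast? = some 1
         then g (FreeMonoid.ofList ((v ++ [1]).rotate (i+1))) else 0)
        = (if v.getD i 0 = 1
           then (fun k => g (FreeMonoid.ofList (pushL^[k+1] v ++ [1]))) ((v.drop (i+1)).count 1)
           else 0) := by
      intro i hi
      have hi' : i < v.length := Finset.mem_range.mp hi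
      rw [rotate_concat_form v 1 i hi']
      have hlast : ((v.drop (i+1) ++ [1]) ++ (v.take i ++ [v[i]])).getLast? = some v[i] := by
        rw [show (v.drop (i+1) ++ [1]) ++ (v.take i ++ [v[i]])
            = ((v.drop (i+1) ++ [1]) ++ v.take i) ++ [v[i]] from by simp,
          List.getLast?_concat]
      rw [hlast, List.getD_eq_getElem v 0 hi']
      by_cases hv : v[i] = (1 : Fin 2)
      · rw [if_pos (by rw [hv]), if_pos hv]
        show g (FreeMonoid.ofList ((v.drop (i+1) ++ [1]) ++ (v.take i ++ [v[i]])))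
            = g (FreeMonoid.ofList (pushL^[(v.drop (i+1)).count 1 + 1] v ++ [1]))
        have hsplitv : v = v.take i ++ 1 :: v.drop (i+1) := by
          conv_lhs => rw [← List.take_append_drop i v]
          rw [List.drop_eq_getElem_cons hi', hv]
        have hpush : pushL^[(v.drop (i+1)).count 1 + 1] v
            = v.drop (i+1) ++ 1 :: v.take i := by
          have hps := pushL_iter_split ((v.drop (i+1)).count 1) (v.take i) (v.drop (i+1)) rfl
          rw [← hsplitv] at hps
          exact hps
        rw [hpush]
        apply congrArg
        apply congrArg
        rw [hv]
        simp
      · rw [if_neg (by rw [Option.some_inj]; exact hv), if_neg hv]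
    rw [Finset.sum_congr rfl hterm, ← Finset.sum_filter,
      count_drop_sum v (fun k => g (FreeMonoid.ofList (pushL^[k+1] v ++ [1])))]
  · -- the j = 0 / k = 0 term
    rw [List.rotate_zero, List.getLast?_concat, if_pos rfl, Function.iterate_zero, id]

/-! ### coefficients of the reference polynomials -/

lemma fin2_or (c : Fin 2) : c = 0 ∨ c = 1 := by
  fin_cases c
  · exact Or.inl rfl
  · exact Or.inr rfl

lemma coeff_pow_XY : ∀ (n : ℕ) (l : List (Fin 2)),
    ((X + Y)^n : R2) (FreeMonoid.ofList l) = if l.length = n then 1 else 0 := by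
  intro n
  induction n with
  | zero =>
    intro l
    rcases eq_or_ne l [] with rfl | hl
    · rw [show FreeMonoid.ofList ([] : List (Fin 2)) = 1 from rfl, pow_zero,
        MonoidAlgebra.one_def, MonoidAlgebra.coeff_single, Finsupp.single_eq_same]
      simp
    · rw [pow_zero, MonoidAlgebra.one_def, MonoidAlgebra.coeff_single,
        Finsupp.single_eq_of_ne' (fun h1 => hl (by
          have h2 := congrArg FreeMonoid.toList h1
          rw [FreeMonoid.toList_ofList] at h2
          exact h2.symm)),
        if_neg (by simpa using hl)]
  | succ n ih =>
    intro l
    rw [pow_succ, mul_add, MonoidAlgebra.coeff_add, Finsupp.add_apply]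
    rcases List.eq_nil_or_concat l with rfl | ⟨t, c, rfl⟩
    · rw [X_def, Y_def, coeff_mul_single_right_ne _ _ _ (by simp),
        coeff_mul_single_right_ne _ _ _ (by simp)]
      simp
    · simp only [List.concat_eq_append]
      have hlen : (t ++ [c]).length = t.length + 1 := by simp
      rcases fin2_or c with rfl | rfl
      · rw [X_def, Y_def, coeff_mul_single_right,
          coeff_mul_single_right_ne _ _ _ (by rw [List.getLast?_concat]; decide), add_zero, ← X_def, ← Y_def, ih]
        rw [hlen]
        congr 1
        simp only [eq_iff_iff]
        omega
      · rw [X_def, Y_def, coeff_mul_single_right,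
          coeff_mul_single_right_ne _ _ _ (by rw [List.getLast?_concat]; decide), zero_add, ← X_def, ← Y_def, ih]
        rw [hlen]
        congr 1
        simp only [eq_iff_iff]
        omega

lemma pow_single_letter (c : Fin 2) (n : ℕ) :
    (MonoidAlgebra.single (FreeMonoid.ofList [c]) (1:ℚ))^n
      = MonoidAlgebra.single (FreeMonoid.ofList (List.replicate n c)) 1 := by
  induction n with
  | zero =>
    rw [pow_zero, MonoidAlgebra.one_def]
    rfl
  | succ n ih =>
    rw [pow_succ, ih, MonoidAlgebra.single_mul_single, one_mul, ofL_mul,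
      ← List.replicate_succ']

lemma Xpow_def (n : ℕ) : (X^n : R2)
    = MonoidAlgebra.single (FreeMonoid.ofList (List.replicate n 0)) 1 := by
  rw [X_def, pow_single_letter]

lemma Ypow_def (n : ℕ) : (Y^n : R2)
    = MonoidAlgebra.single (FreeMonoid.ofList (List.replicate n 1)) 1 := by
  rw [Y_def, pow_single_letter]

lemma psi_XYpow (z : List (Fin 2)) (n : ℕ) (hz : z.length = n) :
    psi z ((X + Y)^n) = n := by
  unfold psi
  have hterm : ∀ j ∈ Finset.range z.length,
      ((X + Y)^n : R2) (FreeMonoid.ofList (z.rotate j)) = 1 := by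
    intro j _
    rw [coeff_pow_XY, if_pos (by rw [List.length_rotate, hz])]
  rw [Finset.sum_congr rfl hterm, Finset.sum_const, Finset.card_range, hz, nsmul_eq_mul,
    mul_one]

lemma psi_single_replicate_ne (z : List (Fin 2)) (c d : Fin 2) (n : ℕ)
    (h : z.count d ≠ (List.replicate n c).count d) :
    psi z (MonoidAlgebra.single (FreeMonoid.ofList (List.replicate n c)) 1) = 0 := by
  rw [psi_single]
  have hempty : (Finset.range z.length).filter
      (fun j => z.rotate j = FreeMonoid.toList (FreeMonoid.ofList (List.replicate n c))) = ∅ := by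
    rw [Finset.filter_eq_empty_iff]
    intro j _
    rw [FreeMonoid.toList_ofList]
    intro hrot
    apply h
    rw [← hrot]
    exact ((List.rotate_perm z j).count_eq d).symm
  rw [hempty, Finset.card_empty, Nat.cast_zero, mul_zero]

lemma psi_single_replicate_self (c : Fin 2) (n : ℕ) :
    psi (List.replicate n c)
        (MonoidAlgebra.single (FreeMonoid.ofList (List.replicate n c)) 1) = n := by
  rw [psi_single]
  have hfull : (Finset.range (List.replicate n c).length).filter
      (fun j => (List.replicate n c).rotate j
        = FreeMonoid.toList (FreeMonoid.ofList (List.replicate n c)))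
      = Finset.range (List.replicate n c).length := by
    rw [Finset.filter_eq_self]
    intro j _
    rw [FreeMonoid.toList_ofList, List.rotate_replicate]
  rw [hfull, Finset.card_range, List.length_replicate, one_mul]

lemma psi_replicate (T : R2) (m : ℕ) (c : Fin 2) :
    psi (List.replicate m c) T = m * T (FreeMonoid.ofList (List.replicate m c)) := by
  unfold psi
  have hterm : ∀ j ∈ Finset.range (List.replicate m c).length,
      T (FreeMonoid.ofList ((List.replicate m c).rotate j))
        = T (FreeMonoid.ofList (List.replicate m c)) := by
    intro j _
    rw [List.rotate_replicate]
  rw [Finset.sum_congr rfl hterm, Finset.sum_const, List.length_replicate, Finset.card_range,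
    nsmul_eq_mul]

lemma list_range_map_sum (m : ℕ) (h : ℕ → ℚ) :
    ((List.range m).map h).sum = ∑ k ∈ Finset.range m, h k := by
  induction m with
  | zero => simp
  | succ m ih =>
    rw [List.range_succ, List.map_append, List.sum_append, Finset.sum_range_succ, ih]
    simp

/-! ### the central identity -/

lemma main1 (F G P : R2)
    (hP1 : ∀ t : List (Fin 2),
      P (FreeMonoid.ofList (t ++ [1])) = F (FreeMonoid.ofList (t ++ [1])))
    (hP0 : ∀ t : List (Fin 2),
      P (FreeMonoid.ofList (t ++ [0])) = G (FreeMonoid.ofList (t ++ [0])))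
    (hRead1 : ∀ p : List (Fin 2),
      F (FreeMonoid.ofList (1 :: p)) = F (FreeMonoid.ofList (p ++ [1])))
    (hRead0 : ∀ p : List (Fin 2),
      F (FreeMonoid.ofList (0 :: p)) = G (FreeMonoid.ofList (p ++ [1])))
    (v : List (Fin 2)) :
    psi (v ++ [1]) P
      = (∑ k ∈ Finset.range (v.count 1 + 1),
          (F (FreeMonoid.ofList (1 :: pushL^[k] v))
            - F (FreeMonoid.ofList (0 :: pushL^[k] v))))
        + psi (v ++ [1]) G := by
  have hsum : ∑ k ∈ Finset.range (v.count 1 + 1),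
      (F (FreeMonoid.ofList (1 :: pushL^[k] v)) - F (FreeMonoid.ofList (0 :: pushL^[k] v)))
      = ∑ k ∈ Finset.range (v.count 1 + 1),
          (fun w : Word => F w - G w) (FreeMonoid.ofList (pushL^[k] v ++ [1])) := by
    apply Finset.sum_congr rfl
    intro k _
    show _ = F (FreeMonoid.ofList (pushL^[k] v ++ [1])) - G (FreeMonoid.ofList (pushL^[k] v ++ [1]))
    rw [hRead1, hRead0]
  rw [hsum, ← push_rotate_sum v (fun w : Word => F w - G w)]
  unfold psi
  rw [show (v ++ [1] : List (Fin 2)).length = v.length + 1 from by simp]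
  rw [← Finset.sum_add_distrib]
  apply Finset.sum_congr rfl
  intro j _
  have hne : (v ++ [1] : List (Fin 2)).rotate j ≠ [] := by
    intro hc
    have := congrArg List.length hc
    simp at this
  rcases List.eq_nil_or_concat ((v ++ [1] : List (Fin 2)).rotate j) with hcon | ⟨t, c, hcon⟩
  · exact absurd hcon hne
  · rw [List.concat_eq_append] at hcon
    rw [hcon]
    rcases fin2_or c with rfl | rfl
    · rw [hP0, if_neg (by rw [List.getLast?_concat]; decide), zero_add]
    · rw [hP1, if_pos (by rw [List.getLast?_concat])]
      show F _ = (F (FreeMonoid.ofList (t ++ [1])) - G (FreeMonoid.ofList (t ++ [1]))) + G _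
      ring
/-- let n ≥ 3 and F,G ∈ Lie_n[x,y] with [x,G] + [y,F] = 0; write
    F = F_x·x + F_y·y = x·F^x + y·F^y and G = G_x·x + G_y·y.  Then for A ∈ ℚ,
    tr(F_y·y + G_x·x) = A·tr((x+y)^n − x^n − y^n) holds in TR iff F^y − F^x is
    push-constant for the constant n·A. -/
theorem stmt10 (n : ℕ) (hn : 3 ≤ n) (F G : R2)
    (hF : InLieN n F) (hG : InLieN n G)
    (hspec : (X * G - G * X) + (Y * F - F * Y) = 0)
    (Fx Fy FX FY Gx Gy : R2)
    (hFdec : F = Fx * X + Fy * Y) (hFdec' : F = X * FX + Y * FY)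
    (hGdec : G = Gx * X + Gy * Y)
    (A : ℚ) :
    trQ (Fy * Y + Gx * X) = A • trQ ((X + Y)^n - X^n - Y^n) ↔
      PushConst (n - 1) (FY - FX) ((n : ℚ) * A) := by
  classical
  have hn1 : n - 1 + 1 = n := by omega
  set Pp : R2 := Fy * Y + Gx * X with hPpdef
  set Qp : R2 := (X + Y)^n - X^n - Y^n with hQpdef
  -- ### the readings of H = xG + yF = Gx + Fy
  have hH : X * G + Y * F = G * X + F * Y := by
    have h2 : X * G + Y * F - (G * X + F * Y) = (X * G - G * X) + (Y * F - F * Y) := by abel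
    rw [hspec] at h2
    exact sub_eq_zero.mp h2
  have hHl1 : ∀ u : List (Fin 2), (X * G + Y * F) (FreeMonoid.ofList (1 :: u))
      = F (FreeMonoid.ofList u) := by
    intro u
    rw [MonoidAlgebra.coeff_add, Finsupp.add_apply, X_def, Y_def,
      coeff_single_mul_left_ne _ _ _ (by rw [List.head?_cons]; decide),
      coeff_single_mul_left, zero_add]
  have hHl0 : ∀ u : List (Fin 2), (X * G + Y * F) (FreeMonoid.ofList (0 :: u))
      = G (FreeMonoid.ofList u) := by
    intro u
    rw [MonoidAlgebra.coeff_add, Finsupp.add_apply, X_def, Y_def,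
      coeff_single_mul_left,
      coeff_single_mul_left_ne _ _ _ (by rw [List.head?_cons]; decide), add_zero]
  have hHr1 : ∀ u : List (Fin 2), (X * G + Y * F) (FreeMonoid.ofList (u ++ [1]))
      = F (FreeMonoid.ofList u) := by
    intro u
    rw [hH, MonoidAlgebra.coeff_add, Finsupp.add_apply, X_def, Y_def,
      coeff_mul_single_right_ne _ _ _ (by rw [List.getLast?_concat]; decide),
      coeff_mul_single_right, zero_add]
  have hHr0 : ∀ u : List (Fin 2), (X * G + Y * F) (FreeMonoid.ofList (u ++ [0]))
      = G (FreeMonoid.ofList u) := by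
    intro u
    rw [hH, MonoidAlgebra.coeff_add, Finsupp.add_apply, X_def, Y_def,
      coeff_mul_single_right,
      coeff_mul_single_right_ne _ _ _ (by rw [List.getLast?_concat]; decide), add_zero]
  have hRead1 : ∀ p : List (Fin 2),
      F (FreeMonoid.ofList (1 :: p)) = F (FreeMonoid.ofList (p ++ [1])) := by
    intro p
    calc F (FreeMonoid.ofList (1 :: p))
        = (X * G + Y * F) (FreeMonoid.ofList ((1 :: p) ++ [1])) := (hHr1 (1 :: p)).symm
      _ = (X * G + Y * F) (FreeMonoid.ofList (1 :: (p ++ [1]))) := by rw [List.cons_append]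
      _ = F (FreeMonoid.ofList (p ++ [1])) := hHl1 _
  have hRead0 : ∀ p : List (Fin 2),
      F (FreeMonoid.ofList (0 :: p)) = G (FreeMonoid.ofList (p ++ [1])) := by
    intro p
    calc F (FreeMonoid.ofList (0 :: p))
        = (X * G + Y * F) (FreeMonoid.ofList ((0 :: p) ++ [1])) := (hHr1 (0 :: p)).symm
      _ = (X * G + Y * F) (FreeMonoid.ofList (0 :: (p ++ [1]))) := by rw [List.cons_append]
      _ = G (FreeMonoid.ofList (p ++ [1])) := hHl0 _
  -- ### decomposition readings
  have hP1 : ∀ t : List (Fin 2),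
      Pp (FreeMonoid.ofList (t ++ [1])) = F (FreeMonoid.ofList (t ++ [1])) := by
    intro t
    have e1 : Pp (FreeMonoid.ofList (t ++ [1])) = Fy (FreeMonoid.ofList t) := by
      rw [hPpdef, MonoidAlgebra.coeff_add, Finsupp.add_apply, X_def, Y_def, coeff_mul_single_right,
        coeff_mul_single_right_ne _ _ _ (by rw [List.getLast?_concat]; decide), add_zero]
    have e2 : F (FreeMonoid.ofList (t ++ [1])) = Fy (FreeMonoid.ofList t) := by
      rw [hFdec, MonoidAlgebra.coeff_add, Finsupp.add_apply, X_def, Y_def, coeff_mul_single_right,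
        coeff_mul_single_right_ne _ _ _ (by rw [List.getLast?_concat]; decide), zero_add]
    rw [e1, e2]
  have hP0 : ∀ t : List (Fin 2),
      Pp (FreeMonoid.ofList (t ++ [0])) = G (FreeMonoid.ofList (t ++ [0])) := by
    intro t
    have e1 : Pp (FreeMonoid.ofList (t ++ [0])) = Gx (FreeMonoid.ofList t) := by
      rw [hPpdef, MonoidAlgebra.coeff_add, Finsupp.add_apply, X_def, Y_def, coeff_mul_single_right,
        coeff_mul_single_right_ne _ _ _ (by rw [List.getLast?_concat]; decide), zero_add]
    have e2 : G (FreeMonoid.ofList (t ++ [0])) = Gx (FreeMonoid.ofList t) := by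
      rw [hGdec, MonoidAlgebra.coeff_add, Finsupp.add_apply, X_def, Y_def, coeff_mul_single_right,
        coeff_mul_single_right_ne _ _ _ (by rw [List.getLast?_concat]; decide), add_zero]
    rw [e1, e2]
  have hfco : ∀ p : List (Fin 2), (FY - FX : R2) (FreeMonoid.ofList p)
      = F (FreeMonoid.ofList (1 :: p)) - F (FreeMonoid.ofList (0 :: p)) := by
    intro p
    have e1 : F (FreeMonoid.ofList (1 :: p)) = FY (FreeMonoid.ofList p) := by
      rw [hFdec', MonoidAlgebra.coeff_add, Finsupp.add_apply, X_def, Y_def,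
        coeff_single_mul_left_ne _ _ _ (by rw [List.head?_cons]; decide),
        coeff_single_mul_left, zero_add]
    have e2 : F (FreeMonoid.ofList (0 :: p)) = FX (FreeMonoid.ofList p) := by
      rw [hFdec', MonoidAlgebra.coeff_add, Finsupp.add_apply, X_def, Y_def, coeff_single_mul_left,
        coeff_single_mul_left_ne _ _ _ (by rw [List.head?_cons]; decide), add_zero]
    rw [MonoidAlgebra.coeff_sub, Finsupp.sub_apply, e1, e2]
  -- ### homogeneity
  have hFlen : ∀ l : List (Fin 2), l.length ≠ n → F (FreeMonoid.ofList l) = 0 := by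
    intro l hl
    by_contra hne
    have hmem : FreeMonoid.ofList l ∈ F.coeff.support := Finsupp.mem_support_iff.mpr hne
    have h3 := hF.2 _ hmem
    simp only [wlen, FreeMonoid.toList_ofList] at h3
    exact hl h3
  have hGlen : ∀ l : List (Fin 2), l.length ≠ n → G (FreeMonoid.ofList l) = 0 := by
    intro l hl
    by_contra hne
    have hmem : FreeMonoid.ofList l ∈ G.coeff.support := Finsupp.mem_support_iff.mpr hne
    have h3 := hG.2 _ hmem
    simp only [wlen, FreeMonoid.toList_ofList] at h3
    exact hl h3
  have hpsiG : ∀ l : List (Fin 2), 2 ≤ l.length → psi l G = 0 := psi_lie G hG.1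
  have hpsiF : ∀ l : List (Fin 2), 2 ≤ l.length → psi l F = 0 := psi_lie F hF.1
  have hncast : (n : ℚ) ≠ 0 := Nat.cast_ne_zero.mpr (by omega)
  -- ### corner coefficients
  have hF1n : F (FreeMonoid.ofList (List.replicate n 1)) = 0 := by
    have h1 := hpsiF (List.replicate n 1) (by rw [List.length_replicate]; omega)
    rw [psi_replicate] at h1
    rcases mul_eq_zero.mp h1 with h | h
    · exact absurd h hncast
    · exact h
  have hG1n : G (FreeMonoid.ofList (List.replicate n 1)) = 0 := by
    have h1 := hpsiG (List.replicate n 1) (by rw [List.length_replicate]; omega)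
    rw [psi_replicate] at h1
    rcases mul_eq_zero.mp h1 with h | h
    · exact absurd h hncast
    · exact h
  have hG0n : G (FreeMonoid.ofList (List.replicate n 0)) = 0 := by
    have h1 := hpsiG (List.replicate n 0) (by rw [List.length_replicate]; omega)
    rw [psi_replicate] at h1
    rcases mul_eq_zero.mp h1 with h | h
    · exact absurd h hncast
    · exact h
  -- ### the Q coefficients
  have hQco : ∀ l : List (Fin 2), Qp (FreeMonoid.ofList l)
      = (if l.length = n then (1:ℚ) else 0)
        - (if l = List.replicate n 0 then 1 else 0)
        - (if l = List.replicate n 1 then 1 else 0) := by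
    intro l
    rw [hQpdef, MonoidAlgebra.coeff_sub, Finsupp.sub_apply, MonoidAlgebra.coeff_sub, Finsupp.sub_apply, coeff_pow_XY, Xpow_def, Ypow_def,
      MonoidAlgebra.coeff_single, Finsupp.single_apply, MonoidAlgebra.coeff_single,
      Finsupp.single_apply]
    have e0 : (if FreeMonoid.ofList (List.replicate n 0) = FreeMonoid.ofList l then (1:ℚ) else 0)
        = (if l = List.replicate n 0 then 1 else 0) := by
      by_cases h : l = List.replicate n 0
      · rw [if_pos (by rw [h]), if_pos h]
      · rw [if_neg (fun hc => h (by
            have h2 := congrArg FreeMonoid.toList hc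
            simpa using h2.symm)), if_neg h]
    have e1 : (if FreeMonoid.ofList (List.replicate n 1) = FreeMonoid.ofList l then (1:ℚ) else 0)
        = (if l = List.replicate n 1 then 1 else 0) := by
      by_cases h : l = List.replicate n 1
      · rw [if_pos (by rw [h]), if_pos h]
      · rw [if_neg (fun hc => h (by
            have h2 := congrArg FreeMonoid.toList hc
            simpa using h2.symm)), if_neg h]
    rw [e0, e1]
  have hQlen : ∀ l : List (Fin 2), l.length ≠ n → Qp (FreeMonoid.ofList l) = 0 := by
    intro l hl
    rw [hQco, if_neg hl,
      if_neg (fun hc => hl (by rw [hc, List.length_replicate])),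
      if_neg (fun hc => hl (by rw [hc, List.length_replicate]))]
    ring
  have hPlen : ∀ l : List (Fin 2), l.length ≠ n → Pp (FreeMonoid.ofList l) = 0 := by
    intro l hl
    rcases List.eq_nil_or_concat l with rfl | ⟨t, c, rfl⟩
    · rw [hPpdef, MonoidAlgebra.coeff_add, Finsupp.add_apply, X_def, Y_def,
        coeff_mul_single_right_ne _ _ _ (by decide),
        coeff_mul_single_right_ne _ _ _ (by decide), add_zero]
    · rw [List.concat_eq_append] at hl ⊢
      rcases fin2_or c with rfl | rfl
      · rw [hP0]
        exact hGlen _ hl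
      · rw [hP1]
        exact hFlen _ hl
  -- ### psi values of Q
  have hpsiQmid : ∀ v : List (Fin 2), v.length = n - 1 → (0:Fin 2) ∈ v →
      psi (v ++ [1]) Qp = n := by
    intro v hv h0
    have hlen : (v ++ [1] : List (Fin 2)).length = n := by
      rw [List.length_append, hv]
      simpa using hn1
    rw [hQpdef, psi_sub, psi_sub, psi_XYpow _ _ hlen, Xpow_def, Ypow_def,
      psi_single_replicate_ne _ _ 1 _ (by
        have e1 : (List.replicate n (0:Fin 2)).count 1 = 0 := by
          rw [List.count_replicate, if_neg (by decide)]
        have e2 : ([1] : List (Fin 2)).count 1 = 1 := by decide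
        rw [List.count_append, e1, e2]
        omega),
      psi_single_replicate_ne _ _ 0 _ (by
        have e1 : (List.replicate n (1:Fin 2)).count 0 = 0 := by
          rw [List.count_replicate, if_neg (by decide)]
        have e2 : ([1] : List (Fin 2)).count 0 = 0 := by decide
        rw [List.count_append, e1, e2]
        have := List.count_pos_iff.mpr h0
        omega)]
    ring
  have hpsiQrep0 : psi (List.replicate n 0) Qp = 0 := by
    rw [hQpdef, psi_sub, psi_sub, psi_XYpow _ _ List.length_replicate,
      Xpow_def, Ypow_def, psi_single_replicate_self,
      psi_single_replicate_ne _ _ 0 _ (by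
        rw [List.count_replicate, List.count_replicate, if_pos (by decide),
          if_neg (by decide)]
        omega)]
    ring
  have hpsiQrep1 : psi (List.replicate n 1) Qp = 0 := by
    rw [hQpdef, psi_sub, psi_sub, psi_XYpow _ _ List.length_replicate,
      Xpow_def, Ypow_def, psi_single_replicate_self,
      psi_single_replicate_ne _ _ 1 _ (by
        rw [List.count_replicate, List.count_replicate, if_pos (by decide),
          if_neg (by decide)]
        omega)]
    ring
  -- ### push-sum conversion
  have hconv : ∀ v : List (Fin 2),
      ((PushList (FreeMonoid.ofList v)).map (fun w => coeff (FY - FX) w)).sum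
      = ∑ k ∈ Finset.range (v.count 1 + 1),
          (F (FreeMonoid.ofList (1 :: pushL^[k] v)) - F (FreeMonoid.ofList (0 :: pushL^[k] v))) := by
    intro v
    have hcY : countY (FreeMonoid.ofList v) = v.count 1 := by
      simp only [countY, FreeMonoid.toList_ofList]
    unfold PushList
    rw [List.map_map, hcY, list_range_map_sum]
    apply Finset.sum_congr rfl
    intro k _
    show coeff (FY - FX) (pushW^[k] (FreeMonoid.ofList v)) = _
    rw [pushW_iterate]
    exact hfco (pushL^[k] v)
  have hmainv := main1 F G Pp hP1 hP0 hRead1 hRead0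
  -- ### corner values of P
  have erep1 : List.replicate n 1 = List.replicate (n-1) 1 ++ [(1:Fin 2)] := by
    rw [← List.replicate_succ', hn1]
  have erep0 : List.replicate n 0 = List.replicate (n-1) 0 ++ [(0:Fin 2)] := by
    rw [← List.replicate_succ', hn1]
  have hPrep1 : Pp (FreeMonoid.ofList (List.replicate n 1)) = 0 := by
    rw [erep1, hP1, ← erep1, hF1n]
  have hPrep0 : Pp (FreeMonoid.ofList (List.replicate n 0)) = 0 := by
    rw [erep0, hP0, ← erep0, hG0n]
  -- ### tr condition as ideal membership
  have htr : (trQ Pp = A • trQ Qp) ↔ (Pp - A • Qp ∈ trIdeal) := by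
    show trIdeal.mkQ Pp = A • trIdeal.mkQ Qp ↔ _
    rw [← map_smul, ← sub_eq_zero, ← map_sub, Submodule.mkQ_apply,
      Submodule.Quotient.mk_eq_zero]
  rw [htr]
  constructor
  · -- forward direction
    intro hmem
    constructor
    · -- the corner condition
      show (FY - FX : R2) (FreeMonoid.ofList (List.replicate (n-1) 1)) = 0
      rw [hfco]
      have e1 : (1 : Fin 2) :: List.replicate (n-1) 1 = List.replicate n 1 := by
        rw [← List.replicate_succ, hn1]
      have e2 : F (FreeMonoid.ofList (0 :: List.replicate (n-1) 1)) = 0 := by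
        rw [hRead0, ← erep1, hG1n]
      rw [e1, hF1n, e2, sub_zero]
    · intro w hw hwne
      set v := FreeMonoid.toList w with hvdef
      have hvw : w = FreeMonoid.ofList v := (FreeMonoid.ofList_toList w).symm
      have hvlen : v.length = n - 1 := hw
      have hv1 : v ≠ List.replicate (n-1) 1 := by
        intro hc
        exact hwne (by rw [hvw, hc]; rfl)
      have h0v : (0 : Fin 2) ∈ v := by
        by_contra h0
        apply hv1
        rw [List.eq_replicate_iff]
        refine ⟨hvlen, ?_⟩
        intro b hb
        rcases fin2_or b with rfl | rfl
        · exact absurd hb h0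
        · rfl
      have hpsi0 : psi (v ++ [1]) (Pp - A • Qp) = 0 := psi_trIdeal _ _ hmem
      rw [psi_sub, psi_smul] at hpsi0
      have hpsiP : psi (v ++ [1]) Pp = A * (n:ℚ) := by
        rw [hpsiQmid v hvlen h0v] at hpsi0
        linarith
      have hG0 : psi (v ++ [1]) G = 0 := by
        apply hpsiG
        simp only [List.length_append, List.length_cons, List.length_nil]
        omega
      have hm := hmainv v
      rw [hpsiP, hG0, add_zero] at hm
      rw [hvw, hconv, ← hm]
      ring
  · -- backward direction
    intro hPC
    apply sep
    · rw [MonoidAlgebra.coeff_sub, Finsupp.sub_apply, MonoidAlgebra.coeff_smul, Finsupp.smul_apply]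
      have h1 : Pp (FreeMonoid.ofList []) = 0 := hPlen [] (by simpa using (by omega : ¬ (0 = n)))
      have h2 : Qp (FreeMonoid.ofList []) = 0 := hQlen [] (by simpa using (by omega : ¬ (0 = n)))
      show Pp (FreeMonoid.ofList []) - A • Qp (FreeMonoid.ofList []) = 0
      rw [h1, h2, smul_zero, sub_zero]
    · intro z
      rw [psi_sub, psi_smul]
      by_cases hzl : z.length = n
      · by_cases hz1 : (1:Fin 2) ∈ z
        · by_cases hz0 : (0:Fin 2) ∈ z
          · obtain ⟨s, t, rfl⟩ := List.append_of_mem hz1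
            have hrot : (s ++ 1 :: t).rotate (s.length + 1) = (t ++ s) ++ [1] := by
              rw [List.rotate_eq_drop_append_take (by
                rw [List.length_append, List.length_cons]; omega)]
              have hd : (s ++ 1 :: t).drop (s.length + 1) = t := by
                rw [List.drop_append,
                  List.drop_eq_nil_of_le (by omega),
                  show s.length + 1 - s.length = 1 from by omega]
                rfl
              have ht : (s ++ 1 :: t).take (s.length + 1) = s ++ [1] := by
                rw [List.take_append,
                  List.take_of_length_le (by omega),
                  show s.length + 1 - s.length = 1 from by omega]
                rfl
              rw [hd, ht, List.append_assoc]
            have hvlen : (t ++ s : List (Fin 2)).length = n - 1 := by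
              rw [List.length_append]
              rw [List.length_append, List.length_cons] at hzl
              omega
            have h0v : (0:Fin 2) ∈ t ++ s := by
              rcases List.mem_append.mp hz0 with h | h
              · exact List.mem_append.mpr (Or.inr h)
              · rcases List.mem_cons.mp h with h' | h'
                · exact absurd h' (by decide)
                · exact List.mem_append.mpr (Or.inl h')
            have hvne : (t ++ s : List (Fin 2)) ≠ List.replicate (n-1) 1 := by
              intro hc
              have := hc ▸ h0v
              exact absurd (List.eq_of_mem_replicate this) (by decide)
            have hsum := hPC.2 (FreeMonoid.ofList (t ++ s))
              (by
                show (FreeMonoid.toList (FreeMonoid.ofList (t ++ s))).length = n - 1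
                rw [FreeMonoid.toList_ofList]
                exact hvlen)
              (by
                intro hc
                apply hvne
                have h2 := congrArg FreeMonoid.toList hc
                simpa [yPow] using h2)
            rw [hconv] at hsum
            have hm := hmainv (t ++ s)
            have hGz : psi ((t ++ s) ++ [1]) G = 0 := by
              apply hpsiG
              have h' := hvlen
              simp only [List.length_append, List.length_cons, List.length_nil] at h' ⊢
              omega
            rw [hsum, hGz, add_zero] at hm
            have hPz : psi (s ++ 1 :: t) Pp = (n:ℚ) * A := by
              rw [← psi_rotate (s ++ 1 :: t) (s.length + 1) Pp, hrot]
              exact hm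
            have hQz : psi (s ++ 1 :: t) Qp = n := by
              rw [← psi_rotate (s ++ 1 :: t) (s.length + 1) Qp, hrot]
              exact hpsiQmid (t ++ s) hvlen h0v
            rw [hPz, hQz]
            ring
          · have hzrep : z = List.replicate n 1 := by
              rw [List.eq_replicate_iff]
              refine ⟨hzl, ?_⟩
              intro b hb
              rcases fin2_or b with rfl | rfl
              · exact absurd hb hz0
              · rfl
            rw [hzrep, psi_replicate, hPrep1, hpsiQrep1]
            ring
        · have hzrep : z = List.replicate n 0 := by
            rw [List.eq_replicate_iff]
            refine ⟨hzl, ?_⟩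
            intro b hb
            rcases fin2_or b with rfl | rfl
            · rfl
            · exact absurd hb hz1
          rw [hzrep, psi_replicate, hPrep0, hpsiQrep0]
          ring
      · have hP : psi z Pp = 0 := by
          apply Finset.sum_eq_zero
          intro j _
          apply hPlen
          rw [List.length_rotate]
          exact hzl
        have hQ : psi z Qp = 0 := by
          apply Finset.sum_eq_zero
          intro j _
          apply hQlen
          rw [List.length_rotate]
          exact hzl
        rw [hP, hQ]
        ring
end DblSh
end
end
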